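/- arXiv:2112.01893 — 6 statements merged into one kernel-verified Lean document; each statement's English description precedes it below -/
import Mathlib

section
/- Let g1 : [0,∞) → ℝ be Lebesgue integrable and let g2 : [0,∞) → ℝ have finite total variation V(g2) on [0,∞) and satisfy lim_{t→∞} g2(t) = 0. Define the convolution h(t) := ∫_0^t g1(s) g2(t−s) ds for t ≥ 0. Then h has finite total variation on [0,∞) and V(h) ≤ 2 · V(g2) · ∫_0^∞ |g1(s)| ds. -/
open MeasureTheory Filter Set
open scoped ENNReal Topology

/-- If `g₁` is Lebesgue integrable on `[0,∞)` and `g₂` has finite total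
variation on `[0,∞)` with `g₂(t) → 0` as `t → ∞`, then the convolution
`h(t) = ∫_0^t g₁(s) g₂(t-s) ds` has finite total variation on `[0,∞)` and
`V(h) ≤ 2 · V(g₂) · ∫_0^∞ |g₁(s)| ds`. -/
theorem stmt_0 (g1 g2 : ℝ → ℝ)
    (hg1 : IntegrableOn g1 (Set.Ici (0:ℝ)))
    (hg2var : eVariationOn g2 (Set.Ici (0:ℝ)) ≠ ⊤)
    (hg2lim : Tendsto g2 atTop (nhds 0)) :
    eVariationOn (fun t => ∫ s in (0:ℝ)..t, g1 s * g2 (t - s)) (Set.Ici (0:ℝ)) ≠ ⊤ ∧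
    eVariationOn (fun t => ∫ s in (0:ℝ)..t, g1 s * g2 (t - s)) (Set.Ici (0:ℝ)) ≤
      2 * eVariationOn g2 (Set.Ici (0:ℝ)) *
        ENNReal.ofReal (∫ s in Set.Ioi (0:ℝ), |g1 s|) := by
  set D := (eVariationOn g2 (Set.Ici (0:ℝ))).toReal with hDdef
  have hD0 : 0 ≤ D := ENNReal.toReal_nonneg
  set I := ∫ s in Set.Ioi (0:ℝ), |g1 s| with hIdef
  have hI0 : 0 ≤ I := setIntegral_nonneg measurableSet_Ioi fun x _ => abs_nonneg _
  -- two-point variation bound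
  have hedist : ∀ x ∈ Set.Ici (0:ℝ), ∀ y ∈ Set.Ici (0:ℝ), |g2 x - g2 y| ≤ D := by
    intro x hx y hy
    have h1 : edist (g2 x) (g2 y) ≤ eVariationOn g2 (Set.Ici (0:ℝ)) :=
      eVariationOn.edist_le g2 hx hy
    rw [edist_dist, Real.dist_eq] at h1
    have h2 := ENNReal.toReal_mono hg2var h1
    rwa [ENNReal.toReal_ofReal (abs_nonneg _)] at h2
  -- |g2| ≤ D on [0,∞)
  have habs : ∀ x ∈ Set.Ici (0:ℝ), |g2 x| ≤ D := by
    intro x hx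
    have hlim : Tendsto (fun u => |g2 x - g2 u|) atTop (nhds |g2 x|) := by
      have h1 := ((tendsto_const_nhds (x := g2 x) (f := atTop)).sub hg2lim).abs
      simpa using h1
    refine le_of_tendsto hlim ?_
    filter_upwards [eventually_ge_atTop x] with u hu
    exact hedist x hx u (le_trans hx hu)
  -- integrability of |g1| on subsets
  have hg1abs : IntegrableOn (fun s => |g1 s|) (Set.Ici (0:ℝ)) := by
    have h1 := hg1.norm
    exact (by simpa [Real.norm_eq_abs] using h1 : Integrable (fun s => |g1 s|) (volume.restrict (Set.Ici (0:ℝ))))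
  -- monotone decomposition of g2, measurability of translates
  obtain ⟨p, q, hp, hq, hpq⟩ :=
    (BoundedVariationOn.locallyBoundedVariationOn hg2var).exists_monotoneOn_sub_monotoneOn
  have hg2m : ∀ t a b : ℝ, 0 ≤ a → b ≤ t →
      AEMeasurable (fun s => g2 (t - s)) (volume.restrict (Set.Ioc a b)) := by
    intro t a b ha hb
    have hmemt : ∀ s ∈ Set.Icc a b, t - s ∈ Set.Ici (0:ℝ) := by
      intro s hs
      simp only [Set.mem_Ici]
      linarith [hs.2]
    have hpm : AEMeasurable (fun s => p (t - s)) (volume.restrict (Set.Icc a b)) := by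
      apply aemeasurable_restrict_of_antitoneOn measurableSet_Icc
      intro s hs s' hs' hss'
      exact hp (hmemt s' hs') (hmemt s hs) (by linarith)
    have hqm : AEMeasurable (fun s => q (t - s)) (volume.restrict (Set.Icc a b)) := by
      apply aemeasurable_restrict_of_antitoneOn measurableSet_Icc
      intro s hs s' hs' hss'
      exact hq (hmemt s' hs') (hmemt s hs) (by linarith)
    have heq : (fun s => g2 (t - s)) = fun s => p (t - s) - q (t - s) := by
      funext s; rw [hpq]; rfl
    have h2 : AEMeasurable (fun s => g2 (t - s)) (volume.restrict (Set.Icc a b)) := by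
      rw [heq]; exact hpm.sub hqm
    exact h2.mono_measure (Measure.restrict_mono Set.Ioc_subset_Icc_self le_rfl)
  have hg1m : ∀ a b : ℝ, 0 ≤ a →
      AEMeasurable g1 (volume.restrict (Set.Ioc a b)) := by
    intro a b ha
    exact hg1.aemeasurable.mono_measure
      (Measure.restrict_mono (fun s hs => le_trans ha hs.1.le) le_rfl)
  -- key integrability
  have hkey : ∀ t a b : ℝ, 0 ≤ a → b ≤ t →
      IntegrableOn (fun s => g1 s * g2 (t - s)) (Set.Ioc a b) := by
    intro t a b ha hb
    have hmeas : AEStronglyMeasurable (fun s => g1 s * g2 (t - s))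
        (volume.restrict (Set.Ioc a b)) :=
      ((hg1m a b ha).mul (hg2m t a b ha hb)).aestronglyMeasurable
    have hbound : IntegrableOn (fun s => |g1 s| * D) (Set.Ioc a b) :=
      (hg1abs.mono_set (fun s hs => le_trans ha hs.1.le)).mul_const D
    refine hbound.mono' hmeas ?_
    refine (ae_restrict_iff' measurableSet_Ioc).2 (ae_of_all _ fun s hs => ?_)
    rw [Real.norm_eq_abs, abs_mul]
    exact mul_le_mul_of_nonneg_left
      (habs (t - s) (by simp only [Set.mem_Ici]; linarith [hs.2])) (abs_nonneg _)
  have hkey2 : ∀ x y : ℝ, 0 ≤ x → x ≤ y →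
      IntegrableOn (fun s => |g1 s| * |g2 (y - s) - g2 (x - s)|) (Set.Ioc 0 x) := by
    intro x y hx hxy
    have hmeas : AEStronglyMeasurable (fun s => |g1 s| * |g2 (y - s) - g2 (x - s)|)
        (volume.restrict (Set.Ioc 0 x)) :=
      ((measurable_abs.comp_aemeasurable (hg1m 0 x le_rfl)).mul
        (measurable_abs.comp_aemeasurable
          ((hg2m y 0 x le_rfl hxy).sub (hg2m x 0 x le_rfl le_rfl)))).aestronglyMeasurable
    have hbound : IntegrableOn (fun s => |g1 s| * (D + D)) (Set.Ioc 0 x) :=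
      (hg1abs.mono_set (fun s hs => hs.1.le)).mul_const (D + D)
    refine hbound.mono' hmeas ?_
    refine (ae_restrict_iff' measurableSet_Ioc).2 (ae_of_all _ fun s hs => ?_)
    rw [Real.norm_eq_abs, abs_mul, abs_abs, abs_abs]
    refine mul_le_mul_of_nonneg_left ?_ (abs_nonneg _)
    calc |g2 (y - s) - g2 (x - s)| ≤ |g2 (y - s)| + |g2 (x - s)| := abs_sub _ _
      _ ≤ D + D := add_le_add
          (habs _ (by simp only [Set.mem_Ici]; linarith [hs.2]))
          (habs _ (by simp only [Set.mem_Ici]; linarith [hs.2]))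
  -- main estimate
  have main : eVariationOn (fun t => ∫ s in (0:ℝ)..t, g1 s * g2 (t - s)) (Set.Ici (0:ℝ)) ≤
      2 * eVariationOn g2 (Set.Ici (0:ℝ)) * ENNReal.ofReal I := by
    unfold eVariationOn
    refine iSup_le ?_
    rintro ⟨n, u, hu, us⟩
    dsimp only
    -- real-valued bound
    have key : ∑ i ∈ Finset.range n,
        |(∫ s in (0:ℝ)..u (i+1), g1 s * g2 (u (i+1) - s)) -
          (∫ s in (0:ℝ)..u i, g1 s * g2 (u i - s))| ≤ 2 * D * I := by
      have step1 : ∀ i, |(∫ s in (0:ℝ)..u (i+1), g1 s * g2 (u (i+1) - s)) -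
          (∫ s in (0:ℝ)..u i, g1 s * g2 (u i - s))| ≤
          D * (∫ s in (u i)..(u (i+1)), |g1 s|) +
          ∫ s in Set.Ioc 0 (u i), |g1 s| * |g2 (u (i+1) - s) - g2 (u i - s)| := by
        intro i
        set x := u i with hxdef
        set y := u (i+1) with hydef
        have hx : (0:ℝ) ≤ x := us i
        have hxy : x ≤ y := hu (Nat.le_succ i)
        have ix1 : IntervalIntegrable (fun s => g1 s * g2 (y - s)) volume 0 x :=
          (intervalIntegrable_iff_integrableOn_Ioc_of_le hx).2 (hkey y 0 x le_rfl hxy)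
        have ix2 : IntervalIntegrable (fun s => g1 s * g2 (y - s)) volume x y :=
          (intervalIntegrable_iff_integrableOn_Ioc_of_le hxy).2 (hkey y x y hx le_rfl)
        have ix3 : IntervalIntegrable (fun s => g1 s * g2 (x - s)) volume 0 x :=
          (intervalIntegrable_iff_integrableOn_Ioc_of_le hx).2 (hkey x 0 x le_rfl le_rfl)
        have hsplit : (∫ s in (0:ℝ)..y, g1 s * g2 (y - s)) =
            (∫ s in (0:ℝ)..x, g1 s * g2 (y - s)) + ∫ s in x..y, g1 s * g2 (y - s) :=
          (intervalIntegral.integral_add_adjacent_intervals ix1 ix2).symm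
        have hdiff : (∫ s in (0:ℝ)..x, g1 s * g2 (y - s)) -
            (∫ s in (0:ℝ)..x, g1 s * g2 (x - s)) =
            ∫ s in (0:ℝ)..x, (g1 s * g2 (y - s) - g1 s * g2 (x - s)) :=
          (intervalIntegral.integral_sub ix1 ix3).symm
        have hrw : (∫ s in (0:ℝ)..y, g1 s * g2 (y - s)) - (∫ s in (0:ℝ)..x, g1 s * g2 (x - s)) =
            (∫ s in (0:ℝ)..x, (g1 s * g2 (y - s) - g1 s * g2 (x - s))) +
            ∫ s in x..y, g1 s * g2 (y - s) := by
          rw [hsplit, ← hdiff]; ring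
        rw [hrw]
        refine le_trans (abs_add_le _ _) ?_
        rw [add_comm]
        refine add_le_add ?_ ?_
        · -- tail term
          refine le_trans (intervalIntegral.abs_integral_le_integral_abs hxy) ?_
          have habs_int : IntervalIntegrable (fun s => |g1 s * g2 (y - s)|) volume x y := ix2.abs
          have hDg1 : IntervalIntegrable (fun s => |g1 s| * D) volume x y :=
            (intervalIntegrable_iff_integrableOn_Ioc_of_le hxy).2
              ((hg1abs.mono_set (fun s hs => le_trans hx hs.1.le)).mul_const D)
          have hmono : (∫ s in x..y, |g1 s * g2 (y - s)|) ≤ ∫ s in x..y, |g1 s| * D := by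
            refine intervalIntegral.integral_mono_on hxy habs_int hDg1 fun s hs => ?_
            rw [abs_mul]
            exact mul_le_mul_of_nonneg_left
              (habs _ (by simp only [Set.mem_Ici]; linarith [hs.2])) (abs_nonneg _)
          refine le_trans hmono (le_of_eq ?_)
          rw [intervalIntegral.integral_mul_const, mul_comm]
        · -- difference term
          refine le_trans (intervalIntegral.abs_integral_le_integral_abs hx) ?_
          have hcongr : (∫ s in (0:ℝ)..x, |g1 s * g2 (y - s) - g1 s * g2 (x - s)|) =
              ∫ s in (0:ℝ)..x, |g1 s| * |g2 (y - s) - g2 (x - s)| := by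
            refine intervalIntegral.integral_congr fun s _ => ?_
            rw [← mul_sub, abs_mul]
          rw [hcongr, intervalIntegral.integral_of_le hx]
      -- sum the two parts
      refine le_trans (Finset.sum_le_sum fun i _ => step1 i) ?_
      rw [Finset.sum_add_distrib]
      have partA : ∑ i ∈ Finset.range n, D * (∫ s in (u i)..(u (i+1)), |g1 s|) ≤ D * I := by
        rw [← Finset.mul_sum]
        refine mul_le_mul_of_nonneg_left ?_ hD0
        have hadj : ∑ i ∈ Finset.range n, (∫ s in (u i)..(u (i+1)), |g1 s|) =
            ∫ s in (u 0)..(u n), |g1 s| := by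
          refine intervalIntegral.sum_integral_adjacent_intervals fun i _ => ?_
          exact (intervalIntegrable_iff_integrableOn_Ioc_of_le (hu (Nat.le_succ i))).2
            (hg1abs.mono_set (fun s hs => le_trans (us i) hs.1.le))
        rw [hadj, intervalIntegral.integral_of_le (hu (Nat.zero_le n))]
        refine setIntegral_mono_set (hg1abs.mono_set Set.Ioi_subset_Ici_self)
          (ae_of_all _ fun s => abs_nonneg _) ?_
        exact HasSubset.Subset.eventuallyLE
          (show Set.Ioc (u 0) (u n) ⊆ Set.Ioi 0 from fun s hs => lt_of_le_of_lt (us 0) hs.1)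
      have partB : ∑ i ∈ Finset.range n,
          (∫ s in Set.Ioc 0 (u i), |g1 s| * |g2 (u (i+1) - s) - g2 (u i - s)|) ≤ D * I := by
        set c : ℕ → ℝ → ℝ := fun i s => |g1 s| * |g2 (u (i+1) - s) - g2 (u i - s)| with hcdef
        have hci : ∀ i, IntegrableOn (c i) (Set.Ioc 0 (u i)) :=
          fun i => hkey2 (u i) (u (i+1)) (us i) (hu (Nat.le_succ i))
        have hind : ∀ i, (∫ s in Set.Ioc 0 (u i), c i s) =
            ∫ s in Set.Ioi (0:ℝ), (Set.Ioc 0 (u i)).indicator (c i) s := by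
          intro i
          rw [setIntegral_indicator measurableSet_Ioc,
            Set.inter_eq_self_of_subset_right Set.Ioc_subset_Ioi_self]
        have hindint : ∀ i, Integrable ((Set.Ioc 0 (u i)).indicator (c i))
            (volume.restrict (Set.Ioi (0:ℝ))) := by
          intro i
          exact ((hci i).integrable_indicator measurableSet_Ioc).restrict
        calc ∑ i ∈ Finset.range n, (∫ s in Set.Ioc 0 (u i), c i s)
            = ∑ i ∈ Finset.range n, ∫ s in Set.Ioi (0:ℝ), (Set.Ioc 0 (u i)).indicator (c i) s :=
              Finset.sum_congr rfl fun i _ => hind i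
          _ = ∫ s in Set.Ioi (0:ℝ), ∑ i ∈ Finset.range n,
                (Set.Ioc 0 (u i)).indicator (c i) s :=
              (integral_finset_sum _ fun i _ => hindint i).symm
          _ ≤ ∫ s in Set.Ioi (0:ℝ), |g1 s| * D := by
              refine integral_mono (integrable_finset_sum _ fun i _ => hindint i)
                ((hg1abs.mono_set Set.Ioi_subset_Ici_self).mul_const D) fun s => ?_
              -- pointwise bound
              have hterm : ∀ i, (Set.Ioc 0 (u i)).indicator (c i) s =
                  |g1 s| * (Set.Ioc 0 (u i)).indicator
                    (fun s => |g2 (u (i+1) - s) - g2 (u i - s)|) s := by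
                intro i
                by_cases h : s ∈ Set.Ioc 0 (u i) <;>
                  simp [Set.indicator, h, hcdef]
              simp only [hterm]
              rw [← Finset.mul_sum]
              refine mul_le_mul_of_nonneg_left ?_ (abs_nonneg _)
              -- variation along shifted points
              set w : ℕ → ℝ := fun i => max (u i - s) 0 with hwdef
              have hwmono : Monotone w := fun a b hab =>
                max_le_max (by linarith [hu hab]) le_rfl
              have hwmem : ∀ i, w i ∈ Set.Ici (0:ℝ) := fun i => Set.mem_Ici.2 (le_max_right _ _)
              have hvar := eVariationOn.sum_le (f := g2) (n := n) hwmono hwmem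
              have hle : ∀ i, (Set.Ioc 0 (u i)).indicator
                  (fun s => |g2 (u (i+1) - s) - g2 (u i - s)|) s ≤
                  |g2 (w (i+1)) - g2 (w i)| := by
                intro i
                by_cases h : s ∈ Set.Ioc 0 (u i)
                · have h1 : w i = u i - s := max_eq_left (by linarith [h.2])
                  have h2 : w (i+1) = u (i+1) - s :=
                    max_eq_left (by linarith [h.2, hu (Nat.le_succ i)])
                  rw [Set.indicator_of_mem h, h1, h2]
                · rw [Set.indicator_of_notMem h]
                  exact abs_nonneg _
              refine le_trans (Finset.sum_le_sum fun i _ => hle i) ?_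
              have h3 : ENNReal.ofReal (∑ i ∈ Finset.range n, |g2 (w (i+1)) - g2 (w i)|) ≤
                  eVariationOn g2 (Set.Ici (0:ℝ)) := by
                rw [ENNReal.ofReal_sum_of_nonneg fun i _ => abs_nonneg _]
                refine le_trans (le_of_eq (Finset.sum_congr rfl fun i _ => ?_)) hvar
                rw [edist_dist, Real.dist_eq]
              have h4 := ENNReal.toReal_mono hg2var h3
              rwa [ENNReal.toReal_ofReal
                (Finset.sum_nonneg fun i _ => abs_nonneg _)] at h4
          _ = D * I := by
              simp only [mul_comm _ D]
              rw [integral_const_mul]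
      calc (∑ i ∈ Finset.range n, D * (∫ s in (u i)..(u (i+1)), |g1 s|)) +
            ∑ i ∈ Finset.range n,
              (∫ s in Set.Ioc 0 (u i), |g1 s| * |g2 (u (i+1) - s) - g2 (u i - s)|)
          ≤ D * I + D * I := add_le_add partA partB
        _ = 2 * D * I := by ring
    -- wrap up in ℝ≥0∞
    calc ∑ i ∈ Finset.range n,
          edist (∫ s in (0:ℝ)..u (i+1), g1 s * g2 (u (i+1) - s))
            (∫ s in (0:ℝ)..u i, g1 s * g2 (u i - s))
        = ENNReal.ofReal (∑ i ∈ Finset.range n,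
            |(∫ s in (0:ℝ)..u (i+1), g1 s * g2 (u (i+1) - s)) -
              (∫ s in (0:ℝ)..u i, g1 s * g2 (u i - s))|) := by
          rw [ENNReal.ofReal_sum_of_nonneg fun i _ => abs_nonneg _]
          refine Finset.sum_congr rfl fun i _ => ?_
          rw [edist_dist, Real.dist_eq]
      _ ≤ ENNReal.ofReal (2 * D * I) := ENNReal.ofReal_le_ofReal key
      _ = 2 * eVariationOn g2 (Set.Ici (0:ℝ)) * ENNReal.ofReal I := by
          rw [ENNReal.ofReal_mul (by positivity), ENNReal.ofReal_mul (by norm_num : (0:ℝ) ≤ 2),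
            hDdef, ENNReal.ofReal_toReal hg2var]
          norm_num
  have hne : 2 * eVariationOn g2 (Set.Ici (0:ℝ)) * ENNReal.ofReal I ≠ ⊤ :=
    ENNReal.mul_ne_top (ENNReal.mul_ne_top (by simp) hg2var) ENNReal.ofReal_ne_top
  exact ⟨ne_top_of_le_ne_top hne main, main⟩
end

section
/- Let (Z_i)_{i≥1} be i.i.d. strictly positive random variables with μ := E Z_1 < ∞ and lim_{x→∞} x^α P(Z_1 > x) = c_Z for some α ∈ (1,2) and c_Z > 0. Set S_n := Z_1 + ⋯ + Z_n (S_0 := 0) and N(t) := #{n ≥ 1 : S_n ≤ t}. Then for every κ ∈ (1/α, 1), lim_{λ→∞} sup_{u > λ^κ} (u^α / (λ + u)) · P( N(λ) − λ/μ > u/μ ) = 0. -/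
open MeasureTheory ProbabilityTheory Filter Set
open scoped Topology

private lemma aux_exp_le' {β y : ℝ} (hβ1 : 1 ≤ β) (hβ2 : β ≤ 2) (hy : 0 ≤ y) :
    Real.exp (-y) ≤ 1 - y + y ^ β := by
  rcases eq_or_lt_of_le hy with h0 | h0
  · rw [← h0]; simp; positivity
  rcases le_total y 1 with h1 | h1
  · have h2 : y ^ (2:ℝ) ≤ y ^ β := Real.rpow_le_rpow_of_exponent_ge h0 h1 hβ2
    have h3 : Real.exp (-y) ≤ 1 / (1 + y) := by
      rw [div_eq_inv_mul, mul_one, ← Real.exp_log (by positivity : (0:ℝ) < 1 + y), ← Real.exp_neg,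
        Real.exp_le_exp]
      nlinarith [Real.log_le_sub_one_of_pos (by positivity : (0:ℝ) < 1 + y)]
    have h4 : 1 / (1 + y) ≤ 1 - y + y ^ (2:ℝ) := by
      rw [Real.rpow_two, div_le_iff₀ (by positivity)]
      nlinarith
    linarith
  · have h2 : y ≤ y ^ β := by
      calc y = y ^ (1:ℝ) := (Real.rpow_one y).symm
      _ ≤ y ^ β := Real.rpow_le_rpow_of_exponent_le h1 hβ1
    have h3 : Real.exp (-y) ≤ 1 := by
      rw [Real.exp_le_one_iff]; linarith
    linarith

private lemma aux_moment' {Ω : Type*} [MeasurableSpace Ω] (P : Measure Ω) [IsProbabilityMeasure P]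
    (Z : Ω → ℝ) (hm : Measurable Z) (hpos : ∀ᵐ ω ∂P, 0 < Z ω)
    (α c_Z β : ℝ) (hcZ : 0 < c_Z)
    (htail : Tendsto (fun x : ℝ => x ^ α * (P {ω | x < Z ω}).toReal) atTop (nhds c_Z))
    (hβ0 : 0 < β) (hβα : β < α) :
    Integrable (fun ω => Z ω ^ β) P := by
  have hZnn : 0 ≤ᵐ[P] Z := hpos.mono fun ω h => h.le
  obtain ⟨x₁, hx₁⟩ := eventually_atTop.mp (htail.eventually (eventually_le_nhds (lt_add_one c_Z)))
  set x₀ : ℝ := max x₁ 1 with hx₀def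
  have hx₀pos : (0:ℝ) < x₀ := lt_of_lt_of_le one_pos (le_max_right _ _)
  have htail' : ∀ t : ℝ, x₀ ≤ t → P {ω | t < Z ω} ≤ ENNReal.ofReal ((c_Z + 1) * t ^ (-α)) := by
    intro t ht
    have ht1 : (1:ℝ) ≤ t := le_trans (le_max_right _ _) ht
    have htpos : (0:ℝ) < t := lt_of_lt_of_le one_pos ht1
    have h1 : t ^ α * (P {ω | t < Z ω}).toReal ≤ c_Z + 1 := hx₁ t (le_trans (le_max_left _ _) ht)
    have h2 : (P {ω | t < Z ω}).toReal ≤ (c_Z + 1) * t ^ (-α) := by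
      rw [Real.rpow_neg htpos.le, mul_comm (c_Z + 1), ← div_eq_inv_mul _,
        le_div_iff₀ (by positivity)]
      calc (P {ω | t < Z ω}).toReal * t ^ α = t ^ α * (P {ω | t < Z ω}).toReal := mul_comm _ _
        _ ≤ c_Z + 1 := h1
    calc P {ω | t < Z ω} = ENNReal.ofReal (P {ω | t < Z ω}).toReal :=
          (ENNReal.ofReal_toReal (measure_ne_top _ _)).symm
      _ ≤ ENNReal.ofReal ((c_Z + 1) * t ^ (-α)) := ENNReal.ofReal_le_ofReal h2
  refine ⟨((Real.continuous_rpow_const hβ0.le).measurable.comp hm).aestronglyMeasurable, ?_⟩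
  rw [hasFiniteIntegral_iff_ofReal (hpos.mono fun ω h => Real.rpow_nonneg h.le β)]
  rw [MeasureTheory.lintegral_rpow_eq_lintegral_meas_lt_mul P hZnn hm.aemeasurable hβ0]
  refine ENNReal.mul_lt_top ENNReal.ofReal_lt_top ?_
  have hsplit : Ioi (0:ℝ) = Ioc (0:ℝ) x₀ ∪ Ioi x₀ := (Ioc_union_Ioi_eq_Ioi hx₀pos.le).symm
  rw [hsplit]
  refine lt_of_le_of_lt (lintegral_union_le _ _ _) (ENNReal.add_lt_top.mpr ⟨?_, ?_⟩)
  · have hb : ∀ t ∈ Ioc (0:ℝ) x₀,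
        P {a | t < Z a} * ENNReal.ofReal (t ^ (β - 1)) ≤ ENNReal.ofReal (t ^ (β - 1)) := by
      intro t _
      calc P {a | t < Z a} * ENNReal.ofReal (t ^ (β - 1))
          ≤ 1 * ENNReal.ofReal (t ^ (β - 1)) := by
            gcongr; exact prob_le_one
        _ = ENNReal.ofReal (t ^ (β - 1)) := one_mul _
    refine lt_of_le_of_lt (setLIntegral_mono' measurableSet_Ioc hb) ?_
    have hint : IntegrableOn (fun t : ℝ => t ^ (β - 1)) (Ioc 0 x₀) := by
      rw [← uIoc_of_le hx₀pos.le, ← intervalIntegrable_iff]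
      exact intervalIntegral.intervalIntegrable_rpow' (by linarith)
    exact hint.lintegral_lt_top
  · have hb : ∀ t ∈ Ioi x₀,
        P {a | t < Z a} * ENNReal.ofReal (t ^ (β - 1)) ≤
          ENNReal.ofReal ((c_Z + 1) * t ^ (β - 1 - α)) := by
      intro t ht
      have htpos : (0:ℝ) < t := lt_of_le_of_lt hx₀pos.le ht
      calc P {a | t < Z a} * ENNReal.ofReal (t ^ (β - 1))
          ≤ ENNReal.ofReal ((c_Z + 1) * t ^ (-α)) * ENNReal.ofReal (t ^ (β - 1)) := by
            gcongr; exact htail' t (le_of_lt ht)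
        _ = ENNReal.ofReal ((c_Z + 1) * t ^ (-α) * t ^ (β - 1)) :=
            (ENNReal.ofReal_mul (by positivity)).symm
        _ = ENNReal.ofReal ((c_Z + 1) * t ^ (β - 1 - α)) := by
            rw [mul_assoc, ← Real.rpow_add htpos]; ring_nf
    refine lt_of_le_of_lt (setLIntegral_mono' measurableSet_Ioi hb) ?_
    have hint : IntegrableOn (fun t : ℝ => (c_Z + 1) * t ^ (β - 1 - α)) (Ioi x₀) :=
      (integrableOn_Ioi_rpow_of_lt (by linarith) hx₀pos).const_mul _
    exact hint.lintegral_lt_top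

private lemma aux_chernoff' {Ω : Type*} [MeasurableSpace Ω] (P : Measure Ω)
    [IsProbabilityMeasure P]
    (Z : ℕ → Ω → ℝ) (hmeas : ∀ i, Measurable (Z i))
    (hindep : iIndepFun Z P)
    (hident : ∀ i, IdentDistrib (Z i) (Z 0) P P)
    (hpos : ∀ i, ∀ᵐ ω ∂P, 0 < Z i ω)
    (hint : Integrable (Z 0) P)
    (μ : ℝ) (hμ : μ = ∫ ω, Z 0 ω ∂P)
    (β : ℝ) (hβ1 : 1 < β) (hβ2 : β < 2)
    (hintβ : Integrable (fun ω => Z 0 ω ^ β) P)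
    (K' : ℝ) (hK' : ∫ ω, Z 0 ω ^ β ∂P ≤ K')
    (s : ℝ) (hs : 0 ≤ s) (n : ℕ) (lam : ℝ) :
    (P {ω | (∑ i ∈ Finset.range n, Z i) ω ≤ lam}).toReal ≤
      Real.exp (s * lam + n * (-(s * μ) + s ^ β * K')) := by
  have hXeq : (∑ i ∈ Finset.range n, Z i) = fun ω => ∑ i ∈ Finset.range n, Z i ω :=
    funext fun ω => Finset.sum_apply ω (Finset.range n) Z
  have hXmeas : Measurable (∑ i ∈ Finset.range n, Z i) := by
    rw [hXeq]; exact Finset.measurable_sum (Finset.range n) fun i _ => hmeas i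
  have hXnn : ∀ᵐ ω ∂P, 0 ≤ (∑ i ∈ Finset.range n, Z i) ω := by
    filter_upwards [ae_all_iff.2 hpos] with ω hω
    simp only [Finset.sum_apply]
    exact Finset.sum_nonneg fun i _ => (hω i).le
  have hIntExp : Integrable (fun ω => Real.exp (-s * (∑ i ∈ Finset.range n, Z i) ω)) P := by
    refine Integrable.mono' (integrable_const 1)
      ((hXmeas.const_mul (-s)).exp).aestronglyMeasurable ?_
    filter_upwards [hXnn] with ω hω
    rw [Real.norm_eq_abs, abs_of_pos (Real.exp_pos _), Real.exp_le_one_iff]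
    nlinarith
  have hcher := measure_le_le_exp_mul_mgf (μ := P) (X := ∑ i ∈ Finset.range n, Z i) lam
    (neg_nonpos.2 hs) hIntExp
  have hmgf0 : mgf (Z 0) P (-s) ≤ Real.exp (-(s * μ) + s ^ β * K') := by
    have hptwise : ∀ᵐ ω ∂P, Real.exp (-s * Z 0 ω) ≤ 1 - s * Z 0 ω + s ^ β * Z 0 ω ^ β := by
      filter_upwards [hpos 0] with ω hω
      have := aux_exp_le' hβ1.le hβ2.le (mul_nonneg hs hω.le : 0 ≤ s * Z 0 ω)
      rwa [Real.mul_rpow hs hω.le, ← neg_mul] at this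
    have h1 : Integrable (fun ω : Ω => 1 - s * Z 0 ω) P :=
      (integrable_const 1).sub (hint.const_mul s)
    have hIntR : Integrable (fun ω => 1 - s * Z 0 ω + s ^ β * Z 0 ω ^ β) P :=
      h1.add (hintβ.const_mul _)
    have hIntL : Integrable (fun ω => Real.exp (-s * Z 0 ω)) P := by
      refine Integrable.mono' (integrable_const 1)
        (((hmeas 0).const_mul (-s)).exp).aestronglyMeasurable ?_
      filter_upwards [hpos 0] with ω hω
      rw [Real.norm_eq_abs, abs_of_pos (Real.exp_pos _), Real.exp_le_one_iff]
      nlinarith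
    calc mgf (Z 0) P (-s) = ∫ ω, Real.exp (-s * Z 0 ω) ∂P := rfl
      _ ≤ ∫ ω, (1 - s * Z 0 ω + s ^ β * Z 0 ω ^ β) ∂P := integral_mono_ae hIntL hIntR hptwise
      _ = 1 - s * μ + s ^ β * (∫ ω, Z 0 ω ^ β ∂P) := by
          rw [integral_add h1 (hintβ.const_mul _),
            integral_sub (integrable_const 1) (hint.const_mul s), integral_const,
            integral_const_mul, integral_const_mul, hμ]
          simp
      _ ≤ Real.exp (-(s * μ) + s ^ β * (∫ ω, Z 0 ω ^ β ∂P)) := by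
          have := Real.add_one_le_exp (-(s * μ) + s ^ β * (∫ ω, Z 0 ω ^ β ∂P))
          linarith
      _ ≤ Real.exp (-(s * μ) + s ^ β * K') := by
          apply Real.exp_le_exp.2
          have : (0:ℝ) ≤ s ^ β := Real.rpow_nonneg hs β
          nlinarith
  have hmgfsum : mgf (∑ i ∈ Finset.range n, Z i) P (-s) ≤
      Real.exp (-(s * μ) + s ^ β * K') ^ n := by
    rw [hindep.mgf_sum hmeas]
    have heach : ∀ i, mgf (Z i) P (-s) = mgf (Z 0) P (-s) := by
      intro i
      have : IdentDistrib (fun ω => Real.exp (-s * Z i ω)) (fun ω => Real.exp (-s * Z 0 ω)) P P :=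
        (hident i).comp ((measurable_id.const_mul (-s)).exp)
      exact this.integral_eq
    calc ∏ i ∈ Finset.range n, mgf (Z i) P (-s)
        = mgf (Z 0) P (-s) ^ n := by
          rw [Finset.prod_congr rfl fun i _ => heach i, Finset.prod_const, Finset.card_range]
      _ ≤ Real.exp (-(s * μ) + s ^ β * K') ^ n := pow_le_pow_left₀ mgf_nonneg hmgf0 n
  calc (P {ω | (∑ i ∈ Finset.range n, Z i) ω ≤ lam}).toReal
      ≤ Real.exp (-(-s) * lam) * mgf (∑ i ∈ Finset.range n, Z i) P (-s) := hcher
    _ ≤ Real.exp (s * lam) * Real.exp (-(s * μ) + s ^ β * K') ^ n := by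
        rw [neg_neg]
        exact mul_le_mul_of_nonneg_left hmgfsum (Real.exp_pos _).le
    _ = Real.exp (s * lam + n * (-(s * μ) + s ^ β * K')) := by
        rw [← Real.exp_nat_mul, ← Real.exp_add]

private lemma aux_tendsto' (a c θ' : ℝ) (hc : 0 < c) (hθ : 0 < θ') :
    Tendsto (fun x : ℝ => x ^ a * Real.exp (-c * x ^ θ')) atTop (nhds 0) := by
  have h1 := tendsto_rpow_mul_exp_neg_mul_atTop_nhds_zero (a / θ') c hc
  have h2 := tendsto_rpow_atTop hθ
  refine (h1.comp h2).congr' ?_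
  filter_upwards [eventually_gt_atTop (0:ℝ)] with x hx
  simp only [Function.comp_apply]
  rw [← Real.rpow_mul hx.le]
  congr 2
  field_simp


set_option maxHeartbeats 2000000 in
/-- upper renewal large deviations. Let `(Z_i)` be i.i.d. strictly positive
with `μ = E Z < ∞` and `x^α P(Z > x) → c_Z`, `α ∈ (1,2)`, `c_Z > 0`. With
`S_n = Z_1 + ⋯ + Z_n` and `N(t) = #{n ≥ 1 : S_n ≤ t}`: for every `κ ∈ (1/α, 1)`,
`sup_{u > λ^κ} (u^α/(λ+u)) P(N(λ) - λ/μ > u/μ) → 0` as `λ → ∞`. -/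
theorem stmt_2 {Ω : Type*} [MeasurableSpace Ω] (P : Measure Ω) [IsProbabilityMeasure P]
    (Z : ℕ → Ω → ℝ) (hmeas : ∀ i, Measurable (Z i))
    (hindep : iIndepFun Z P)
    (hident : ∀ i, IdentDistrib (Z i) (Z 0) P P)
    (hpos : ∀ i, ∀ᵐ ω ∂P, 0 < Z i ω)
    (hint : Integrable (Z 0) P)
    (μ : ℝ) (hμ : μ = ∫ ω, Z 0 ω ∂P)
    (α c_Z : ℝ) (hα1 : 1 < α) (hα2 : α < 2) (hcZ : 0 < c_Z)
    (htail : Tendsto (fun x : ℝ => x ^ α * (P {ω | x < Z 0 ω}).toReal) atTop (nhds c_Z))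
    (κ : ℝ) (hκ1 : 1 / α < κ) (hκ2 : κ < 1) :
    ∀ ε > (0:ℝ), ∃ Λ : ℝ, ∀ lam ≥ Λ, ∀ u : ℝ, lam ^ κ < u →
      u ^ α / (lam + u) *
        (P {ω | u / μ <
          ((Set.ncard {n : ℕ | 1 ≤ n ∧ ∑ i ∈ Finset.range n, Z i ω ≤ lam} : ℝ) -
            lam / μ)}).toReal ≤ ε := by
  intro ε hε
  have hα0 : (0:ℝ) < α := by linarith
  -- positivity of μ
  have hZnn : 0 ≤ᵐ[P] Z 0 := (hpos 0).mono fun ω h => h.le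
  have hμpos : 0 < μ := by
    rw [hμ, integral_pos_iff_support_of_nonneg_ae hZnn hint]
    rw [pos_iff_ne_zero]
    intro h0
    have h1 : P {ω | 0 < Z 0 ω} = 0 :=
      measure_mono_null (fun ω h => ne_of_gt h) h0
    have h2 : P {ω | ¬ (0 < Z 0 ω)} = 0 := ae_iff.mp (hpos 0)
    have h3 : (P univ) ≤ P {ω | 0 < Z 0 ω} + P {ω | ¬ (0 < Z 0 ω)} := by
      refine le_trans (measure_mono ?_) (measure_union_le _ _)
      intro ω _
      by_cases h : 0 < Z 0 ω
      · exact Or.inl h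
      · exact Or.inr h
    rw [measure_univ, h1, h2] at h3
    simp at h3
  -- the exponent β
  have hκpos : 0 < κ := lt_trans (by positivity) hκ1
  set β : ℝ := (1/κ + α)/2 with hβdef
  have h1κ : 1 < 1/κ := by rw [lt_div_iff₀ hκpos]; linarith
  have hακ : 1 < α * κ := by
    rw [div_lt_iff₀ hα0] at hκ1; linarith
  have h1κα : 1/κ < α := by rw [div_lt_iff₀ hκpos]; linarith
  have hβ1 : 1 < β := by rw [hβdef]; linarith
  have hβα : β < α := by rw [hβdef]; linarith
  have hβ2 : β < 2 := lt_trans hβα hα2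
  have hβ1' : (0:ℝ) < β - 1 := by linarith
  have hβne : β - 1 ≠ 0 := ne_of_gt hβ1'
  have hκβ : 1 < κ * β := by
    have : κ * β = (1 + κ * α)/2 := by
      rw [hβdef]; field_simp
    rw [this]; linarith
  -- the β-moment
  have hintβ : Integrable (fun ω => Z 0 ω ^ β) P :=
    aux_moment' P (Z 0) (hmeas 0) (hpos 0) α c_Z β hcZ htail (by linarith) hβα
  set K' : ℝ := (∫ ω, Z 0 ω ^ β ∂P) + 1 with hK'def
  have hKnn : 0 ≤ ∫ ω, Z 0 ω ^ β ∂P :=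
    integral_nonneg_of_ae ((hpos 0).mono fun ω h => Real.rpow_nonneg h.le β)
  have hK'pos : 0 < K' := by rw [hK'def]; linarith
  have hK'bd : ∫ ω, Z 0 ω ^ β ∂P ≤ K' := by rw [hK'def]; linarith
  -- constants
  set c₁ : ℝ := (μ/(8*K')) ^ (1/(β-1)) with hc₁def
  have hc₁pos : 0 < c₁ := Real.rpow_pos_of_pos (by positivity) _
  set θ : ℝ := (κ-1)/(β-1) + κ with hθdef
  have hθpos : 0 < θ := by
    have : θ = (κ * β - 1)/(β-1) := by rw [hθdef]; field_simp; ring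
    rw [this]
    exact div_pos (by linarith) hβ1'
  -- thresholds from the two tendsto facts
  have hg := tendsto_rpow_mul_exp_neg_mul_atTop_nhds_zero (α-1) (c₁/2) (by positivity)
  obtain ⟨Λ₁, hΛ₁⟩ := eventually_atTop.mp (hg.eventually_le_const hε)
  have hh := aux_tendsto' (α-1) (c₁/2) θ (by positivity) hθpos
  obtain ⟨Λ₂, hΛ₂⟩ := eventually_atTop.mp (hh.eventually_le_const hε)
  refine ⟨max (max Λ₁ Λ₂) (max 1 μ), fun lam hlam u hu => ?_⟩
  have hlam1 : (1:ℝ) ≤ lam := le_trans (le_trans (le_max_left 1 μ) (le_max_right _ _)) hlam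
  have hlamμ : μ ≤ lam := le_trans (le_trans (le_max_right 1 μ) (le_max_right _ _)) hlam
  have hlamΛ₁ : Λ₁ ≤ lam := le_trans (le_trans (le_max_left _ _) (le_max_left _ _)) hlam
  have hlamΛ₂ : Λ₂ ≤ lam := le_trans (le_trans (le_max_right _ _) (le_max_left _ _)) hlam
  have hlam0 : (0:ℝ) < lam := by linarith
  have hu1 : 1 < u := by
    have : (1:ℝ) ^ κ ≤ lam ^ κ := Real.rpow_le_rpow zero_le_one hlam1 hκpos.le
    rw [Real.one_rpow] at this
    linarith
  have hu0 : (0:ℝ) < u := by linarith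
  have hlu : (0:ℝ) < lam + u := by linarith
  -- the index n₀
  set x : ℝ := (lam + u)/μ with hxdef
  have hx0 : (0:ℝ) ≤ x := by positivity
  have hx1 : (1:ℝ) ≤ x := by rw [hxdef, le_div_iff₀ hμpos]; linarith
  set n₀ : ℕ := Nat.floor x + 1 with hn₀def
  have hxn : x < (n₀:ℝ) := by
    rw [hn₀def]; push_cast; exact Nat.lt_floor_add_one x
  have hn2x : (n₀:ℝ) ≤ 2*x := by
    rw [hn₀def]; push_cast
    have := Nat.floor_le hx0
    linarith
  -- event inclusion
  have hincl : P {ω | u / μ <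
          ((Set.ncard {n : ℕ | 1 ≤ n ∧ ∑ i ∈ Finset.range n, Z i ω ≤ lam} : ℝ) -
            lam / μ)} ≤ P {ω | (∑ i ∈ Finset.range n₀, Z i) ω ≤ lam} := by
    apply measure_mono_ae
    filter_upwards [ae_all_iff.2 hpos] with ω hω hmem
    have hmem' : u / μ <
        ((Set.ncard {n : ℕ | 1 ≤ n ∧ ∑ i ∈ Finset.range n, Z i ω ≤ lam} : ℝ) - lam / μ) := hmem
    show (∑ i ∈ Finset.range n₀, Z i) ω ≤ lam
    rw [Finset.sum_apply]
    by_contra hcon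
    push_neg at hcon
    have hAsub : {k : ℕ | 1 ≤ k ∧ ∑ i ∈ Finset.range k, Z i ω ≤ lam} ⊆ Set.Ico 1 n₀ := by
      rintro k ⟨hk1, hk2⟩
      refine ⟨hk1, ?_⟩
      by_contra hge
      push_neg at hge
      have hss : ∑ i ∈ Finset.range n₀, Z i ω ≤ ∑ i ∈ Finset.range k, Z i ω :=
        Finset.sum_le_sum_of_subset_of_nonneg (Finset.range_subset_range.2 hge) fun i _ _ => (hω i).le
      linarith
    have hcard : ((Set.ncard {k : ℕ | 1 ≤ k ∧ ∑ i ∈ Finset.range k, Z i ω ≤ lam}) : ℝ) ≤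
        (Nat.floor x : ℝ) := by
      have h1 : Set.ncard {k : ℕ | 1 ≤ k ∧ ∑ i ∈ Finset.range k, Z i ω ≤ lam} ≤
          (Set.Ico 1 n₀).ncard := Set.ncard_le_ncard hAsub (Set.finite_Ico 1 n₀)
      have h2 : (Set.Ico 1 n₀).ncard = Nat.floor x := by
        rw [← Finset.coe_Ico, Set.ncard_coe_finset, Nat.card_Ico, hn₀def]
        simp
      rw [h2] at h1
      exact_mod_cast h1
    have h3 : x < ((Set.ncard {k : ℕ | 1 ≤ k ∧ ∑ i ∈ Finset.range k, Z i ω ≤ lam}) : ℝ) := by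
      have h4 : x = u/μ + lam/μ := by rw [hxdef]; ring
      linarith [hmem']
    have := Nat.floor_le hx0
    linarith
  -- the Chernoff parameter s
  set s : ℝ := (μ*u/(4*K'*(lam+u))) ^ (1/(β-1)) with hsdef
  have hs0 : 0 < s := Real.rpow_pos_of_pos (by positivity) _
  have hsβ1 : s ^ (β-1) = μ*u/(4*K'*(lam+u)) := by
    rw [hsdef, ← Real.rpow_mul (by positivity), one_div, inv_mul_cancel₀ hβne, Real.rpow_one]
  have hsB : s ^ β = s * s ^ (β-1) := by
    nth_rewrite 1 [show β = 1 + (β-1) by ring]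
    rw [Real.rpow_add hs0, Real.rpow_one]
  have hchern := aux_chernoff' P Z hmeas hindep hident hpos hint μ hμ β hβ1 hβ2 hintβ K' hK'bd
    s hs0.le n₀ lam
  clear_value β K' c₁ θ x n₀ s
  -- exponent bound
  have hexp_le : s * lam + (n₀:ℝ) * (-(s * μ) + s ^ β * K') ≤ -(s*u/2) := by
    have h1 : x * (s*μ) ≤ (n₀:ℝ) * (s*μ) := mul_le_mul_of_nonneg_right hxn.le (mul_nonneg hs0.le hμpos.le)
    have h2 : (n₀:ℝ) * (s^β*K') ≤ 2*x*(s^β*K') := by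
      have : (0:ℝ) ≤ s^β*K' := mul_nonneg (Real.rpow_nonneg hs0.le β) hK'pos.le
      exact mul_le_mul_of_nonneg_right hn2x this
    have h3 : x*(s*μ) = s*lam + s*u := by
      rw [hxdef]; field_simp
    have h4 : 2*x*(s^β*K') = s*u/2 := by
      rw [hxdef, hsB, hsβ1]
      field_simp
      ring
    have hexpand : s*lam + (n₀:ℝ)*(-(s*μ) + s^β*K') =
        s*lam - (n₀:ℝ)*(s*μ) + (n₀:ℝ)*(s^β*K') := by ring
    rw [hexpand]
    linarith
  have hp_le : (P {ω | u / μ <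
          ((Set.ncard {n : ℕ | 1 ≤ n ∧ ∑ i ∈ Finset.range n, Z i ω ≤ lam} : ℝ) -
            lam / μ)}).toReal ≤ Real.exp (-(s*u/2)) :=
    le_trans (le_trans (ENNReal.toReal_mono
        (measure_ne_top P _) hincl) hchern)
      (Real.exp_le_exp.2 hexp_le)
  have hfac : u ^ α / (lam + u) ≤ u ^ (α-1) := by
    rw [Real.rpow_sub hu0, Real.rpow_one, div_le_div_iff₀ hlu hu0]
    have h6 := mul_le_mul_of_nonneg_left (by linarith : u ≤ lam + u)
      (Real.rpow_nonneg hu0.le α)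
    linarith
  have hmain : u ^ α / (lam + u) * (P {ω | u / μ <
          ((Set.ncard {n : ℕ | 1 ≤ n ∧ ∑ i ∈ Finset.range n, Z i ω ≤ lam} : ℝ) -
            lam / μ)}).toReal ≤ u ^ (α-1) * Real.exp (-(s*u/2)) :=
    mul_le_mul hfac hp_le ENNReal.toReal_nonneg (Real.rpow_nonneg hu0.le _)
  refine le_trans hmain ?_
  rcases le_total u lam with hul | hlu2
  · -- case u ≤ lam
    have hs_lb : c₁ * lam ^ ((κ-1)/(β-1)) ≤ s := by
      have hcl0 : 0 ≤ c₁ * lam ^ ((κ-1)/(β-1)) :=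
        mul_nonneg hc₁pos.le (Real.rpow_nonneg hlam0.le _)
      refine (Real.rpow_le_rpow_iff hcl0 hs0.le hβ1').mp ?_
      have e1 : (c₁ * lam ^ ((κ-1)/(β-1))) ^ (β-1) = (μ/(8*K')) * lam ^ (κ-1) := by
        rw [Real.mul_rpow hc₁pos.le (Real.rpow_nonneg hlam0.le _), hc₁def,
          ← Real.rpow_mul (div_nonneg hμpos.le (by linarith)), ← Real.rpow_mul hlam0.le,
          one_div, inv_mul_cancel₀ hβne, Real.rpow_one, div_mul_cancel₀ _ hβne]
      rw [e1, hsβ1]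
      have h5 : lam ^ (κ-1) = lam^κ/lam := by rw [Real.rpow_sub hlam0, Real.rpow_one]
      rw [h5, div_mul_div_comm, div_le_div_iff₀
        (mul_pos (mul_pos (by norm_num : (0:ℝ) < 8) hK'pos) hlam0)
        (mul_pos (mul_pos (by norm_num : (0:ℝ) < 4) hK'pos) hlu)]
      have hA : μ * lam ^ κ ≤ μ * u := mul_le_mul_of_nonneg_left hu.le hμpos.le
      have h6 : μ * lam ^ κ * (4*K'*(lam+u)) ≤ μ * u * (4*K'*(lam+u)) :=
        mul_le_mul_of_nonneg_right hA
        (mul_pos (mul_pos (by norm_num : (0:ℝ) < 4) hK'pos) hlu).le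
      have h7 : μ * u * (4*K'*(lam+u)) ≤ μ * u * (8*K'*lam) := by
        refine mul_le_mul_of_nonneg_left ?_ (mul_nonneg hμpos.le hu0.le)
        have h8 := mul_le_mul_of_nonneg_left (by linarith : lam + u ≤ 2*lam)
          (by linarith : (0:ℝ) ≤ 4*K')
        linarith
      linarith
    have hsu : c₁ * lam ^ θ ≤ s * u := by
      have h5 : c₁ * lam ^ θ = (c₁ * lam ^ ((κ-1)/(β-1))) * lam ^ κ := by
        rw [hθdef, Real.rpow_add hlam0]; ring
      rw [h5]
      have h6 : (c₁ * lam ^ ((κ-1)/(β-1))) * lam ^ κ ≤ s * lam ^ κ :=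
        mul_le_mul_of_nonneg_right hs_lb (Real.rpow_nonneg hlam0.le _)
      have h7 : s * lam ^ κ ≤ s * u := mul_le_mul_of_nonneg_left hu.le hs0.le
      linarith
    calc u ^ (α-1) * Real.exp (-(s*u/2))
        ≤ lam ^ (α-1) * Real.exp (-(c₁/2) * lam ^ θ) := by
          refine mul_le_mul (Real.rpow_le_rpow hu0.le hul (by linarith))
            (Real.exp_le_exp.2 (by linarith [hsu])) (Real.exp_pos _).le
            (Real.rpow_nonneg hlam0.le _)
      _ ≤ ε := hΛ₂ lam hlamΛ₂
  · -- case lam ≤ u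
    have hs_lb : c₁ ≤ s := by
      refine (Real.rpow_le_rpow_iff hc₁pos.le hs0.le hβ1').mp ?_
      have e1 : c₁ ^ (β-1) = μ/(8*K') := by
        rw [hc₁def, ← Real.rpow_mul (div_nonneg hμpos.le (by linarith)), one_div,
          inv_mul_cancel₀ hβne, Real.rpow_one]
      rw [e1, hsβ1, div_le_div_iff₀ (by linarith : (0:ℝ) < 8*K')
        (mul_pos (mul_pos (by norm_num : (0:ℝ) < 4) hK'pos) hlu)]
      have h6 : μ * (4*K'*(lam+u)) ≤ μ * (4*K'*(2*u)) := by
        refine mul_le_mul_of_nonneg_left ?_ hμpos.le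
        exact mul_le_mul_of_nonneg_left (by linarith : lam + u ≤ 2*u)
          (by linarith : (0:ℝ) ≤ 4*K')
      have h7 : μ * (4*K'*(2*u)) = μ * u * (8*K') := by ring
      linarith
    have hsu : c₁ * u ≤ s * u := mul_le_mul_of_nonneg_right hs_lb hu0.le
    calc u ^ (α-1) * Real.exp (-(s*u/2))
        ≤ u ^ (α-1) * Real.exp (-(c₁/2) * u) := by
          refine mul_le_mul_of_nonneg_left (Real.exp_le_exp.2 (by linarith [hsu]))
            (Real.rpow_nonneg hu0.le _)
      _ ≤ ε := hΛ₁ u (le_trans hlamΛ₁ hlu2)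
end

section
/- Let Z > 0 and W be random variables on a common probability space with |W| ≤ K almost surely for some constant K < ∞, and suppose lim_{x→∞} x^α P(Z > x) = c_Z for some α ∈ (1,2) and c_Z > 0. Assume there exist a Markov kernel κ from ℝ to ℝ and a probability measure ν_∞ on ℝ such that the joint law of (Z, W) equals the composition of the law of Z with κ (i.e. P(Z ∈ A, W ∈ B) = ∫_A κ(x)(B) d(law of Z)(x) for all Borel A, B ⊆ ℝ) and lim_{x→∞} sup_{y∈ℝ} | κ(x)((−∞,y]) − ν_∞((−∞,y]) | = 0. Then lim_{x→∞} x^α P( W·Z > x ) = c_Z ∫_ℝ (max(w,0))^α dν_∞(w) and lim_{x→∞} x^α P( W·Z ≤ −x ) = c_Z ∫_ℝ (max(−w,0))^α dν_∞(w). -/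
open MeasureTheory ProbabilityTheory Filter Set
open scoped Topology ENNReal

namespace Stmt7Aux


lemma toReal_prob_le_one {X : Type*} [MeasurableSpace X] (μ : Measure X)
    [IsProbabilityMeasure μ] (s : Set X) : (μ s).toReal ≤ 1 := by
  simpa using ENNReal.toReal_mono ENNReal.one_ne_top prob_le_one

lemma measure_eq_inter_Ioi {μ : Measure ℝ} (h0 : μ (Iic 0) = 0) (S : Set ℝ) :
    μ S = μ (S ∩ Ioi 0) := by
  refine le_antisymm ?_ (measure_mono inter_subset_left)
  calc μ S ≤ μ ((S ∩ Ioi 0) ∪ Iic 0) := measure_mono (fun z hz => by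
        by_cases hz0 : 0 < z
        · exact Or.inl ⟨hz, hz0⟩
        · exact Or.inr (not_lt.1 hz0))
    _ ≤ μ (S ∩ Ioi 0) + μ (Iic 0) := measure_union_le _ _
    _ = μ (S ∩ Ioi 0) := by rw [h0, add_zero]

lemma tail_Ici {μ : Measure ℝ} [IsFiniteMeasure μ] {α c : ℝ} (hα : 0 < α)
    (htail : Tendsto (fun x => x ^ α * (μ (Ioi x)).toReal) atTop (nhds c)) :
    Tendsto (fun x => x ^ α * (μ (Ici x)).toReal) atTop (nhds c) := by
  have h1 : Tendsto (fun x : ℝ => (x - 1) ^ α * (μ (Ioi (x - 1))).toReal) atTop (nhds c) :=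
    htail.comp (tendsto_atTop_add_const_right atTop (-1) tendsto_id)
  have hfrac : Tendsto (fun x : ℝ => x / (x - 1)) atTop (nhds 1) := by
    have h2 : Tendsto (fun x : ℝ => 1 + 1 / (x - 1)) atTop (nhds (1 + 0)) :=
      tendsto_const_nhds.add ((tendsto_const_nhds.div_atTop
        (tendsto_atTop_add_const_right atTop (-1) tendsto_id)))
    rw [add_zero] at h2
    refine h2.congr' ?_
    filter_upwards [eventually_gt_atTop (1 : ℝ)] with x hx
    have hx1 : x - 1 ≠ 0 := by linarith
    field_simp
    ring
  have hpow : Tendsto (fun x : ℝ => (x / (x - 1)) ^ α) atTop (nhds 1) := by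
    have h3 := hfrac.rpow_const (p := α) (Or.inl one_ne_zero)
    rw [show (1:ℝ) ^ α = 1 from Real.one_rpow α] at h3
    exact h3
  have hupper : Tendsto (fun x : ℝ => (x / (x - 1)) ^ α * ((x - 1) ^ α * (μ (Ioi (x - 1))).toReal))
      atTop (nhds c) := by simpa using hpow.mul h1
  refine tendsto_of_tendsto_of_tendsto_of_le_of_le' htail hupper ?_ ?_
  · filter_upwards [eventually_gt_atTop (0 : ℝ)] with x hx
    exact mul_le_mul_of_nonneg_left
      (ENNReal.toReal_mono (measure_ne_top _ _) (measure_mono Ioi_subset_Ici_self))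
      (Real.rpow_nonneg hx.le α)
  · filter_upwards [eventually_gt_atTop (1 : ℝ)] with x hx
    have hx1 : (0:ℝ) < x - 1 := by linarith
    have hxx : (0:ℝ) < x / (x - 1) := div_pos (by linarith) hx1
    have hxeq : x ^ α = (x / (x - 1)) ^ α * (x - 1) ^ α := by
      rw [← Real.mul_rpow hxx.le hx1.le, div_mul_cancel₀]
      exact hx1.ne'
    rw [hxeq, mul_assoc]
    exact mul_le_mul_of_nonneg_left
      (mul_le_mul_of_nonneg_left
        (ENNReal.toReal_mono (measure_ne_top _ _) (measure_mono (Ici_subset_Ioi.mpr (by linarith))))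
        (Real.rpow_nonneg hx1.le α))
      (Real.rpow_nonneg hxx.le α)

lemma tail_pos {μ : Measure ℝ} [IsFiniteMeasure μ] {α c : ℝ} (hc : 0 < c)
    (htail : Tendsto (fun x => x ^ α * (μ (Ioi x)).toReal) atTop (nhds c)) (N : ℝ) :
    μ (Ioi N) ≠ 0 := by
  obtain ⟨x, hx1, hx2⟩ := ((htail.eventually_const_lt (show c/2 < c by linarith)).and
    (eventually_ge_atTop N)).exists
  have : (μ (Ioi x)).toReal ≠ 0 := by
    intro h; rw [h, mul_zero] at hx1; linarith
  have hne : μ (Ioi x) ≠ 0 := fun h => this (by simp [h])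
  intro h
  exact hne (le_antisymm (le_trans (measure_mono (Ioi_subset_Ioi hx2)) h.le) (zero_le))



/-- difference of CDF values is bounded by the sup -/
lemma abs_le_sup (κ : Kernel ℝ ℝ) [IsMarkovKernel κ] (ν : Measure ℝ) [IsProbabilityMeasure ν]
    (z y : ℝ) :
    |((κ z) (Iic y)).toReal - (ν (Iic y)).toReal| ≤
      ⨆ y' : ℝ, |((κ z) (Iic y')).toReal - (ν (Iic y')).toReal| := by
  refine le_ciSup (f := fun y' : ℝ => |((κ z) (Iic y')).toReal - (ν (Iic y')).toReal|) ?_ y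
  refine ⟨2, ?_⟩
  rintro _ ⟨y', rfl⟩
  have h1 := toReal_prob_le_one (κ z) (Iic y')
  have h2 := toReal_prob_le_one ν (Iic y')
  have h3 : (0:ℝ) ≤ ((κ z) (Iic y')).toReal := ENNReal.toReal_nonneg
  have h4 : (0:ℝ) ≤ (ν (Iic y')).toReal := ENNReal.toReal_nonneg
  rw [abs_le]; constructor <;> linarith

/-- identify the CDF of ν from a.e. constant CDF values of κ -/
lemma nu_id {μ : Measure ℝ} [IsProbabilityMeasure μ] (κ : Kernel ℝ ℝ) [IsMarkovKernel κ]
    (ν : Measure ℝ) [IsProbabilityMeasure ν]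
    (hpos : ∀ N : ℝ, μ (Ioi N) ≠ 0)
    (hκconv : Tendsto (fun x : ℝ =>
        ⨆ y : ℝ, |((κ x) (Iic y)).toReal - (ν (Iic y)).toReal|) atTop (nhds 0))
    {y : ℝ} {r : ℝ≥0∞} (hr : r ≠ ∞) (hae : ∀ᵐ z ∂μ, κ z (Iic y) = r) :
    ν (Iic y) = r := by
  have key : ∀ δ > (0:ℝ), |r.toReal - (ν (Iic y)).toReal| < δ := by
    intro δ hδ
    have := (NormedAddCommGroup.tendsto_nhds_zero.1 hκconv) δ hδ
    obtain ⟨N, hN⟩ := eventually_atTop.1 this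
    -- find z ≥ N with κ z (Iic y) = r
    have hne : (Ioi N ∩ {z | κ z (Iic y) = r}).Nonempty := by
      by_contra h
      rw [not_nonempty_iff_eq_empty] at h
      have hsub : Ioi N ⊆ {z | κ z (Iic y) = r}ᶜ := by
        intro z hz hz2
        exact absurd (Set.eq_empty_iff_forall_notMem.1 h z ⟨hz, hz2⟩) (fun H => H)
      refine hpos N (le_antisymm (le_trans (measure_mono hsub) (le_of_eq ?_)) (zero_le))
      rw [compl_setOf]
      exact ae_iff.1 hae
    obtain ⟨z, hz1, hz2⟩ := hne
    have h1 := abs_le_sup κ ν z y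
    rw [hz2] at h1
    calc |r.toReal - (ν (Iic y)).toReal| ≤ _ := h1
      _ ≤ |(⨆ y' : ℝ, |((κ z) (Iic y')).toReal - (ν (Iic y')).toReal|)| := le_abs_self _
      _ < δ := hN z hz1.le
  have heq : r.toReal = (ν (Iic y)).toReal := by
    by_contra h
    have : 0 < |r.toReal - (ν (Iic y)).toReal| := abs_pos.2 (sub_ne_zero.2 h)
    exact absurd (key _ this) (lt_irrefl _)
  exact ((ENNReal.toReal_eq_toReal_iff' (measure_ne_top _ _) hr).1 heq.symm)



lemma err {μ : Measure ℝ} [IsProbabilityMeasure μ] {α c K : ℝ} (hK : 0 < K) (hc : 0 < c)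
    (htailIci : Tendsto (fun x => x ^ α * (μ (Ici x)).toReal) atTop (nhds c))
    (u : ℝ → ℝ)
    (hu : ∀ η > (0:ℝ), ∃ N : ℝ, ∀ x ≥ N, |u x| ≤ η * (μ (Ici (x / K))).toReal) :
    Tendsto (fun x => x ^ α * u x) atTop (nhds 0) := by
  rw [NormedAddCommGroup.tendsto_nhds_zero]
  intro ρ hρ
  have hD : (0:ℝ) < K ^ α * (c + 1) := mul_pos (Real.rpow_pos_of_pos hK α) (by linarith)
  have hη0 : (0:ℝ) < ρ / (2 * (K ^ α * (c + 1))) := by positivity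
  set η := ρ / (2 * (K ^ α * (c + 1))) with hηdef
  obtain ⟨N, hN⟩ := hu η hη0
  have hIci : Tendsto (fun x => (x / K) ^ α * (μ (Ici (x / K))).toReal) atTop (nhds c) :=
    htailIci.comp (tendsto_id.atTop_div_const hK)
  have hevt : ∀ᶠ x in atTop, (x / K) ^ α * (μ (Ici (x / K))).toReal < c + 1 :=
    hIci.eventually_lt_const (by linarith)
  filter_upwards [hevt, eventually_ge_atTop N, eventually_gt_atTop (0:ℝ)] with x h1 h2 h3
  have hxK : 0 < x / K := div_pos h3 hK
  have hxα : (0:ℝ) ≤ x ^ α := Real.rpow_nonneg h3.le α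
  have hsplit : x ^ α = K ^ α * (x / K) ^ α := by
    rw [← Real.mul_rpow hK.le hxK.le, mul_div_cancel₀]
    exact hK.ne'
  calc ‖x ^ α * u x‖ = x ^ α * |u x| := by
        rw [norm_mul, Real.norm_eq_abs, Real.norm_eq_abs, abs_of_nonneg hxα]
    _ ≤ x ^ α * (η * (μ (Ici (x / K))).toReal) :=
        mul_le_mul_of_nonneg_left (hN x h2) hxα
    _ = η * (K ^ α * ((x / K) ^ α * (μ (Ici (x / K))).toReal)) := by rw [hsplit]; ring
    _ ≤ η * (K ^ α * (c + 1)) := by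
        refine mul_le_mul_of_nonneg_left ?_ hη0.le
        refine mul_le_mul_of_nonneg_left h1.le (Real.rpow_nonneg hK.le α)
    _ = ρ / 2 := by rw [hηdef]; field_simp
    _ < ρ := by linarith



lemma toReal_prob_le_one' {X : Type*} [MeasurableSpace X] (μ : Measure X)
    [IsProbabilityMeasure μ] (s : Set X) : (μ s).toReal ≤ 1 := by
  simpa using ENNReal.toReal_mono ENNReal.one_ne_top prob_le_one

lemma measure_eq_inter_Ioi' {μ : Measure ℝ} (h0 : μ (Iic 0) = 0) (S : Set ℝ) :
    μ S = μ (S ∩ Ioi 0) := by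
  refine le_antisymm ?_ (measure_mono inter_subset_left)
  calc μ S ≤ μ ((S ∩ Ioi 0) ∪ Iic 0) := measure_mono (fun z hz => by
        by_cases hz0 : 0 < z
        · exact Or.inl ⟨hz, hz0⟩
        · exact Or.inr (not_lt.1 hz0))
    _ ≤ μ (S ∩ Ioi 0) + μ (Iic 0) := measure_union_le _ _
    _ = μ (S ∩ Ioi 0) := by rw [h0, add_zero]

/-- Fubini step: rewrite the ν-smoothed tail as an integral over ν. -/
lemma fubini_step (μ ν : Measure ℝ) [IsProbabilityMeasure μ] [IsProbabilityMeasure ν]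
    {S : Set (ℝ × ℝ)} (hS : MeasurableSet S) (x α : ℝ) :
    x ^ α * ∫ z, (ν (Prod.mk z ⁻¹' S)).toReal ∂μ
      = ∫ w, x ^ α * (μ ((fun z => (z, w)) ⁻¹' S)).toReal ∂ν := by
  have h1 : ∫ z, (ν (Prod.mk z ⁻¹' S)).toReal ∂μ = ((μ.prod ν) S).toReal := by
    rw [Measure.prod_apply hS]
    exact integral_toReal (measurable_measure_prodMk_left hS).aemeasurable
      (ae_of_all _ fun z => measure_lt_top _ _)
  have h2 : ((μ.prod ν) S).toReal = ∫ w, (μ ((fun z => (z, w)) ⁻¹' S)).toReal ∂ν := by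
    rw [Measure.prod_apply_symm hS]
    exact (integral_toReal (measurable_measure_prodMk_right hS).aemeasurable
      (ae_of_all _ fun w => measure_lt_top _ _)).symm
  rw [h1, h2, ← integral_const_mul]

/-- Main term, positive side. -/
lemma main_pos {μ ν : Measure ℝ} [IsProbabilityMeasure μ] [IsProbabilityMeasure ν]
    {α c K : ℝ} (hα : 0 < α) (hK : 0 < K) (hc : 0 < c)
    (hμ0 : μ (Iic 0) = 0)
    (htail : Tendsto (fun x => x ^ α * (μ (Ioi x)).toReal) atTop (nhds c))
    (hνK : ν (Ioi K) = 0) :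
    Tendsto (fun x => x ^ α * ∫ z, (ν {w | x < w * z}).toReal ∂μ) atTop
      (nhds (c * ∫ w, max w 0 ^ α ∂ν)) := by
  have hS : ∀ x : ℝ, MeasurableSet {p : ℝ × ℝ | x < p.2 * p.1} := fun x =>
    measurableSet_lt measurable_const (measurable_snd.mul measurable_fst)
  -- rewrite via fubini_step
  have hrw : ∀ x : ℝ, x ^ α * ∫ z, (ν {w | x < w * z}).toReal ∂μ
      = ∫ w, x ^ α * (μ {z | x < w * z}).toReal ∂ν := fun x => fubini_step μ ν (hS x) x α
  simp only [hrw]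
  -- dominated convergence
  have hlim : ∫ w, c * max w 0 ^ α ∂ν = c * ∫ w, max w 0 ^ α ∂ν := integral_const_mul c _
  rw [← hlim]
  obtain ⟨T, hTb⟩ := eventually_atTop.1 (htail.eventually_lt_const
    (show c < c + 1 by linarith))
  have hT1 : ∀ t ≥ max T 1, t ^ α * (μ (Ioi t)).toReal ≤ c + 1 :=
    fun t ht => (hTb t (le_trans (le_max_left _ _) ht)).le
  refine tendsto_integral_filter_of_dominated_convergence
    (fun _ => K ^ α * (c + 1)) ?_ ?_ (integrable_const _) ?_
  · -- measurability
    filter_upwards with x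
    have : Measurable fun w => (μ {z | x < w * z}).toReal := by
      have hS' : MeasurableSet {p : ℝ × ℝ | x < p.1 * p.2} :=
        measurableSet_lt measurable_const (measurable_fst.mul measurable_snd)
      exact (measurable_measure_prodMk_left (ν := μ) hS').ennreal_toReal
    exact ((this.const_mul _).aestronglyMeasurable)
  · -- bound
    have hνae : ∀ᵐ w ∂ν, w ≤ K := by
      rw [ae_iff]
      simpa using (le_antisymm (le_trans (measure_mono (fun w hw => by
        simpa using hw)) hνK.le) (zero_le))
    filter_upwards [eventually_ge_atTop (max T 1 * K), eventually_gt_atTop (0:ℝ)]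
      with x hxT hx0
    filter_upwards [hνae] with w hwK
    have hbnd0 : (0:ℝ) ≤ K ^ α * (c + 1) := by positivity
    rcases le_or_gt w 0 with hw | hw
    · have hzero : μ {z | x < w * z} = 0 := by
        refine le_antisymm (le_trans (measure_mono ?_) hμ0.le) (zero_le)
        intro z hz
        simp only [mem_setOf_eq] at hz
        by_contra hzc
        simp only [mem_Iic, not_le] at hzc
        nlinarith
      rw [hzero]
      simp [hbnd0, abs_of_nonneg]
    · have hset : {z | x < w * z} = Ioi (x / w) := by
        ext z; simp [mem_Ioi, div_lt_iff₀ hw, mul_comm]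
      have hxw : x / w ≥ max T 1 := by
        rw [ge_iff_le, le_div_iff₀ hw]
        calc max T 1 * w ≤ max T 1 * K :=
          mul_le_mul_of_nonneg_left hwK (le_trans zero_le_one (le_max_right _ _))
        _ ≤ x := hxT
      have hxsplit : x ^ α = w ^ α * (x / w) ^ α := by
        rw [← Real.mul_rpow hw.le (div_pos hx0 hw).le, mul_div_cancel₀]
        exact hw.ne'
      rw [hset, Real.norm_eq_abs, abs_of_nonneg (by positivity), hxsplit, mul_assoc]
      calc w ^ α * ((x / w) ^ α * (μ (Ioi (x / w))).toReal)
          ≤ w ^ α * (c + 1) :=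
            mul_le_mul_of_nonneg_left (hT1 _ hxw) (Real.rpow_nonneg hw.le α)
        _ ≤ K ^ α * (c + 1) :=
            mul_le_mul_of_nonneg_right (Real.rpow_le_rpow hw.le hwK hα.le) (by linarith)
  · -- pointwise limit
    filter_upwards with w
    rcases le_or_gt w 0 with hw | hw
    · have : c * max w 0 ^ α = 0 := by
        rw [max_eq_right hw, Real.zero_rpow hα.ne', mul_zero]
      rw [this]
      refine Tendsto.congr' ?_ tendsto_const_nhds
      filter_upwards [eventually_gt_atTop (0:ℝ)] with x hx0
      have hzero : μ {z | x < w * z} = 0 := by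
        refine le_antisymm (le_trans (measure_mono ?_) hμ0.le) (zero_le)
        intro z hz
        simp only [mem_setOf_eq] at hz
        by_contra hzc
        simp only [mem_Iic, not_le] at hzc
        nlinarith
      rw [hzero]
      simp
    · have hmax : c * max w 0 ^ α = w ^ α * c := by rw [max_eq_left hw.le]; ring
      rw [hmax]
      have htend : Tendsto (fun x => w ^ α * ((x / w) ^ α * (μ (Ioi (x / w))).toReal))
          atTop (nhds (w ^ α * c)) :=
        (htail.comp (tendsto_id.atTop_div_const hw)).const_mul _
      refine Tendsto.congr' ?_ htend
      filter_upwards [eventually_gt_atTop (0:ℝ)] with x hx0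
      have hset : {z | x < w * z} = Ioi (x / w) := by
        ext z; simp [mem_Ioi, div_lt_iff₀ hw, mul_comm]
      have hxsplit : x ^ α = w ^ α * (x / w) ^ α := by
        rw [← Real.mul_rpow hw.le (div_pos hx0 hw).le, mul_div_cancel₀]
        exact hw.ne'
      rw [hset, hxsplit, mul_assoc]



lemma fubini_step' (μ ν : Measure ℝ) [IsProbabilityMeasure μ] [IsProbabilityMeasure ν]
    {S : Set (ℝ × ℝ)} (hS : MeasurableSet S) (x α : ℝ) :
    x ^ α * ∫ z, (ν (Prod.mk z ⁻¹' S)).toReal ∂μ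
      = ∫ w, x ^ α * (μ ((fun z => (z, w)) ⁻¹' S)).toReal ∂ν := by
  have h1 : ∫ z, (ν (Prod.mk z ⁻¹' S)).toReal ∂μ = ((μ.prod ν) S).toReal := by
    rw [Measure.prod_apply hS]
    exact integral_toReal (measurable_measure_prodMk_left hS).aemeasurable
      (ae_of_all _ fun z => measure_lt_top _ _)
  have h2 : ((μ.prod ν) S).toReal = ∫ w, (μ ((fun z => (z, w)) ⁻¹' S)).toReal ∂ν := by
    rw [Measure.prod_apply_symm hS]
    exact (integral_toReal (measurable_measure_prodMk_right hS).aemeasurable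
      (ae_of_all _ fun w => measure_lt_top _ _)).symm
  rw [h1, h2, ← integral_const_mul]

/-- Main term, negative side. -/
lemma main_neg {μ ν : Measure ℝ} [IsProbabilityMeasure μ] [IsProbabilityMeasure ν]
    {α c K : ℝ} (hα : 0 < α) (hK : 0 < K) (hc : 0 < c)
    (hμ0 : μ (Iic 0) = 0)
    (htailIci : Tendsto (fun x => x ^ α * (μ (Ici x)).toReal) atTop (nhds c))
    (hνK : ν (Iio (-K)) = 0) :
    Tendsto (fun x => x ^ α * ∫ z, (ν {w | w * z ≤ -x}).toReal ∂μ) atTop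
      (nhds (c * ∫ w, max (-w) 0 ^ α ∂ν)) := by
  have hS : ∀ x : ℝ, MeasurableSet {p : ℝ × ℝ | p.2 * p.1 ≤ -x} := fun x =>
    measurableSet_le (measurable_snd.mul measurable_fst) measurable_const
  have hrw : ∀ x : ℝ, x ^ α * ∫ z, (ν {w | w * z ≤ -x}).toReal ∂μ
      = ∫ w, x ^ α * (μ {z | w * z ≤ -x}).toReal ∂ν := fun x => fubini_step' μ ν (hS x) x α
  simp only [hrw]
  have hlim : ∫ w, c * max (-w) 0 ^ α ∂ν = c * ∫ w, max (-w) 0 ^ α ∂ν := integral_const_mul c _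
  rw [← hlim]
  obtain ⟨T, hTb⟩ := eventually_atTop.1 (htailIci.eventually_lt_const
    (show c < c + 1 by linarith))
  have hT1 : ∀ t ≥ max T 1, t ^ α * (μ (Ici t)).toReal ≤ c + 1 :=
    fun t ht => (hTb t (le_trans (le_max_left _ _) ht)).le
  -- set identity for w < 0
  have hset : ∀ x : ℝ, ∀ w : ℝ, w < 0 → {z : ℝ | w * z ≤ -x} = Ici (x / (-w)) := by
    intro x w hw
    ext z
    simp only [mem_setOf_eq, mem_Ici]
    rw [div_le_iff₀ (neg_pos.2 hw)]
    constructor <;> intro h <;> nlinarith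
  have hzero : ∀ x : ℝ, 0 < x → ∀ w : ℝ, 0 ≤ w → μ {z | w * z ≤ -x} = 0 := by
    intro x hx0 w hw
    refine le_antisymm (le_trans (measure_mono ?_) hμ0.le) (zero_le)
    intro z hz
    simp only [mem_setOf_eq] at hz
    by_contra hzc
    simp only [mem_Iic, not_le] at hzc
    nlinarith
  refine tendsto_integral_filter_of_dominated_convergence
    (fun _ => K ^ α * (c + 1)) ?_ ?_ (integrable_const _) ?_
  · filter_upwards with x
    have : Measurable fun w => (μ {z | w * z ≤ -x}).toReal := by
      have hS' : MeasurableSet {p : ℝ × ℝ | p.1 * p.2 ≤ -x} :=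
        measurableSet_le (measurable_fst.mul measurable_snd) measurable_const
      exact (measurable_measure_prodMk_left (ν := μ) hS').ennreal_toReal
    exact ((this.const_mul _).aestronglyMeasurable)
  · have hνae : ∀ᵐ w ∂ν, -K ≤ w := by
      rw [ae_iff]
      refine le_antisymm (le_trans (measure_mono (fun w hw => ?_)) hνK.le) (zero_le)
      simp only [mem_setOf_eq, not_le] at hw
      simpa using hw
    filter_upwards [eventually_ge_atTop (max T 1 * K), eventually_gt_atTop (0:ℝ)]
      with x hxT hx0
    filter_upwards [hνae] with w hwK
    have hbnd0 : (0:ℝ) ≤ K ^ α * (c + 1) := by positivity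
    rcases le_or_gt 0 w with hw | hw
    · rw [hzero x hx0 w hw]
      simp [hbnd0, abs_of_nonneg]
    · have hnw : 0 < -w := neg_pos.2 hw
      have hxw : x / (-w) ≥ max T 1 := by
        rw [ge_iff_le, le_div_iff₀ hnw]
        calc max T 1 * (-w) ≤ max T 1 * K :=
          mul_le_mul_of_nonneg_left (by linarith) (le_trans zero_le_one (le_max_right _ _))
        _ ≤ x := hxT
      have hxsplit : x ^ α = (-w) ^ α * (x / (-w)) ^ α := by
        rw [← Real.mul_rpow hnw.le (div_pos hx0 hnw).le, mul_div_cancel₀]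
        exact hnw.ne'
      rw [hset x w hw, Real.norm_eq_abs, abs_of_nonneg (by positivity), hxsplit, mul_assoc]
      calc (-w) ^ α * ((x / (-w)) ^ α * (μ (Ici (x / (-w)))).toReal)
          ≤ (-w) ^ α * (c + 1) :=
            mul_le_mul_of_nonneg_left (hT1 _ hxw) (Real.rpow_nonneg hnw.le α)
        _ ≤ K ^ α * (c + 1) :=
            mul_le_mul_of_nonneg_right (Real.rpow_le_rpow hnw.le (by linarith) hα.le)
              (by linarith)
  · filter_upwards with w
    rcases le_or_gt 0 w with hw | hw
    · have : c * max (-w) 0 ^ α = 0 := by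
        rw [max_eq_right (neg_nonpos.2 hw), Real.zero_rpow hα.ne', mul_zero]
      rw [this]
      refine Tendsto.congr' ?_ tendsto_const_nhds
      filter_upwards [eventually_gt_atTop (0:ℝ)] with x hx0
      rw [hzero x hx0 w hw]
      simp
    · have hnw : 0 < -w := neg_pos.2 hw
      have hmax : c * max (-w) 0 ^ α = (-w) ^ α * c := by rw [max_eq_left hnw.le]; ring
      rw [hmax]
      have htend : Tendsto (fun x => (-w) ^ α * ((x / (-w)) ^ α * (μ (Ici (x / (-w)))).toReal))
          atTop (nhds ((-w) ^ α * c)) :=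
        (htailIci.comp (tendsto_id.atTop_div_const hnw)).const_mul _
      refine Tendsto.congr' ?_ htend
      filter_upwards [eventually_gt_atTop (0:ℝ)] with x hx0
      have hxsplit : x ^ α = (-w) ^ α * (x / (-w)) ^ α := by
        rw [← Real.mul_rpow hnw.le (div_pos hx0 hnw).le, mul_div_cancel₀]
        exact hnw.ne'
      rw [hset x w hw, hxsplit, mul_assoc]


end Stmt7Aux

open MeasureTheory ProbabilityTheory Filter Set Stmt7Aux
open scoped Topology ENNReal

/-- Breiman's lemma for dependent factors. Let `Z > 0` with
`x^α P(Z > x) → c_Z` (`α ∈ (1,2)`, `c_Z > 0`), `|W| ≤ K` a.s., and let `κ` be a Markov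
kernel such that the joint law of `(Z,W)` is the composition of the law of `Z` with `κ`
and `sup_y |κ(x)((-∞,y]) - ν_∞((-∞,y])| → 0` as `x → ∞`. Then
`x^α P(WZ > x) → c_Z ∫ (w)₊^α dν_∞` and `x^α P(WZ ≤ -x) → c_Z ∫ (w)₋^α dν_∞`. -/
theorem stmt_7 {Ω : Type*} [MeasurableSpace Ω] (P : Measure Ω) [IsProbabilityMeasure P]
    (Z W : Ω → ℝ) (hZmeas : Measurable Z) (hWmeas : Measurable W)
    (hZpos : ∀ᵐ ω ∂P, 0 < Z ω)
    (K : ℝ) (hK : ∀ᵐ ω ∂P, |W ω| ≤ K)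
    (α c_Z : ℝ) (hα1 : 1 < α) (hα2 : α < 2) (hcZ : 0 < c_Z)
    (htail : Tendsto (fun x : ℝ => x ^ α * (P {ω | x < Z ω}).toReal) atTop (nhds c_Z))
    (κ : Kernel ℝ ℝ) [IsMarkovKernel κ]
    (νinf : Measure ℝ) [IsProbabilityMeasure νinf]
    (hjoint : Measure.map (fun ω => (Z ω, W ω)) P = (Measure.map Z P).compProd κ)
    (hκconv : Tendsto (fun x : ℝ =>
        ⨆ y : ℝ, |((κ x) (Set.Iic y)).toReal - (νinf (Set.Iic y)).toReal|)
      atTop (nhds 0)) :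
    Tendsto (fun x : ℝ => x ^ α * (P {ω | x < W ω * Z ω}).toReal) atTop
        (nhds (c_Z * ∫ w, max w 0 ^ α ∂νinf)) ∧
    Tendsto (fun x : ℝ => x ^ α * (P {ω | W ω * Z ω ≤ -x}).toReal) atTop
        (nhds (c_Z * ∫ w, max (-w) 0 ^ α ∂νinf)) := by
  have hα0 : (0:ℝ) < α := by linarith
  set μ : Measure ℝ := Measure.map Z P with hμdef
  haveI : IsProbabilityMeasure μ := Measure.isProbabilityMeasure_map hZmeas.aemeasurable
  -- tail of μ
  have hmap : ∀ x : ℝ, μ (Ioi x) = P {ω | x < Z ω} := fun x => by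
    rw [hμdef, Measure.map_apply hZmeas measurableSet_Ioi]; rfl
  have htailμ : Tendsto (fun x => x ^ α * (μ (Ioi x)).toReal) atTop (nhds c_Z) := by
    simpa only [hmap] using htail
  have htailIci : Tendsto (fun x => x ^ α * (μ (Ici x)).toReal) atTop (nhds c_Z) :=
    tail_Ici hα0 htailμ
  have hμ0 : μ (Iic 0) = 0 := by
    rw [hμdef, Measure.map_apply hZmeas measurableSet_Iic]
    have : Z ⁻¹' (Iic 0) = {ω | ¬ 0 < Z ω} := by ext ω; simp [not_lt]
    rw [this]
    exact ae_iff.1 hZpos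
  have hzpos_ae : ∀ᵐ z ∂μ, 0 < z := by
    rw [ae_iff]
    have : {z : ℝ | ¬ 0 < z} = Iic 0 := by ext z; simp [not_lt]
    rw [this]; exact hμ0
  have hpos : ∀ N : ℝ, μ (Ioi N) ≠ 0 := tail_pos hcZ htailμ
  -- the bound K₁
  set K₁ : ℝ := max K 1 with hK₁def
  have hK₁1 : (1:ℝ) ≤ K₁ := le_max_right _ _
  have hK₁pos : (0:ℝ) < K₁ := lt_of_lt_of_le one_pos hK₁1
  have hWK₁ : ∀ᵐ ω ∂P, |W ω| ≤ K₁ := hK.mono fun ω h => le_trans h (le_max_left _ _)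
  -- kernel support
  have hBmeas : MeasurableSet {w : ℝ | K₁ < |w|} :=
    measurableSet_lt measurable_const measurable_abs
  have hκB : ∀ᵐ z ∂μ, κ z {w : ℝ | K₁ < |w|} = 0 := by
    have h0 : (μ.compProd κ) (univ ×ˢ {w : ℝ | K₁ < |w|}) = 0 := by
      rw [← hjoint, Measure.map_apply (hZmeas.prodMk hWmeas)
        (MeasurableSet.univ.prod hBmeas)]
      have hpre : (fun ω => (Z ω, W ω)) ⁻¹' (univ ×ˢ {w : ℝ | K₁ < |w|})
          = {ω | ¬ |W ω| ≤ K₁} := by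
        ext ω; simp [Set.mem_prod, not_le]
      rw [hpre]
      exact ae_iff.1 hWK₁
    rw [Measure.compProd_apply (MeasurableSet.univ.prod hBmeas)] at h0
    have h1 : ∀ᵐ z ∂μ, κ z (Prod.mk z ⁻¹' (univ ×ˢ {w : ℝ | K₁ < |w|})) = 0 :=
      (lintegral_eq_zero_iff (Kernel.measurable_kernel_prodMk_left
        (MeasurableSet.univ.prod hBmeas))).1 h0
    refine h1.mono fun z hz => ?_
    have : Prod.mk z ⁻¹' (univ ×ˢ {w : ℝ | K₁ < |w|}) = {w : ℝ | K₁ < |w|} := by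
      ext w; simp [Set.mem_prod]
    rwa [this] at hz
  -- ν is supported in [-K₁, K₁]
  have hν1 : νinf (Ioi K₁) = 0 := by
    have hae : ∀ᵐ z ∂μ, κ z (Iic K₁) = 1 := by
      refine hκB.mono fun z hz => ?_
      have hIoi : κ z (Ioi K₁) = 0 := by
        refine le_antisymm (le_trans (measure_mono fun w hw => ?_) hz.le) (zero_le)
        have hw' : K₁ < w := hw
        simp only [mem_setOf_eq, abs_of_pos (lt_trans hK₁pos hw')]
        exact hw'
      have hc := prob_compl_eq_one_sub (μ := κ z) (measurableSet_Iic (a := K₁))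
      rw [compl_Iic, hIoi] at hc
      have h1le : (1:ℝ≥0∞) ≤ κ z (Iic K₁) := by
        rwa [eq_comm, tsub_eq_zero_iff_le] at hc
      exact le_antisymm prob_le_one h1le
    have h := nu_id κ νinf hpos hκconv (r := 1) ENNReal.one_ne_top hae
    rw [← compl_Iic, prob_compl_eq_one_sub measurableSet_Iic, h, tsub_self]
  have hν2 : νinf (Iio (-K₁)) = 0 := by
    have hIicy : ∀ y : ℝ, y < -K₁ → νinf (Iic y) = 0 := by
      intro y hy
      refine nu_id κ νinf hpos hκconv (r := 0) (by simp) ?_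
      refine hκB.mono fun z hz => ?_
      refine le_antisymm (le_trans (measure_mono fun w hw => ?_) hz.le) (zero_le)
      have hw' : w ≤ y := hw
      have hwneg : w < 0 := by nlinarith
      simp only [mem_setOf_eq, abs_of_neg hwneg]
      nlinarith
    have hsub : Iio (-K₁) ⊆ ⋃ n : ℕ, Iic (-K₁ - ((n:ℝ) + 1)⁻¹) := by
      intro y hy
      have hy' : (0:ℝ) < -K₁ - y := by simp only [mem_Iio] at hy; linarith
      obtain ⟨n, hn⟩ := exists_nat_one_div_lt hy'
      refine mem_iUnion.2 ⟨n, ?_⟩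
      simp only [mem_Iic]
      rw [one_div] at hn
      linarith
    refine le_antisymm (le_trans (measure_mono hsub) ?_) (zero_le)
    have h0 : ∀ n : ℕ, νinf (Iic (-K₁ - ((n:ℝ) + 1)⁻¹)) = 0 := by
      intro n
      refine hIicy _ ?_
      have : (0:ℝ) < ((n:ℝ) + 1)⁻¹ := by positivity
      linarith
    rw [measure_iUnion_null h0]
  constructor
  · -- positive tail
    have hS1 : ∀ x : ℝ, MeasurableSet {p : ℝ × ℝ | x < p.2 * p.1} := fun x =>
      measurableSet_lt measurable_const (measurable_snd.mul measurable_fst)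
    have hI : ∀ x : ℝ, (P {ω | x < W ω * Z ω}).toReal
        = ∫ z, ((κ z) {w | x < w * z}).toReal ∂μ := by
      intro x
      have h1 : P {ω | x < W ω * Z ω} = (μ.compProd κ) {p : ℝ × ℝ | x < p.2 * p.1} := by
        rw [← hjoint, Measure.map_apply (hZmeas.prodMk hWmeas) (hS1 x)]
        rfl
      rw [h1, Measure.compProd_apply (hS1 x)]
      exact (integral_toReal (Kernel.measurable_kernel_prodMk_left (hS1 x)).aemeasurable
        (ae_of_all _ fun z => measure_lt_top _ _)).symm
    have hint1 : ∀ x : ℝ, Integrable (fun z => ((κ z) {w | x < w * z}).toReal) μ := by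
      intro x
      refine (integrable_const (1:ℝ)).mono'
        ((Kernel.measurable_kernel_prodMk_left (hS1 x)).ennreal_toReal).aestronglyMeasurable
        (ae_of_all _ fun z => ?_)
      rw [Real.norm_eq_abs, abs_of_nonneg ENNReal.toReal_nonneg]
      exact toReal_prob_le_one _ _
    have hint2 : ∀ x : ℝ, Integrable (fun z => (νinf {w | x < w * z}).toReal) μ := by
      intro x
      refine (integrable_const (1:ℝ)).mono'
        ((measurable_measure_prodMk_left (ν := νinf) (hS1 x)).ennreal_toReal).aestronglyMeasurable
        (ae_of_all _ fun z => ?_)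
      rw [Real.norm_eq_abs, abs_of_nonneg ENNReal.toReal_nonneg]
      exact toReal_prob_le_one _ _
    have hu : ∀ η > (0:ℝ), ∃ N : ℝ, ∀ x ≥ N,
        |(∫ z, ((κ z) {w | x < w * z}).toReal ∂μ) - ∫ z, (νinf {w | x < w * z}).toReal ∂μ|
          ≤ η * (μ (Ici (x / K₁))).toReal := by
      intro η hη
      obtain ⟨Nε, hNε⟩ := eventually_atTop.1
        ((NormedAddCommGroup.tendsto_nhds_zero.1 hκconv) η hη)
      refine ⟨max (Nε * K₁) 1, fun x hx => ?_⟩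
      have hx1 : (1:ℝ) ≤ x := le_trans (le_max_right _ _) hx
      have hx0 : (0:ℝ) < x := lt_of_lt_of_le one_pos hx1
      have hNεx : Nε ≤ x / K₁ := by
        rw [le_div_iff₀ hK₁pos]
        exact le_trans (le_max_left _ _) hx
      have hptwise : ∀ᵐ z ∂μ,
          |((κ z) {w | x < w * z}).toReal - (νinf {w | x < w * z}).toReal|
            ≤ indicator (Ici (x / K₁)) (fun _ => η) z := by
        filter_upwards [hzpos_ae, hκB] with z hz hzB
        by_cases hzx : z ∈ Ici (x / K₁)
        · rw [indicator_of_mem hzx]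
          have hsetκ : {w : ℝ | x < w * z} = Ioi (x / z) := by
            ext w; simp [mem_Ioi, div_lt_iff₀ hz]
          have e1 : ((κ z) (Ioi (x / z))).toReal = 1 - ((κ z) (Iic (x / z))).toReal := by
            rw [← compl_Iic, prob_compl_eq_one_sub measurableSet_Iic,
              ENNReal.toReal_sub_of_le prob_le_one ENNReal.one_ne_top, ENNReal.toReal_one]
          have e2 : (νinf (Ioi (x / z))).toReal = 1 - (νinf (Iic (x / z))).toReal := by
            rw [← compl_Iic, prob_compl_eq_one_sub measurableSet_Iic,
              ENNReal.toReal_sub_of_le prob_le_one ENNReal.one_ne_top, ENNReal.toReal_one]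
          rw [hsetκ, e1, e2]
          have heq : (1 - ((κ z) (Iic (x / z))).toReal) - (1 - (νinf (Iic (x / z))).toReal)
              = -((((κ z) (Iic (x / z))).toReal) - (νinf (Iic (x / z))).toReal) := by ring
          rw [heq, abs_neg]
          refine le_trans (abs_le_sup κ νinf z (x / z)) ?_
          refine le_of_lt (lt_of_le_of_lt (le_abs_self _) ?_)
          exact hNε z (le_trans hNεx hzx)
        · rw [indicator_of_notMem hzx]
          simp only [mem_Ici, not_le] at hzx
          have hKxz : K₁ < x / z := by
            rw [lt_div_iff₀ hz]
            calc K₁ * z = z * K₁ := mul_comm _ _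
              _ < x := (lt_div_iff₀ hK₁pos).1 hzx
          have hsub : {w : ℝ | x < w * z} ⊆ {w : ℝ | K₁ < |w|} := by
            intro w hw
            have hw' : x < w * z := hw
            have hxw : x / z < w := (div_lt_iff₀ hz).2 hw'
            have hwpos : 0 < w := lt_trans (lt_trans hK₁pos hKxz) hxw
            simp only [mem_setOf_eq, abs_of_pos hwpos]
            linarith
          have hκ0 : (κ z) {w | x < w * z} = 0 :=
            le_antisymm (le_trans (measure_mono hsub) hzB.le) (zero_le)
          have hν0 : νinf {w | x < w * z} = 0 := by
            refine le_antisymm (le_trans (measure_mono ?_) hν1.le) (zero_le)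
            intro w hw
            have hxw : x / z < w := (div_lt_iff₀ hz).2 hw
            exact lt_trans hKxz hxw
          rw [hκ0, hν0]
          simp
      calc |(∫ z, ((κ z) {w | x < w * z}).toReal ∂μ)
            - ∫ z, (νinf {w | x < w * z}).toReal ∂μ|
          = |∫ z, (((κ z) {w | x < w * z}).toReal - (νinf {w | x < w * z}).toReal) ∂μ| := by
            rw [integral_sub (hint1 x) (hint2 x)]
        _ ≤ ∫ z, |((κ z) {w | x < w * z}).toReal - (νinf {w | x < w * z}).toReal| ∂μ := by
            have := norm_integral_le_integral_norm (μ := μ)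
              (fun z => ((κ z) {w | x < w * z}).toReal - (νinf {w | x < w * z}).toReal)
            simpa [Real.norm_eq_abs] using this
        _ ≤ ∫ z, indicator (Ici (x / K₁)) (fun _ => η) z ∂μ :=
            integral_mono_ae ((hint1 x).sub (hint2 x)).abs
              ((integrable_const η).indicator measurableSet_Ici) hptwise
        _ = η * (μ (Ici (x / K₁))).toReal := by
            rw [integral_indicator_const _ measurableSet_Ici, smul_eq_mul, mul_comm, measureReal_def]
    have hmain := main_pos (ν := νinf) hα0 hK₁pos hcZ hμ0 htailμ hν1
    have herr := err hK₁pos hcZ htailIci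
      (fun x => (∫ z, ((κ z) {w | x < w * z}).toReal ∂μ)
        - ∫ z, (νinf {w | x < w * z}).toReal ∂μ) hu
    have hsum := hmain.add herr
    rw [add_zero] at hsum
    refine hsum.congr fun x => ?_
    rw [hI x]
    ring
  · -- negative tail
    have hS2 : ∀ x : ℝ, MeasurableSet {p : ℝ × ℝ | p.2 * p.1 ≤ -x} := fun x =>
      measurableSet_le (measurable_snd.mul measurable_fst) measurable_const
    have hI : ∀ x : ℝ, (P {ω | W ω * Z ω ≤ -x}).toReal
        = ∫ z, ((κ z) {w | w * z ≤ -x}).toReal ∂μ := by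
      intro x
      have h1 : P {ω | W ω * Z ω ≤ -x} = (μ.compProd κ) {p : ℝ × ℝ | p.2 * p.1 ≤ -x} := by
        rw [← hjoint, Measure.map_apply (hZmeas.prodMk hWmeas) (hS2 x)]
        rfl
      rw [h1, Measure.compProd_apply (hS2 x)]
      exact (integral_toReal (Kernel.measurable_kernel_prodMk_left (hS2 x)).aemeasurable
        (ae_of_all _ fun z => measure_lt_top _ _)).symm
    have hint1 : ∀ x : ℝ, Integrable (fun z => ((κ z) {w | w * z ≤ -x}).toReal) μ := by
      intro x
      refine (integrable_const (1:ℝ)).mono'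
        ((Kernel.measurable_kernel_prodMk_left (hS2 x)).ennreal_toReal).aestronglyMeasurable
        (ae_of_all _ fun z => ?_)
      rw [Real.norm_eq_abs, abs_of_nonneg ENNReal.toReal_nonneg]
      exact toReal_prob_le_one _ _
    have hint2 : ∀ x : ℝ, Integrable (fun z => (νinf {w | w * z ≤ -x}).toReal) μ := by
      intro x
      refine (integrable_const (1:ℝ)).mono'
        ((measurable_measure_prodMk_left (ν := νinf) (hS2 x)).ennreal_toReal).aestronglyMeasurable
        (ae_of_all _ fun z => ?_)
      rw [Real.norm_eq_abs, abs_of_nonneg ENNReal.toReal_nonneg]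
      exact toReal_prob_le_one _ _
    have hu : ∀ η > (0:ℝ), ∃ N : ℝ, ∀ x ≥ N,
        |(∫ z, ((κ z) {w | w * z ≤ -x}).toReal ∂μ)
            - ∫ z, (νinf {w | w * z ≤ -x}).toReal ∂μ|
          ≤ η * (μ (Ici (x / K₁))).toReal := by
      intro η hη
      obtain ⟨Nε, hNε⟩ := eventually_atTop.1
        ((NormedAddCommGroup.tendsto_nhds_zero.1 hκconv) η hη)
      refine ⟨max (Nε * K₁) 1, fun x hx => ?_⟩
      have hx1 : (1:ℝ) ≤ x := le_trans (le_max_right _ _) hx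
      have hx0 : (0:ℝ) < x := lt_of_lt_of_le one_pos hx1
      have hNεx : Nε ≤ x / K₁ := by
        rw [le_div_iff₀ hK₁pos]
        exact le_trans (le_max_left _ _) hx
      have hptwise : ∀ᵐ z ∂μ,
          |((κ z) {w | w * z ≤ -x}).toReal - (νinf {w | w * z ≤ -x}).toReal|
            ≤ indicator (Ici (x / K₁)) (fun _ => η) z := by
        filter_upwards [hzpos_ae, hκB] with z hz hzB
        by_cases hzx : z ∈ Ici (x / K₁)
        · rw [indicator_of_mem hzx]
          have hsetκ : {w : ℝ | w * z ≤ -x} = Iic (-x / z) := by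
            ext w; simp [mem_Iic, le_div_iff₀ hz]
          rw [hsetκ]
          refine le_trans (abs_le_sup κ νinf z (-x / z)) ?_
          refine le_of_lt (lt_of_le_of_lt (le_abs_self _) ?_)
          exact hNε z (le_trans hNεx hzx)
        · rw [indicator_of_notMem hzx]
          simp only [mem_Ici, not_le] at hzx
          have hKxz : K₁ < x / z := by
            rw [lt_div_iff₀ hz]
            calc K₁ * z = z * K₁ := mul_comm _ _
              _ < x := (lt_div_iff₀ hK₁pos).1 hzx
          have hwle : ∀ w : ℝ, w * z ≤ -x → w < -K₁ := by
            intro w hw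
            have h1 : w ≤ -x / z := (le_div_iff₀ hz).2 hw
            have h2 : -x / z = -(x / z) := by ring
            rw [h2] at h1
            linarith
          have hsub : {w : ℝ | w * z ≤ -x} ⊆ {w : ℝ | K₁ < |w|} := by
            intro w hw
            have hw' := hwle w hw
            have hwneg : w < 0 := by linarith
            simp only [mem_setOf_eq, abs_of_neg hwneg]
            linarith
          have hκ0 : (κ z) {w | w * z ≤ -x} = 0 :=
            le_antisymm (le_trans (measure_mono hsub) hzB.le) (zero_le)
          have hν0 : νinf {w | w * z ≤ -x} = 0 := by
            refine le_antisymm (le_trans (measure_mono ?_) hν2.le) (zero_le)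
            exact fun w hw => hwle w hw
          rw [hκ0, hν0]
          simp
      calc |(∫ z, ((κ z) {w | w * z ≤ -x}).toReal ∂μ)
            - ∫ z, (νinf {w | w * z ≤ -x}).toReal ∂μ|
          = |∫ z, (((κ z) {w | w * z ≤ -x}).toReal - (νinf {w | w * z ≤ -x}).toReal) ∂μ| := by
            rw [integral_sub (hint1 x) (hint2 x)]
        _ ≤ ∫ z, |((κ z) {w | w * z ≤ -x}).toReal - (νinf {w | w * z ≤ -x}).toReal| ∂μ := by
            have := norm_integral_le_integral_norm (μ := μ)
              (fun z => ((κ z) {w | w * z ≤ -x}).toReal - (νinf {w | w * z ≤ -x}).toReal)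
            simpa [Real.norm_eq_abs] using this
        _ ≤ ∫ z, indicator (Ici (x / K₁)) (fun _ => η) z ∂μ :=
            integral_mono_ae ((hint1 x).sub (hint2 x)).abs
              ((integrable_const η).indicator measurableSet_Ici) hptwise
        _ = η * (μ (Ici (x / K₁))).toReal := by
            rw [integral_indicator_const _ measurableSet_Ici, smul_eq_mul, mul_comm, measureReal_def]
    have hmain := main_neg (ν := νinf) hα0 hK₁pos hcZ hμ0 htailIci hν2
    have herr := err hK₁pos hcZ htailIci
      (fun x => (∫ z, ((κ z) {w | w * z ≤ -x}).toReal ∂μ)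
        - ∫ z, (νinf {w | w * z ≤ -x}).toReal ∂μ) hu
    have hsum := hmain.add herr
    rw [add_zero] at hsum
    refine hsum.congr fun x => ?_
    rw [hI x]
    ring
end

section
/- Let A > 0 and R > 0 be independent random variables on a common probability space satisfying lim_{r→∞} r^ρ P(R > r) = c_ρ and lim_{a→0+} a^{−κ} P(A ≤ a) = c_κ, where ρ > 0, κ > 0, c_ρ > 0, c_κ > 0 and 1 < ρ + κ < 2. Then lim_{t→∞} t^{ρ+κ−1} ∫_0^∞ P(R > u + t) · E[ e^{−A(2u+t)} ] du = Γ(κ+1) c_κ c_ρ ∫_0^∞ (1+z)^{−ρ} (1+2z)^{−κ} dz, and both integrals are finite. -/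
open MeasureTheory ProbabilityTheory Filter Set
open scoped Topology ENNReal

section stmt9aux
variable {Ω : Type*} [MeasurableSpace Ω]


lemma stmt9_laplace_eq (P : Measure Ω) [IsProbabilityMeasure P]
    (A : Ω → ℝ) (hAmeas : Measurable A) (hApos : ∀ᵐ ω ∂P, 0 < A ω)
    {s : ℝ} (hs : 0 < s) :
    ∫ ω, Real.exp (-(A ω) * s) ∂P
      = ∫ x in Ioi (0:ℝ), Real.exp (-x) * (P {ω | A ω ≤ x / s}).toReal := by
  set ν := volume.restrict (Ioi (0:ℝ)) with hν
  set k : Ω × ℝ → ℝ≥0∞ :=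
    fun p => {p : Ω × ℝ | s * A p.1 ≤ p.2}.indicator
      (fun q => ENNReal.ofReal (Real.exp (-q.2))) p with hk
  have hSmeas : MeasurableSet {p : Ω × ℝ | s * A p.1 ≤ p.2} :=
    measurableSet_le (measurable_const.mul (hAmeas.comp measurable_fst)) measurable_snd
  have hkmeas : Measurable k :=
    ((ENNReal.measurable_ofReal.comp (Real.measurable_exp.comp measurable_snd.neg))).indicator
      hSmeas
  -- monotone cdf-like function
  have hmono : Monotone (fun x : ℝ => (P {ω | A ω ≤ x / s}).toReal) := by
    intro x y hxy
    refine ENNReal.toReal_mono (measure_ne_top _ _) (measure_mono (fun ω hω => ?_))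
    simp only [mem_setOf_eq] at hω ⊢
    exact hω.trans (by gcongr)
  -- step 1 : pointwise identity in ω
  have step1 : ∀ᵐ ω ∂P,
      (∫⁻ x, k (ω, x) ∂ν) = ENNReal.ofReal (Real.exp (-(A ω) * s)) := by
    filter_upwards [hApos] with ω hω
    have hc : 0 < s * A ω := mul_pos hs hω
    have hkx : ∀ x : ℝ, k (ω, x)
        = (Ici (s * A ω)).indicator (fun x => ENNReal.ofReal (Real.exp (-x))) x := by
      intro x
      simp only [hk]
      by_cases h : s * A ω ≤ x
      · simp [Set.indicator_apply, mem_Ici, h]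
      · simp [Set.indicator_apply, mem_Ici, h]
    simp_rw [hkx]
    rw [hν, lintegral_indicator measurableSet_Ici, Measure.restrict_restrict measurableSet_Ici]
    have hinter : Ici (s * A ω) ∩ Ioi 0 = Ici (s * A ω) :=
      inter_eq_left.mpr (fun x hx => lt_of_lt_of_le hc hx)
    rw [hinter]
    have hIoi : ∫⁻ x in Ioi (s * A ω), ENNReal.ofReal (Real.exp (-x))
        = ENNReal.ofReal (Real.exp (-(s * A ω))) := by
      rw [← ofReal_integral_eq_lintegral_ofReal]
      · rw [integral_exp_neg_Ioi]
      · exact (by simpa using exp_neg_integrableOn_Ioi (s * A ω) one_pos :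
          IntegrableOn (fun x : ℝ => Real.exp (-x)) (Ioi (s * A ω)))
      · exact ae_of_all _ fun x => (Real.exp_pos _).le
    rw [setLIntegral_congr Ioi_ae_eq_Ici.symm, hIoi]
    ring_nf
  -- step 2 : swap
  have inner : ∀ x : ℝ, (∫⁻ ω, k (ω, x) ∂P)
      = ENNReal.ofReal (Real.exp (-x)) * P {ω | A ω ≤ x / s} := by
    intro x
    have hset : {ω | A ω ≤ x / s} = {ω | s * A ω ≤ x} := by
      ext ω; simp only [mem_setOf_eq, le_div_iff₀ hs, mul_comm]
    have hkω : ∀ ω : Ω, k (ω, x)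
        = {ω : Ω | s * A ω ≤ x}.indicator (fun _ => ENNReal.ofReal (Real.exp (-x))) ω := by
      intro ω
      simp only [hk]
      by_cases h : s * A ω ≤ x
      · simp [Set.indicator_apply, h]
      · simp [Set.indicator_apply, h]
    simp_rw [hkω]
    rw [lintegral_indicator (measurableSet_le (measurable_const.mul hAmeas) measurable_const :
        MeasurableSet {ω : Ω | s * A ω ≤ x}),
      setLIntegral_const, hset]
  have swap : (∫⁻ ω, ∫⁻ x, k (ω, x) ∂ν ∂P) = ∫⁻ x, ∫⁻ ω, k (ω, x) ∂P ∂ν :=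
    lintegral_lintegral_swap hkmeas.aemeasurable
  -- assemble
  have lhs_eq : ∫ ω, Real.exp (-(A ω) * s) ∂P
      = (∫⁻ ω, ENNReal.ofReal (Real.exp (-(A ω) * s)) ∂P).toReal := by
    rw [integral_eq_lintegral_of_nonneg_ae (f := fun ω => Real.exp (-(A ω) * s))
      (ae_of_all _ fun ω => (Real.exp_pos _).le)
      ((Real.measurable_exp.comp (hAmeas.neg.mul measurable_const)).aestronglyMeasurable :
        AEStronglyMeasurable (fun ω => Real.exp (-(A ω) * s)) P)]
  have rhs_meas : Measurable fun x : ℝ => Real.exp (-x) * (P {ω | A ω ≤ x / s}).toReal :=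
    (Real.measurable_exp.comp measurable_neg).mul hmono.measurable
  have rhs_eq : ∫ x in Ioi (0:ℝ), Real.exp (-x) * (P {ω | A ω ≤ x / s}).toReal
      = (∫⁻ x, ENNReal.ofReal (Real.exp (-x) * (P {ω | A ω ≤ x / s}).toReal) ∂ν).toReal := by
    rw [hν, integral_eq_lintegral_of_nonneg_ae
      (ae_of_all _ fun x => mul_nonneg (Real.exp_pos _).le ENNReal.toReal_nonneg)
      rhs_meas.aestronglyMeasurable]
  have hofReal : ∀ x : ℝ, ENNReal.ofReal (Real.exp (-x) * (P {ω | A ω ≤ x / s}).toReal)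
      = ENNReal.ofReal (Real.exp (-x)) * P {ω | A ω ≤ x / s} := by
    intro x
    rw [ENNReal.ofReal_mul (Real.exp_pos _).le, ENNReal.ofReal_toReal (measure_ne_top _ _)]
  rw [lhs_eq, rhs_eq]
  congr 1
  rw [← lintegral_congr_ae step1, swap]
  simp_rw [inner, hofReal]


lemma stmt9_cdf_bound (P : Measure Ω) [IsProbabilityMeasure P] (A : Ω → ℝ)
    {κ c_κ : ℝ} (hκ : 0 < κ)
    (htailA : Tendsto (fun a : ℝ => a ^ (-κ) * (P {ω | A ω ≤ a}).toReal)
      (nhdsWithin 0 (Set.Ioi 0)) (nhds c_κ)) :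
    ∃ M : ℝ, 0 < M ∧ ∀ a : ℝ, 0 < a → (P {ω | A ω ≤ a}).toReal ≤ M * a ^ κ := by
  have h : ∀ᶠ a in nhdsWithin 0 (Set.Ioi 0),
      a ^ (-κ) * (P {ω | A ω ≤ a}).toReal ≤ c_κ + 1 :=
    htailA.eventually (eventually_le_nhds (lt_add_one c_κ))
  rw [eventually_nhdsWithin_iff] at h
  obtain ⟨ε, hε, hball⟩ := Metric.eventually_nhds_iff.mp h
  have hMpos : (0:ℝ) < max (c_κ + 1) (ε⁻¹ ^ κ) :=
    lt_max_iff.mpr (Or.inr (Real.rpow_pos_of_pos (by positivity) κ))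
  refine ⟨max (c_κ + 1) (ε⁻¹ ^ κ), hMpos, fun a ha => ?_⟩
  have haκ : (0:ℝ) ≤ a ^ κ := Real.rpow_nonneg ha.le κ
  rcases lt_or_ge a ε with hcase | hcase
  · have hb := hball (by simpa [abs_of_pos ha] using hcase) (mem_Ioi.mpr ha)
    have hpow : (P {ω | A ω ≤ a}).toReal
        = a ^ κ * (a ^ (-κ) * (P {ω | A ω ≤ a}).toReal) := by
      rw [← mul_assoc, ← Real.rpow_add ha, add_neg_cancel, Real.rpow_zero, one_mul]
    rw [hpow]
    calc a ^ κ * (a ^ (-κ) * (P {ω | A ω ≤ a}).toReal)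
        ≤ a ^ κ * (c_κ + 1) := mul_le_mul_of_nonneg_left hb haκ
      _ ≤ max (c_κ + 1) (ε⁻¹ ^ κ) * a ^ κ := by
          rw [mul_comm]
          exact mul_le_mul_of_nonneg_right (le_max_left _ _) haκ
  · have h1 : (P {ω | A ω ≤ a}).toReal ≤ 1 :=
      ENNReal.toReal_mono ENNReal.one_ne_top prob_le_one
    have h2 : (1:ℝ) ≤ ε⁻¹ ^ κ * a ^ κ := by
      rw [← Real.mul_rpow (by positivity) ha.le]
      refine Real.one_le_rpow ?_ hκ.le
      rw [← div_eq_inv_mul]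
      exact (one_le_div hε).mpr hcase
    calc (P {ω | A ω ≤ a}).toReal ≤ 1 := h1
      _ ≤ ε⁻¹ ^ κ * a ^ κ := h2
      _ ≤ max (c_κ + 1) (ε⁻¹ ^ κ) * a ^ κ :=
          mul_le_mul_of_nonneg_right (le_max_right _ _) haκ

lemma stmt9_tail_bound (P : Measure Ω) [IsProbabilityMeasure P] (R : Ω → ℝ)
    {ρ c_ρ : ℝ} (hρ : 0 < ρ)
    (htailR : Tendsto (fun r : ℝ => r ^ ρ * (P {ω | r < R ω}).toReal) atTop (nhds c_ρ)) :
    ∃ M : ℝ, 0 < M ∧ ∀ r : ℝ, 0 < r → (P {ω | r < R ω}).toReal ≤ M * r ^ (-ρ) := by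
  have h : ∀ᶠ r in atTop, r ^ ρ * (P {ω | r < R ω}).toReal ≤ c_ρ + 1 :=
    htailR.eventually (eventually_le_nhds (lt_add_one c_ρ))
  rw [eventually_atTop] at h
  obtain ⟨r0, hr0⟩ := h
  set r1 : ℝ := max r0 1 with hr1
  have hr1pos : (0:ℝ) < r1 := lt_of_lt_of_le one_pos (le_max_right _ _)
  have hMpos : (0:ℝ) < max (c_ρ + 1) (r1 ^ ρ) :=
    lt_max_iff.mpr (Or.inr (Real.rpow_pos_of_pos hr1pos ρ))
  refine ⟨max (c_ρ + 1) (r1 ^ ρ), hMpos, fun r hr => ?_⟩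
  have hrρ : (0:ℝ) ≤ r ^ (-ρ) := Real.rpow_nonneg hr.le _
  rcases le_or_gt r1 r with hcase | hcase
  · have hb := hr0 r (le_trans (le_max_left _ _) hcase)
    have hpow : (P {ω | r < R ω}).toReal
        = r ^ (-ρ) * (r ^ ρ * (P {ω | r < R ω}).toReal) := by
      rw [← mul_assoc, ← Real.rpow_add hr, neg_add_cancel, Real.rpow_zero, one_mul]
    rw [hpow]
    calc r ^ (-ρ) * (r ^ ρ * (P {ω | r < R ω}).toReal)
        ≤ r ^ (-ρ) * (c_ρ + 1) := mul_le_mul_of_nonneg_left hb hrρ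
      _ ≤ max (c_ρ + 1) (r1 ^ ρ) * r ^ (-ρ) := by
          rw [mul_comm]
          exact mul_le_mul_of_nonneg_right (le_max_left _ _) hrρ
  · have h1 : (P {ω | r < R ω}).toReal ≤ 1 :=
      ENNReal.toReal_mono ENNReal.one_ne_top prob_le_one
    have h2 : (1:ℝ) ≤ r1 ^ ρ * r ^ (-ρ) := by
      rw [Real.rpow_neg hr.le, ← Real.inv_rpow hr.le, ← Real.mul_rpow hr1pos.le (by positivity)]
      refine Real.one_le_rpow ?_ hρ.le
      rw [← div_eq_mul_inv]
      exact (one_le_div hr).mpr hcase.le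
    calc (P {ω | r < R ω}).toReal ≤ 1 := h1
      _ ≤ r1 ^ ρ * r ^ (-ρ) := h2
      _ ≤ max (c_ρ + 1) (r1 ^ ρ) * r ^ (-ρ) :=
          mul_le_mul_of_nonneg_right (le_max_right _ _) hrρ



lemma stmt9_gamma_int {κ : ℝ} (hκ : 0 < κ) :
    IntegrableOn (fun x : ℝ => Real.exp (-x) * x ^ κ) (Ioi 0) := by
  have := Real.GammaIntegral_convergent (by linarith : (0:ℝ) < κ + 1)
  simpa [add_sub_cancel_right] using this

lemma stmt9_gamma_val {κ : ℝ} (hκ : 0 < κ) :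
    ∫ x in Ioi (0:ℝ), Real.exp (-x) * x ^ κ = Real.Gamma (κ + 1) := by
  rw [Real.Gamma_eq_integral (by linarith : (0:ℝ) < κ + 1)]
  simp [add_sub_cancel_right]

lemma stmt9_cdf_mono (P : Measure Ω) [IsProbabilityMeasure P] (A : Ω → ℝ)
    {s : ℝ} (hs : 0 < s) :
    Monotone (fun x : ℝ => (P {ω | A ω ≤ x / s}).toReal) := by
  intro x y hxy
  refine ENNReal.toReal_mono (measure_ne_top _ _) (measure_mono (fun ω hω => ?_))
  simp only [mem_setOf_eq] at hω ⊢
  exact hω.trans (by gcongr)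

lemma stmt9_F_bound (P : Measure Ω) [IsProbabilityMeasure P]
    (A : Ω → ℝ) (hAmeas : Measurable A) (hApos : ∀ᵐ ω ∂P, 0 < A ω)
    {κ M : ℝ} (hκ : 0 < κ) (hM : 0 < M)
    (hMa : ∀ a : ℝ, 0 < a → (P {ω | A ω ≤ a}).toReal ≤ M * a ^ κ)
    {s : ℝ} (hs : 0 < s) :
    ∫ ω, Real.exp (-(A ω) * s) ∂P ≤ M * Real.Gamma (κ + 1) * s ^ (-κ) := by
  rw [stmt9_laplace_eq P A hAmeas hApos hs]
  have hint : IntegrableOn (fun x : ℝ => M * s ^ (-κ) * (Real.exp (-x) * x ^ κ)) (Ioi 0) :=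
    (stmt9_gamma_int hκ).const_mul _
  have hmono : ∀ᵐ x ∂(volume.restrict (Ioi (0:ℝ))),
      Real.exp (-x) * (P {ω | A ω ≤ x / s}).toReal
        ≤ M * s ^ (-κ) * (Real.exp (-x) * x ^ κ) := by
    rw [ae_restrict_iff' measurableSet_Ioi]
    refine ae_of_all _ fun x hx => ?_
    have hxs : 0 < x / s := div_pos hx hs
    calc Real.exp (-x) * (P {ω | A ω ≤ x / s}).toReal
        ≤ Real.exp (-x) * (M * (x / s) ^ κ) :=
          mul_le_mul_of_nonneg_left (hMa _ hxs) (Real.exp_pos _).le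
      _ = M * s ^ (-κ) * (Real.exp (-x) * x ^ κ) := by
          rw [Real.div_rpow hx.le hs.le, Real.rpow_neg hs.le]
          ring
  have h := integral_mono_of_nonneg
    (ae_of_all _ fun x => mul_nonneg (Real.exp_pos _).le ENNReal.toReal_nonneg) hint hmono
  calc ∫ x in Ioi (0:ℝ), Real.exp (-x) * (P {ω | A ω ≤ x / s}).toReal
      ≤ ∫ x in Ioi (0:ℝ), M * s ^ (-κ) * (Real.exp (-x) * x ^ κ) := h
    _ = M * Real.Gamma (κ + 1) * s ^ (-κ) := by
        rw [integral_const_mul, stmt9_gamma_val hκ]; ring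

lemma stmt9_abelian (P : Measure Ω) [IsProbabilityMeasure P]
    (A : Ω → ℝ) (hAmeas : Measurable A) (hApos : ∀ᵐ ω ∂P, 0 < A ω)
    {κ c_κ : ℝ} (hκ : 0 < κ)
    (htailA : Tendsto (fun a : ℝ => a ^ (-κ) * (P {ω | A ω ≤ a}).toReal)
      (nhdsWithin 0 (Set.Ioi 0)) (nhds c_κ))
    {M : ℝ} (hM : 0 < M)
    (hMa : ∀ a : ℝ, 0 < a → (P {ω | A ω ≤ a}).toReal ≤ M * a ^ κ) :
    Tendsto (fun s : ℝ => s ^ κ * ∫ ω, Real.exp (-(A ω) * s) ∂P) atTop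
      (𝓝 (Real.Gamma (κ + 1) * c_κ)) := by
  set Φ : ℝ → ℝ → ℝ :=
    fun s x => s ^ κ * (Real.exp (-x) * (P {ω | A ω ≤ x / s}).toReal) with hΦ
  have hmeas : ∀ᶠ s : ℝ in atTop,
      AEStronglyMeasurable (Φ s) (volume.restrict (Ioi (0:ℝ))) := by
    filter_upwards [eventually_gt_atTop (0:ℝ)] with s hs
    exact ((measurable_const.mul ((Real.measurable_exp.comp measurable_neg).mul
      (stmt9_cdf_mono P A hs).measurable))).aestronglyMeasurable
  have hbound_int : Integrable (fun x : ℝ => M * (Real.exp (-x) * x ^ κ))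
      (volume.restrict (Ioi (0:ℝ))) := (stmt9_gamma_int hκ).const_mul _
  have hb : ∀ᶠ s : ℝ in atTop, ∀ᵐ x ∂(volume.restrict (Ioi (0:ℝ))),
      ‖Φ s x‖ ≤ M * (Real.exp (-x) * x ^ κ) := by
    filter_upwards [eventually_gt_atTop (0:ℝ)] with s hs
    rw [ae_restrict_iff' measurableSet_Ioi]
    refine ae_of_all _ fun x hx => ?_
    have hxs : 0 < x / s := div_pos hx hs
    have hnn : 0 ≤ Φ s x := by
      refine mul_nonneg (Real.rpow_nonneg hs.le _)
        (mul_nonneg (Real.exp_pos _).le ENNReal.toReal_nonneg)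
    rw [Real.norm_eq_abs, abs_of_nonneg hnn]
    have hsκ : (0:ℝ) < s ^ κ := Real.rpow_pos_of_pos hs κ
    calc Φ s x ≤ s ^ κ * (Real.exp (-x) * (M * (x / s) ^ κ)) := by
          refine mul_le_mul_of_nonneg_left
            (mul_le_mul_of_nonneg_left (hMa _ hxs) (Real.exp_pos _).le) hsκ.le
      _ = M * (Real.exp (-x) * x ^ κ) := by
          rw [Real.div_rpow hx.le hs.le]
          field_simp
  have hlim : ∀ᵐ x ∂(volume.restrict (Ioi (0:ℝ))),
      Tendsto (fun s : ℝ => Φ s x) atTop (𝓝 (c_κ * (Real.exp (-x) * x ^ κ))) := by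
    rw [ae_restrict_iff' measurableSet_Ioi]
    refine ae_of_all _ fun x hx => ?_
    have h1 : Tendsto (fun s : ℝ => x / s) atTop (𝓝[>] 0) := by
      rw [tendsto_nhdsWithin_iff]
      constructor
      · exact tendsto_const_nhds.div_atTop tendsto_id
      · filter_upwards [eventually_gt_atTop (0:ℝ)] with s hs
        exact mem_Ioi.mpr (div_pos hx hs)
    have h2 := htailA.comp h1
    have h3 := h2.const_mul (Real.exp (-x) * x ^ κ)
    have heq : ∀ᶠ s : ℝ in atTop,
        Real.exp (-x) * x ^ κ * ((x / s) ^ (-κ) * (P {ω | A ω ≤ x / s}).toReal)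
          = Φ s x := by
      filter_upwards [eventually_gt_atTop (0:ℝ)] with s hs
      have hxκ : (0:ℝ) < x ^ κ := Real.rpow_pos_of_pos hx κ
      have hsκ : (0:ℝ) < s ^ κ := Real.rpow_pos_of_pos hs κ
      rw [hΦ]
      simp only
      rw [Real.rpow_neg (div_pos hx hs).le, Real.div_rpow hx.le hs.le]
      field_simp
      ring_nf
      simp only [mul_comm]
    refine Tendsto.congr' heq ?_
    convert h3 using 2
    case e'_3 =>
      simp only [Function.comp_apply]
    ring
  have hDCT := tendsto_integral_filter_of_dominated_convergence
    (fun x => M * (Real.exp (-x) * x ^ κ)) hmeas hb hbound_int hlim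
  have hval : ∫ x in Ioi (0:ℝ), c_κ * (Real.exp (-x) * x ^ κ)
      = Real.Gamma (κ + 1) * c_κ := by
    rw [integral_const_mul, stmt9_gamma_val hκ]; ring
  rw [hval] at hDCT
  refine Tendsto.congr' ?_ hDCT
  filter_upwards [eventually_gt_atTop (0:ℝ)] with s hs
  rw [stmt9_laplace_eq P A hAmeas hApos hs, ← integral_const_mul]

end stmt9aux

lemma stmt9_shift_integrable {p t : ℝ} (hp : 1 < p) (ht : 0 < t) :
    IntegrableOn (fun u : ℝ => (u + t) ^ (-p)) (Ioi 0) := by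
  have h1 : IntegrableOn (fun x : ℝ => x ^ (-p)) (Ioi t) :=
    integrableOn_Ioi_rpow_of_lt (by linarith) ht
  have hmp : MeasurePreserving (fun u : ℝ => u + t) volume volume :=
    measurePreserving_add_right volume t
  have hemb : MeasurableEmbedding (fun u : ℝ => u + t) :=
    (Homeomorph.addRight (t:ℝ)).measurableEmbedding
  have hpre : (fun u : ℝ => u + t) ⁻¹' Ioi t = Ioi 0 := by
    ext u; simp [mem_Ioi]
  have := (hmp.integrableOn_comp_preimage hemb).mpr h1
  rw [hpre] at this
  exact this

lemma stmt9_weight_integrable {ρ κ : ℝ} (hρ : 0 < ρ) (hκ : 0 < κ) (hsum1 : 1 < ρ + κ) :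
    IntegrableOn (fun z : ℝ => (1 + z) ^ (-ρ) * (1 + 2 * z) ^ (-κ)) (Set.Ioi 0) := by
  have hmaj : IntegrableOn (fun z : ℝ => (z + 1) ^ (-(ρ + κ))) (Ioi 0) :=
    stmt9_shift_integrable hsum1 one_pos
  have hmeas : AEStronglyMeasurable (fun z : ℝ => (1 + z) ^ (-ρ) * (1 + 2 * z) ^ (-κ))
      (volume.restrict (Ioi (0:ℝ))) := by
    have h1 : AntitoneOn (fun z : ℝ => (1 + z) ^ (-ρ)) (Ioi 0) := by
      intro a ha b hb hab
      exact Real.rpow_le_rpow_of_nonpos (by simp only [mem_Ioi] at ha; linarith)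
        (by linarith) (by linarith)
    have h2 : AntitoneOn (fun z : ℝ => (1 + 2 * z) ^ (-κ)) (Ioi 0) := by
      intro a ha b hb hab
      exact Real.rpow_le_rpow_of_nonpos (by simp only [mem_Ioi] at ha; linarith)
        (by linarith) (by linarith)
    exact ((aemeasurable_restrict_of_antitoneOn measurableSet_Ioi h1).mul
      (aemeasurable_restrict_of_antitoneOn measurableSet_Ioi h2)).aestronglyMeasurable
  refine Integrable.mono' hmaj hmeas ?_
  rw [ae_restrict_iff' measurableSet_Ioi]
  refine ae_of_all _ fun z hz => ?_
  rw [mem_Ioi] at hz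
  have h1z : (0:ℝ) < 1 + z := by linarith
  have h2z : (0:ℝ) < 1 + 2 * z := by linarith
  have hnn : 0 ≤ (1 + z) ^ (-ρ) * (1 + 2 * z) ^ (-κ) :=
    mul_nonneg (Real.rpow_nonneg h1z.le _) (Real.rpow_nonneg h2z.le _)
  rw [Real.norm_eq_abs, abs_of_nonneg hnn]
  calc (1 + z) ^ (-ρ) * (1 + 2 * z) ^ (-κ)
      ≤ (1 + z) ^ (-ρ) * (1 + z) ^ (-κ) := by
        refine mul_le_mul_of_nonneg_left ?_ (Real.rpow_nonneg h1z.le _)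
        exact Real.rpow_le_rpow_of_nonpos h1z (by linarith) (by linarith)
    _ = (z + 1) ^ (-(ρ + κ)) := by
        rw [← Real.rpow_add h1z, neg_add, add_comm 1 z]

lemma stmt9_exp_integrable {Ω : Type*} [MeasurableSpace Ω] (P : Measure Ω)
    [IsProbabilityMeasure P] (A : Ω → ℝ) (hAmeas : Measurable A)
    (hApos : ∀ᵐ ω ∂P, 0 < A ω) {s : ℝ} (hs : 0 < s) :
    Integrable (fun ω => Real.exp (-(A ω) * s)) P := by
  refine Integrable.mono' (integrable_const 1)
    (Real.measurable_exp.comp (hAmeas.neg.mul measurable_const)).aestronglyMeasurable ?_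
  filter_upwards [hApos] with ω hω
  rw [Real.norm_eq_abs, abs_of_pos (Real.exp_pos _)]
  exact Real.exp_le_one_iff.mpr (by nlinarith)

/-- covariance asymptotics for the exponentially damped pulse. Let `A > 0`
and `R > 0` be independent with `r^ρ P(R > r) → c_ρ` (`r → ∞`) and
`a^{-κ} P(A ≤ a) → c_κ` (`a → 0+`), where `ρ, κ > 0`, `c_ρ, c_κ > 0`, `1 < ρ+κ < 2`. Then
`t^{ρ+κ-1} ∫_0^∞ P(R > u+t) E[e^{-A(2u+t)}] du
  → Γ(κ+1) c_κ c_ρ ∫_0^∞ (1+z)^{-ρ} (1+2z)^{-κ} dz`, and both integrals are finite. -/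
theorem stmt_9 {Ω : Type*} [MeasurableSpace Ω] (P : Measure Ω) [IsProbabilityMeasure P]
    (A R : Ω → ℝ) (hAmeas : Measurable A) (hRmeas : Measurable R)
    (hApos : ∀ᵐ ω ∂P, 0 < A ω) (hRpos : ∀ᵐ ω ∂P, 0 < R ω)
    (hindep : IndepFun A R P)
    (ρ κ c_ρ c_κ : ℝ) (hρ : 0 < ρ) (hκ : 0 < κ) (hcρ : 0 < c_ρ) (hcκ : 0 < c_κ)
    (hsum1 : 1 < ρ + κ) (hsum2 : ρ + κ < 2)
    (htailR : Tendsto (fun r : ℝ => r ^ ρ * (P {ω | r < R ω}).toReal) atTop (nhds c_ρ))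
    (htailA : Tendsto (fun a : ℝ => a ^ (-κ) * (P {ω | A ω ≤ a}).toReal)
      (nhdsWithin 0 (Set.Ioi 0)) (nhds c_κ)) :
    (∀ t > (0:ℝ), IntegrableOn
        (fun u : ℝ => (P {ω | u + t < R ω}).toReal *
          ∫ ω, Real.exp (-(A ω) * (2 * u + t)) ∂P) (Set.Ioi 0)) ∧
    IntegrableOn (fun z : ℝ => (1 + z) ^ (-ρ) * (1 + 2 * z) ^ (-κ)) (Set.Ioi 0) ∧
    Tendsto (fun t : ℝ =>
        t ^ (ρ + κ - 1) *
          ∫ u in Set.Ioi (0:ℝ), (P {ω | u + t < R ω}).toReal *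
            ∫ ω, Real.exp (-(A ω) * (2 * u + t)) ∂P) atTop
      (nhds (Real.Gamma (κ + 1) * c_κ * c_ρ *
        ∫ z in Set.Ioi (0:ℝ), (1 + z) ^ (-ρ) * (1 + 2 * z) ^ (-κ))) := by
  obtain ⟨M_A, hMA0, hMA⟩ := stmt9_cdf_bound P A hκ htailA
  obtain ⟨M_R, hMR0, hMR⟩ := stmt9_tail_bound P R hρ htailR
  have hΓ : 0 < Real.Gamma (κ + 1) := Real.Gamma_pos_of_pos (by linarith)
  -- Part 1
  have part1 : ∀ t > (0:ℝ), IntegrableOn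
      (fun u : ℝ => (P {ω | u + t < R ω}).toReal *
        ∫ ω, Real.exp (-(A ω) * (2 * u + t)) ∂P) (Set.Ioi 0) := by
    intro t ht
    have hbint : IntegrableOn
        (fun u : ℝ => M_R * (M_A * Real.Gamma (κ + 1)) * (u + t) ^ (-(ρ + κ))) (Ioi 0) :=
      (stmt9_shift_integrable hsum1 ht).const_mul _
    refine Integrable.mono' hbint ?_ ?_
    · have hGm : Antitone (fun u : ℝ => (P {ω | u + t < R ω}).toReal) := by
        intro a b hab
        refine ENNReal.toReal_mono (measure_ne_top _ _) (measure_mono fun ω hω => ?_)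
        simp only [mem_setOf_eq] at hω ⊢; linarith
      have hFm : AntitoneOn
          (fun u : ℝ => ∫ ω, Real.exp (-(A ω) * (2 * u + t)) ∂P) (Ioi 0) := by
        intro a ha b hb hab
        simp only [mem_Ioi] at ha hb
        refine integral_mono_ae (stmt9_exp_integrable P A hAmeas hApos (by linarith))
          (stmt9_exp_integrable P A hAmeas hApos (by linarith)) ?_
        filter_upwards [hApos] with ω hω
        exact Real.exp_le_exp.mpr (by nlinarith)
      exact ((hGm.measurable.aemeasurable.restrict).mul
        (aemeasurable_restrict_of_antitoneOn measurableSet_Ioi hFm)).aestronglyMeasurable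
    · rw [ae_restrict_iff' measurableSet_Ioi]
      refine ae_of_all _ fun u hu => ?_
      rw [mem_Ioi] at hu
      have hut : 0 < u + t := by linarith
      have h2ut : 0 < 2 * u + t := by linarith
      have hFnn : 0 ≤ ∫ ω, Real.exp (-(A ω) * (2 * u + t)) ∂P :=
        integral_nonneg fun ω => (Real.exp_pos _).le
      rw [Real.norm_eq_abs, abs_of_nonneg (mul_nonneg ENNReal.toReal_nonneg hFnn)]
      have h1 : (P {ω | u + t < R ω}).toReal ≤ M_R * (u + t) ^ (-ρ) := hMR _ hut
      have h2 : (∫ ω, Real.exp (-(A ω) * (2 * u + t)) ∂P)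
          ≤ M_A * Real.Gamma (κ + 1) * (2 * u + t) ^ (-κ) :=
        stmt9_F_bound P A hAmeas hApos hκ hMA0 hMA h2ut
      have h3 : (2 * u + t : ℝ) ^ (-κ) ≤ (u + t) ^ (-κ) :=
        Real.rpow_le_rpow_of_nonpos hut (by linarith) (by linarith)
      have h2' : (∫ ω, Real.exp (-(A ω) * (2 * u + t)) ∂P)
          ≤ M_A * Real.Gamma (κ + 1) * (u + t) ^ (-κ) :=
        h2.trans (mul_le_mul_of_nonneg_left h3 (by positivity))
      have hsplit : (u + t) ^ (-ρ) * (u + t) ^ (-κ) = (u + t) ^ (-(ρ + κ)) := by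
        rw [← Real.rpow_add hut]; ring_nf
      calc (P {ω | u + t < R ω}).toReal * ∫ ω, Real.exp (-(A ω) * (2 * u + t)) ∂P
          ≤ (M_R * (u + t) ^ (-ρ)) * (M_A * Real.Gamma (κ + 1) * (u + t) ^ (-κ)) :=
            mul_le_mul h1 h2' hFnn (by positivity)
        _ = M_R * (M_A * Real.Gamma (κ + 1)) * (u + t) ^ (-(ρ + κ)) := by
            rw [← hsplit]; ring
  -- Part 2
  have part2 : IntegrableOn (fun z : ℝ => (1 + z) ^ (-ρ) * (1 + 2 * z) ^ (-κ)) (Set.Ioi 0) :=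
    stmt9_weight_integrable hρ hκ hsum1
  -- Part 3
  have habel := stmt9_abelian P A hAmeas hApos hκ htailA hMA0 hMA
  have hmeas : ∀ᶠ t : ℝ in atTop, AEStronglyMeasurable
      (fun z : ℝ => t ^ (ρ + κ) * ((P {ω | t * z + t < R ω}).toReal *
        ∫ ω, Real.exp (-(A ω) * (2 * (t * z) + t)) ∂P))
      (volume.restrict (Ioi (0:ℝ))) := by
    filter_upwards [eventually_gt_atTop (0:ℝ)] with t ht
    have hGm : Antitone (fun z : ℝ => (P {ω | t * z + t < R ω}).toReal) := by
      intro a b hab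
      refine ENNReal.toReal_mono (measure_ne_top _ _) (measure_mono fun ω hω => ?_)
      simp only [mem_setOf_eq] at hω ⊢
      nlinarith
    have hFm : AntitoneOn
        (fun z : ℝ => ∫ ω, Real.exp (-(A ω) * (2 * (t * z) + t)) ∂P) (Ioi 0) := by
      intro a ha b hb hab
      simp only [mem_Ioi] at ha hb
      refine integral_mono_ae (stmt9_exp_integrable P A hAmeas hApos (by nlinarith))
        (stmt9_exp_integrable P A hAmeas hApos (by nlinarith)) ?_
      filter_upwards [hApos] with ω hω
      refine Real.exp_le_exp.mpr ?_
      nlinarith [mul_nonneg (mul_nonneg hω.le ht.le) (sub_nonneg.mpr hab)]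
    exact (((hGm.measurable.aemeasurable.restrict).mul
      (aemeasurable_restrict_of_antitoneOn measurableSet_Ioi hFm)).const_mul
      _).aestronglyMeasurable
  have hb : ∀ᶠ t : ℝ in atTop, ∀ᵐ z ∂(volume.restrict (Ioi (0:ℝ))),
      ‖t ^ (ρ + κ) * ((P {ω | t * z + t < R ω}).toReal *
        ∫ ω, Real.exp (-(A ω) * (2 * (t * z) + t)) ∂P)‖
      ≤ M_R * (M_A * Real.Gamma (κ + 1)) * ((1 + z) ^ (-ρ) * (1 + 2 * z) ^ (-κ)) := by
    filter_upwards [eventually_gt_atTop (0:ℝ)] with t ht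
    rw [ae_restrict_iff' measurableSet_Ioi]
    refine ae_of_all _ fun z hz => ?_
    rw [mem_Ioi] at hz
    have h1z : (0:ℝ) < 1 + z := by linarith
    have h2z : (0:ℝ) < 1 + 2 * z := by linarith
    have htz : (0:ℝ) < t * z + t := by positivity
    have h2tz : (0:ℝ) < 2 * (t * z) + t := by positivity
    have hFnn : 0 ≤ ∫ ω, Real.exp (-(A ω) * (2 * (t * z) + t)) ∂P :=
      integral_nonneg fun ω => (Real.exp_pos _).le
    have hnn : 0 ≤ t ^ (ρ + κ) * ((P {ω | t * z + t < R ω}).toReal *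
        ∫ ω, Real.exp (-(A ω) * (2 * (t * z) + t)) ∂P) :=
      mul_nonneg (Real.rpow_nonneg ht.le _) (mul_nonneg ENNReal.toReal_nonneg hFnn)
    rw [Real.norm_eq_abs, abs_of_nonneg hnn]
    have hGb : t ^ ρ * (P {ω | t * z + t < R ω}).toReal ≤ M_R * (1 + z) ^ (-ρ) := by
      calc t ^ ρ * (P {ω | t * z + t < R ω}).toReal
          ≤ t ^ ρ * (M_R * (t * z + t) ^ (-ρ)) :=
            mul_le_mul_of_nonneg_left (hMR _ htz) (Real.rpow_nonneg ht.le _)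
        _ = M_R * (1 + z) ^ (-ρ) := by
            rw [show t * z + t = t * (1 + z) from by ring, Real.mul_rpow ht.le h1z.le]
            have ht1 : t ^ ρ * t ^ (-ρ) = 1 := by
              rw [← Real.rpow_add ht]; simp
            calc t ^ ρ * (M_R * (t ^ (-ρ) * (1 + z) ^ (-ρ)))
                = t ^ ρ * t ^ (-ρ) * (M_R * (1 + z) ^ (-ρ)) := by ring
              _ = M_R * (1 + z) ^ (-ρ) := by rw [ht1, one_mul]
    have hFb2 : t ^ κ * (∫ ω, Real.exp (-(A ω) * (2 * (t * z) + t)) ∂P)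
        ≤ M_A * Real.Gamma (κ + 1) * (1 + 2 * z) ^ (-κ) := by
      calc t ^ κ * (∫ ω, Real.exp (-(A ω) * (2 * (t * z) + t)) ∂P)
          ≤ t ^ κ * (M_A * Real.Gamma (κ + 1) * (2 * (t * z) + t) ^ (-κ)) :=
            mul_le_mul_of_nonneg_left
              (stmt9_F_bound P A hAmeas hApos hκ hMA0 hMA h2tz)
              (Real.rpow_nonneg ht.le _)
        _ = M_A * Real.Gamma (κ + 1) * (1 + 2 * z) ^ (-κ) := by
            rw [show 2 * (t * z) + t = t * (1 + 2 * z) from by ring,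
              Real.mul_rpow ht.le h2z.le]
            have ht1 : t ^ κ * t ^ (-κ) = 1 := by
              rw [← Real.rpow_add ht]; simp
            calc t ^ κ * (M_A * Real.Gamma (κ + 1) * (t ^ (-κ) * (1 + 2 * z) ^ (-κ)))
                = t ^ κ * t ^ (-κ) * (M_A * Real.Gamma (κ + 1) * (1 + 2 * z) ^ (-κ)) := by
                  ring
              _ = M_A * Real.Gamma (κ + 1) * (1 + 2 * z) ^ (-κ) := by rw [ht1, one_mul]
    calc t ^ (ρ + κ) * ((P {ω | t * z + t < R ω}).toReal *
          ∫ ω, Real.exp (-(A ω) * (2 * (t * z) + t)) ∂P)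
        = (t ^ ρ * (P {ω | t * z + t < R ω}).toReal) *
          (t ^ κ * ∫ ω, Real.exp (-(A ω) * (2 * (t * z) + t)) ∂P) := by
          rw [Real.rpow_add ht]; ring
      _ ≤ (M_R * (1 + z) ^ (-ρ)) * (M_A * Real.Gamma (κ + 1) * (1 + 2 * z) ^ (-κ)) :=
          mul_le_mul hGb hFb2 (mul_nonneg (Real.rpow_nonneg ht.le _) hFnn) (by positivity)
      _ = M_R * (M_A * Real.Gamma (κ + 1)) * ((1 + z) ^ (-ρ) * (1 + 2 * z) ^ (-κ)) := by
          ring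
  have hbound_int : Integrable
      (fun z : ℝ => M_R * (M_A * Real.Gamma (κ + 1)) * ((1 + z) ^ (-ρ) * (1 + 2 * z) ^ (-κ)))
      (volume.restrict (Ioi (0:ℝ))) :=
    (stmt9_weight_integrable hρ hκ hsum1).const_mul _
  have hlim : ∀ᵐ z ∂(volume.restrict (Ioi (0:ℝ))),
      Tendsto (fun t : ℝ => t ^ (ρ + κ) * ((P {ω | t * z + t < R ω}).toReal *
        ∫ ω, Real.exp (-(A ω) * (2 * (t * z) + t)) ∂P)) atTop
        (𝓝 (Real.Gamma (κ + 1) * c_κ * c_ρ * ((1 + z) ^ (-ρ) * (1 + 2 * z) ^ (-κ)))) := by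
    rw [ae_restrict_iff' measurableSet_Ioi]
    refine ae_of_all _ fun z hz => ?_
    rw [mem_Ioi] at hz
    have h1z : (0:ℝ) < 1 + z := by linarith
    have h2z : (0:ℝ) < 1 + 2 * z := by linarith
    have hmap1 : Tendsto (fun t : ℝ => t * z + t) atTop atTop := by
      refine Tendsto.congr' ?_
        (tendsto_id.atTop_mul_const (show (0:ℝ) < z + 1 by linarith))
      filter_upwards with t
      show id t * (z + 1) = t * z + t
      simp [id]; ring
    have hmap2 : Tendsto (fun t : ℝ => 2 * (t * z) + t) atTop atTop := by
      refine Tendsto.congr' ?_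
        (tendsto_id.atTop_mul_const (show (0:ℝ) < 2 * z + 1 by linarith))
      filter_upwards with t
      show id t * (2 * z + 1) = 2 * (t * z) + t
      simp [id]; ring
    have h1 := (htailR.comp hmap1).const_mul ((1 + z) ^ (-ρ))
    have h2 := (habel.comp hmap2).const_mul ((1 + 2 * z) ^ (-κ))
    have hprod := h1.mul h2
    have hval : ((1 + z) ^ (-ρ) * c_ρ) * ((1 + 2 * z) ^ (-κ) * (Real.Gamma (κ + 1) * c_κ))
        = Real.Gamma (κ + 1) * c_κ * c_ρ * ((1 + z) ^ (-ρ) * (1 + 2 * z) ^ (-κ)) := by ring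
    rw [hval] at hprod
    refine Tendsto.congr' ?_ hprod
    filter_upwards [eventually_gt_atTop (0:ℝ)] with t ht
    show (1 + z) ^ (-ρ) * ((t * z + t) ^ ρ * (P {ω | t * z + t < R ω}).toReal) *
        ((1 + 2 * z) ^ (-κ) * ((2 * (t * z) + t) ^ κ *
          ∫ ω, Real.exp (-(A ω) * (2 * (t * z) + t)) ∂P))
      = t ^ (ρ + κ) * ((P {ω | t * z + t < R ω}).toReal *
          ∫ ω, Real.exp (-(A ω) * (2 * (t * z) + t)) ∂P)
    rw [show t * z + t = t * (1 + z) from by ring,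
      show 2 * (t * z) + t = t * (1 + 2 * z) from by ring,
      Real.mul_rpow ht.le h1z.le, Real.mul_rpow ht.le h2z.le]
    have hz1 : (1 + z) ^ (-ρ) * (1 + z) ^ ρ = 1 := by
      rw [← Real.rpow_add h1z]; simp
    have hz2 : (1 + 2 * z) ^ (-κ) * (1 + 2 * z) ^ κ = 1 := by
      rw [← Real.rpow_add h2z]; simp
    calc (1 + z) ^ (-ρ) * (t ^ ρ * (1 + z) ^ ρ * (P {ω | t * (1 + z) < R ω}).toReal) *
          ((1 + 2 * z) ^ (-κ) * (t ^ κ * (1 + 2 * z) ^ κ *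
            ∫ ω, Real.exp (-(A ω) * (t * (1 + 2 * z))) ∂P))
        = ((1 + z) ^ (-ρ) * (1 + z) ^ ρ) * ((1 + 2 * z) ^ (-κ) * (1 + 2 * z) ^ κ) *
          (t ^ ρ * t ^ κ * ((P {ω | t * (1 + z) < R ω}).toReal *
            ∫ ω, Real.exp (-(A ω) * (t * (1 + 2 * z))) ∂P)) := by ring
      _ = t ^ (ρ + κ) * ((P {ω | t * (1 + z) < R ω}).toReal *
            ∫ ω, Real.exp (-(A ω) * (t * (1 + 2 * z))) ∂P) := by
          rw [hz1, hz2, ← Real.rpow_add ht, one_mul, one_mul]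
  have hDCT := tendsto_integral_filter_of_dominated_convergence
    (fun z : ℝ => M_R * (M_A * Real.Gamma (κ + 1)) * ((1 + z) ^ (-ρ) * (1 + 2 * z) ^ (-κ)))
    hmeas hb hbound_int hlim
  rw [integral_const_mul] at hDCT
  have part3 : Tendsto (fun t : ℝ =>
      t ^ (ρ + κ - 1) *
        ∫ u in Set.Ioi (0:ℝ), (P {ω | u + t < R ω}).toReal *
          ∫ ω, Real.exp (-(A ω) * (2 * u + t)) ∂P) atTop
      (nhds (Real.Gamma (κ + 1) * c_κ * c_ρ *
        ∫ z in Set.Ioi (0:ℝ), (1 + z) ^ (-ρ) * (1 + 2 * z) ^ (-κ))) := by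
    refine Tendsto.congr' ?_ hDCT
    filter_upwards [eventually_gt_atTop (0:ℝ)] with t ht
    have hcv := integral_comp_mul_left_Ioi
      (fun u : ℝ => (P {ω | u + t < R ω}).toReal *
        ∫ ω, Real.exp (-(A ω) * (2 * u + t)) ∂P) 0 ht
    simp only [mul_zero, smul_eq_mul] at hcv
    have hts : t ^ (ρ + κ) = t ^ (ρ + κ - 1) * t := by
      have h := Real.rpow_add ht (ρ + κ - 1) 1
      rw [sub_add_cancel, Real.rpow_one] at h
      exact h
    have hIeq : (∫ u in Set.Ioi (0:ℝ), (P {ω | u + t < R ω}).toReal *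
          ∫ ω, Real.exp (-(A ω) * (2 * u + t)) ∂P)
        = t * ∫ z in Set.Ioi (0:ℝ), (P {ω | t * z + t < R ω}).toReal *
            ∫ ω, Real.exp (-(A ω) * (2 * (t * z) + t)) ∂P := by
      rw [hcv]
      field_simp
      congr 1
      ext u
      ring_nf
    rw [hIeq, ← mul_assoc, ← hts, ← integral_const_mul]
  exact ⟨part1, part2, part3⟩
end

section
/- For every α ∈ (1,2), the function r ↦ (e^{ir} − 1 − ir) r^{−1−α} is Lebesgue integrable on (0,∞) as a complex-valued function, and ∫_0^∞ (e^{ir} − 1 − ir) r^{−1−α} dr = ( Γ(2−α) / (α(α−1)) ) · ( cos(πα/2) − i·sin(πα/2) ). -/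
open MeasureTheory Filter Set
open scoped Real Topology


lemma hd_exp (c : ℂ) (t : ℝ) :
    HasDerivAt (fun t : ℝ => Complex.exp ((t : ℂ) * c)) (Complex.exp ((t : ℂ) * c) * c) t := by
  have h1 : HasDerivAt (fun t : ℝ => (t : ℂ) * c) c t := by
    simpa using (Complex.ofRealCLM.hasDerivAt (x := t)).mul_const c
  simpa using h1.cexp

lemma exp_bound1 (w : ℂ) (hw : w.re ≤ 0) : ‖Complex.exp w - 1‖ ≤ ‖w‖ := by
  have key : ∫ t in (0:ℝ)..1, Complex.exp ((t:ℂ) * w) * w = Complex.exp w - 1 := by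
    have := intervalIntegral.integral_eq_sub_of_hasDerivAt
      (a := 0) (b := 1) (f := fun t : ℝ => Complex.exp ((t:ℂ) * w))
      (f' := fun t : ℝ => Complex.exp ((t:ℂ) * w) * w)
      (fun t _ => hd_exp w t) ?_
    · simpa using this
    · apply Continuous.intervalIntegrable
      continuity
  calc ‖Complex.exp w - 1‖ = ‖∫ t in (0:ℝ)..1, Complex.exp ((t:ℂ) * w) * w‖ := by rw [key]
  _ ≤ ‖w‖ * |1 - 0| := by
      apply intervalIntegral.norm_integral_le_of_norm_le_const
      intro x hx
      rw [Set.uIoc_of_le (by norm_num : (0:ℝ) ≤ 1)] at hx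
      have hx0 : 0 ≤ x := hx.1.le
      rw [norm_mul, Complex.norm_exp]
      have : ((x:ℂ) * w).re = x * w.re := by simp
      rw [this]
      have : Real.exp (x * w.re) ≤ 1 := by
        rw [Real.exp_le_one_iff]
        exact mul_nonpos_of_nonneg_of_nonpos hx0 hw
      nlinarith [norm_nonneg w, Real.exp_pos (x * w.re)]
  _ = ‖w‖ := by norm_num

lemma exp_bound2 (w : ℂ) (hw : w.re ≤ 0) : ‖Complex.exp w - 1 - w‖ ≤ ‖w‖ ^ 2 := by
  have key : ∫ t in (0:ℝ)..1, (Complex.exp ((t:ℂ) * w) - 1) * w = Complex.exp w - 1 - w := by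
    have := intervalIntegral.integral_eq_sub_of_hasDerivAt
      (a := 0) (b := 1) (f := fun t : ℝ => Complex.exp ((t:ℂ) * w) - (t:ℂ) * w)
      (f' := fun t : ℝ => (Complex.exp ((t:ℂ) * w) - 1) * w)
      (fun t _ => by
        have h1 : HasDerivAt (fun t : ℝ => (t : ℂ) * w) w t := by
          simpa using (Complex.ofRealCLM.hasDerivAt (x := t)).mul_const w
        exact ((hd_exp w t).sub h1).congr_deriv (by ring)) ?_
    · rw [this]; simp [Complex.exp_zero]; ring
    · apply Continuous.intervalIntegrable
      continuity
  calc ‖Complex.exp w - 1 - w‖ = ‖∫ t in (0:ℝ)..1, (Complex.exp ((t:ℂ) * w) - 1) * w‖ := by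
        rw [key]
  _ ≤ ‖w‖ ^ 2 * |1 - 0| := by
      apply intervalIntegral.norm_integral_le_of_norm_le_const
      intro x hx
      rw [Set.uIoc_of_le (by norm_num : (0:ℝ) ≤ 1)] at hx
      have hre : ((x:ℂ) * w).re ≤ 0 := by
        have : ((x:ℂ) * w).re = x * w.re := by simp
        rw [this]
        exact mul_nonpos_of_nonneg_of_nonpos hx.1.le hw
      have h1 := exp_bound1 ((x:ℂ) * w) hre
      rw [norm_mul]
      calc ‖Complex.exp ((x:ℂ) * w) - 1‖ * ‖w‖ ≤ ‖(x:ℂ) * w‖ * ‖w‖ := by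
            exact mul_le_mul_of_nonneg_right h1 (norm_nonneg w)
      _ = |x| * ‖w‖ * ‖w‖ := by rw [norm_mul]; simp
      _ ≤ 1 * ‖w‖ * ‖w‖ := by
            have : |x| ≤ 1 := by rw [abs_le]; constructor <;> [linarith [hx.1]; exact hx.2]
            gcongr
      _ = ‖w‖ ^ 2 := by ring
  _ = ‖w‖ ^ 2 := by norm_num

lemma integrable_piecewise {p q : ℝ} (C₁ C₂ : ℝ) (hp : -1 < p) (hq : q < -1) :
    IntegrableOn (fun r : ℝ => if r ≤ 1 then C₁ * r ^ p else C₂ * r ^ q) (Ioi 0) := by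
  have : Ioi (0:ℝ) = Ioc 0 1 ∪ Ioi 1 := by
    rw [Ioc_union_Ioi_eq_Ioi]; norm_num
  rw [this, integrableOn_union]
  constructor
  · apply (IntegrableOn.congr_fun _ _ measurableSet_Ioc (f := fun r : ℝ => C₁ * r ^ p))
    · exact ((intervalIntegral.intervalIntegrable_rpow' hp (a := 0) (b := 1)).1.const_mul C₁)
    · intro x hx
      simp [hx.2]
  · apply (IntegrableOn.congr_fun _ _ measurableSet_Ioi (f := fun r : ℝ => C₂ * r ^ q))
    · exact ((integrableOn_Ioi_rpow_iff zero_lt_one).2 hq).const_mul C₂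
    · intro x hx
      simp [not_le.2 (show (1:ℝ) < x from hx)]

lemma cont_on_integrand (c : ℂ) (β : ℝ) :
    ContinuousOn (fun r : ℝ => (Complex.exp ((r:ℂ) * c) - 1 - (r:ℂ) * c) * ((r ^ β : ℝ) : ℂ))
      (Ioi 0) := by
  apply ContinuousOn.mul
  · fun_prop
  · apply Continuous.comp_continuousOn Complex.continuous_ofReal
    intro x hx
    exact (Real.continuousAt_rpow_const x β (Or.inl (ne_of_gt hx))).continuousWithinAt

/-- Norm bound for the main integrand, valid for `re c ≤ 0`, `r > 0`. -/
lemma main_bound {α : ℝ} (hα1 : 1 < α) (c : ℂ) (hc : c.re ≤ 0) {r : ℝ} (hr : 0 < r) :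
    ‖(Complex.exp ((r:ℂ) * c) - 1 - (r:ℂ) * c) * ((r ^ (-1 - α) : ℝ) : ℂ)‖ ≤
      if r ≤ 1 then ‖c‖ ^ 2 * r ^ (1 - α) else (2 + ‖c‖) * r ^ (-α) := by
  have hre : ((r:ℂ) * c).re ≤ 0 := by
    have : ((r:ℂ) * c).re = r * c.re := by simp
    rw [this]; exact mul_nonpos_of_nonneg_of_nonpos hr.le hc
  have hnorm_rc : ‖(r:ℂ) * c‖ = r * ‖c‖ := by
    rw [norm_mul, Complex.norm_real, Real.norm_of_nonneg hr.le]
  have hw : ‖((r ^ (-1 - α) : ℝ) : ℂ)‖ = r ^ (-1 - α) := by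
    rw [Complex.norm_real, Real.norm_of_nonneg (Real.rpow_nonneg hr.le _)]
  rw [norm_mul, hw]
  by_cases h1 : r ≤ 1
  · rw [if_pos h1]
    have hb := exp_bound2 ((r:ℂ) * c) hre
    rw [hnorm_rc] at hb
    calc ‖Complex.exp ((r:ℂ) * c) - 1 - (r:ℂ) * c‖ * r ^ (-1 - α)
        ≤ (r * ‖c‖) ^ 2 * r ^ (-1 - α) :=
          mul_le_mul_of_nonneg_right hb (Real.rpow_nonneg hr.le _)
    _ = ‖c‖ ^ 2 * (r ^ (2:ℝ) * r ^ (-1 - α)) := by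
          rw [mul_pow, ← Real.rpow_natCast r 2]; push_cast; ring
    _ = ‖c‖ ^ 2 * r ^ (1 - α) := by
          rw [← Real.rpow_add hr]; ring_nf
  · rw [if_neg h1]
    push_neg at h1
    have hb : ‖Complex.exp ((r:ℂ) * c) - 1 - (r:ℂ) * c‖ ≤ 2 + ‖c‖ * r := by
      have h2 : ‖Complex.exp ((r:ℂ) * c)‖ ≤ 1 := by
        rw [Complex.norm_exp]
        exact Real.exp_le_one_iff.2 hre
      calc ‖Complex.exp ((r:ℂ) * c) - 1 - (r:ℂ) * c‖
          ≤ ‖Complex.exp ((r:ℂ) * c) - 1‖ + ‖(r:ℂ) * c‖ := norm_sub_le _ _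
      _ ≤ (‖Complex.exp ((r:ℂ) * c)‖ + ‖(1:ℂ)‖) + r * ‖c‖ := by
          rw [hnorm_rc]; gcongr; exact norm_sub_le _ _
      _ ≤ 2 + ‖c‖ * r := by rw [norm_one]; nlinarith
    calc ‖Complex.exp ((r:ℂ) * c) - 1 - (r:ℂ) * c‖ * r ^ (-1 - α)
        ≤ (2 + ‖c‖ * r) * r ^ (-1 - α) :=
          mul_le_mul_of_nonneg_right hb (Real.rpow_nonneg hr.le _)
    _ ≤ ((2 + ‖c‖) * r) * r ^ (-1 - α) :=
          mul_le_mul_of_nonneg_right (by nlinarith [norm_nonneg c]) (Real.rpow_nonneg hr.le _)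
    _ = (2 + ‖c‖) * (r ^ (1:ℝ) * r ^ (-1 - α)) := by rw [Real.rpow_one]; ring
    _ = (2 + ‖c‖) * r ^ (-α) := by rw [← Real.rpow_add hr]; ring_nf

lemma integrable_main {α : ℝ} (hα1 : 1 < α) (hα2 : α < 2) (c : ℂ) (hc : c.re ≤ 0) :
    IntegrableOn (fun r : ℝ => (Complex.exp ((r:ℂ) * c) - 1 - (r:ℂ) * c) *
      ((r ^ (-1 - α) : ℝ) : ℂ)) (Ioi 0) := by
  apply Integrable.mono' (integrable_piecewise (p := 1-α) (q := -α) (‖c‖^2) (2 + ‖c‖) (by linarith) (by linarith))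
  · exact (cont_on_integrand c (-1-α)).aestronglyMeasurable measurableSet_Ioi
  · filter_upwards [ae_restrict_mem measurableSet_Ioi] with r hr
    exact main_bound hα1 c hc hr



lemma contOn_rpowC (p : ℝ) : ContinuousOn (fun t : ℝ => ((t ^ p : ℝ) : ℂ)) (Ioi 0) := by
  apply Continuous.comp_continuousOn Complex.continuous_ofReal
  intro x hx
  exact (Real.continuousAt_rpow_const x p (Or.inl (ne_of_gt hx))).continuousWithinAt

lemma contOn_F (w : ℂ) (p : ℝ) :
    ContinuousOn (fun t : ℝ => Complex.exp (-(w * t)) * ((t ^ p : ℝ) : ℂ)) (Ioi 0) := by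
  apply ContinuousOn.mul _ (contOn_rpowC p)
  fun_prop

lemma int_exp_rpow {p : ℝ} (hp : -1 < p) {w : ℂ} (hw : 0 < w.re) :
    IntegrableOn (fun t : ℝ => Complex.exp (-(w * t)) * ((t ^ p : ℝ) : ℂ)) (Ioi 0) := by
  apply Integrable.mono'
    ((integrableOn_rpow_mul_exp_neg_mul_rpow hp zero_lt_one hw))
  · exact (contOn_F w p).aestronglyMeasurable measurableSet_Ioi
  · filter_upwards [ae_restrict_mem measurableSet_Ioi] with t ht
    rw [norm_mul, Complex.norm_exp, Complex.norm_real,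
      Real.norm_of_nonneg (Real.rpow_nonneg ht.le _)]
    have : (-(w * t)).re = -(w.re * t) := by simp
    rw [this, Real.rpow_one, mul_comm, neg_mul]

lemma sJ_eq_wM {s : ℝ} (hs0 : 0 < s) {w : ℂ} (hw : 0 < w.re) :
    (s : ℂ) * ∫ t : ℝ in Ioi 0, Complex.exp (-(w * t)) * ((t ^ (s - 1) : ℝ) : ℂ) =
      w * ∫ t : ℝ in Ioi 0, Complex.exp (-(w * t)) * ((t ^ s : ℝ) : ℂ) := by
  set g : ℝ → ℂ := fun t => ((t ^ s : ℝ) : ℂ) * Complex.exp (-(w * t)) with hg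
  set g' : ℝ → ℂ := fun t =>
    ((s * t ^ (s - 1) : ℝ) : ℂ) * Complex.exp (-(w * t)) +
      ((t ^ s : ℝ) : ℂ) * (Complex.exp (-(w * t)) * (-w)) with hg'
  have hint1 : IntegrableOn (fun t : ℝ =>
      ((s * t ^ (s-1) : ℝ) : ℂ) * Complex.exp (-(w * t))) (Ioi 0) := by
    apply IntegrableOn.congr_fun ((int_exp_rpow (p := s - 1) (by linarith) hw).const_mul (s:ℂ))
      _ measurableSet_Ioi
    intro x _
    push_cast
    ring
  have hint2 : IntegrableOn (fun t : ℝ =>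
      ((t ^ s : ℝ) : ℂ) * (Complex.exp (-(w * t)) * (-w))) (Ioi 0) := by
    apply IntegrableOn.congr_fun ((int_exp_rpow (p := s) (by linarith) hw).mul_const (-w))
      _ measurableSet_Ioi
    intro x _
    push_cast
    ring
  have key : ∫ t : ℝ in Ioi 0, g' t = 0 - g 0 := by
    apply integral_Ioi_of_hasDerivAt_of_tendsto
    · -- continuity at 0 within Ici 0
      apply ContinuousWithinAt.mul
      · exact Complex.continuous_ofReal.continuousAt.comp_continuousWithinAt
          ((Real.continuousAt_rpow_const 0 s (Or.inr hs0.le)).continuousWithinAt)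
      · exact (Complex.continuous_exp.comp (by continuity)).continuousWithinAt
    · intro t ht
      have h1 : HasDerivAt (fun t : ℝ => ((t ^ s : ℝ) : ℂ)) ((s * t ^ (s-1) : ℝ) : ℂ) t :=
        (Real.hasDerivAt_rpow_const (Or.inl (ne_of_gt ht))).ofReal_comp
      have h2 : HasDerivAt (fun t : ℝ => Complex.exp (-(w * t))) (Complex.exp (-(w * t)) * (-w)) t := by
        have hlin : HasDerivAt (fun t : ℝ => -(w * (t:ℂ))) (-w) t := by
          have := ((Complex.ofRealCLM.hasDerivAt (x := t)).const_mul w).neg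
          simp only [Complex.ofRealCLM_apply, Complex.ofReal_one, mul_one] at this
          exact this
        simpa using hlin.cexp
      exact h1.mul h2
    · exact hint1.add hint2
    · -- tendsto atTop 0
      apply squeeze_zero_norm' _ (tendsto_rpow_mul_exp_neg_mul_atTop_nhds_zero s w.re hw)
      filter_upwards [eventually_gt_atTop (0:ℝ)] with t ht
      rw [hg]
      simp only [norm_mul, Complex.norm_real, Complex.norm_exp]
      rw [Real.norm_eq_abs, abs_of_nonneg (Real.rpow_nonneg ht.le _)]
      have : (-(w * t)).re = -(w.re * t) := by simp
      rw [this, mul_comm w.re t, neg_mul, mul_comm t w.re]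
  have hg0 : g 0 = 0 := by simp [hg, Real.zero_rpow (ne_of_gt hs0)]
  rw [hg0, sub_zero, integral_add hint1 hint2] at key
  have e1 : ∫ t : ℝ in Ioi 0, ((s * t ^ (s-1) : ℝ) : ℂ) * Complex.exp (-(w * t)) =
      (s:ℂ) * ∫ t : ℝ in Ioi 0, Complex.exp (-(w * t)) * ((t ^ (s-1) : ℝ) : ℂ) := by
    rw [← MeasureTheory.integral_const_mul]
    apply setIntegral_congr_fun measurableSet_Ioi
    intro x _
    push_cast
    ring
  have e2 : ∫ t : ℝ in Ioi 0, ((t ^ s : ℝ) : ℂ) * (Complex.exp (-(w * t)) * (-w)) =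
      (-w) * ∫ t : ℝ in Ioi 0, Complex.exp (-(w * t)) * ((t ^ s : ℝ) : ℂ) := by
    rw [← MeasureTheory.integral_const_mul]
    apply setIntegral_congr_fun measurableSet_Ioi
    intro x _
    push_cast
    ring
  rw [e1, e2] at key
  linear_combination key

lemma mellin_exp {s : ℝ} (hs0 : 0 < s) (w : ℂ) (hw : 0 < w.re) :
    ∫ t : ℝ in Ioi 0, Complex.exp (-(w * t)) * ((t ^ (s - 1) : ℝ) : ℂ) =
      ((Real.Gamma s : ℝ) : ℂ) * w ^ (-(s:ℂ)) := by
  obtain ⟨a, b, rfl⟩ : ∃ x y : ℝ, w = Complex.mk x y := ⟨w.re, w.im, rfl⟩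
  set w : ℂ := Complex.mk a b with hw_def
  have ha : 0 < a := hw
  set J : ℂ → ℂ := fun z => ∫ t : ℝ in Ioi 0,
    Complex.exp (-(z * t)) * ((t ^ (s - 1) : ℝ) : ℂ) with hJ
  set M : ℂ → ℂ := fun z => ∫ t : ℝ in Ioi 0,
    Complex.exp (-(z * t)) * ((t ^ s : ℝ) : ℂ) with hM
  set p : ℝ → ℂ := fun θ => (a:ℂ) + (θ:ℂ) * ((b:ℂ) * Complex.I) with hp
  have hpre : ∀ θ : ℝ, (p θ).re = a := by intro θ; simp [hp]
  have hppos : ∀ θ : ℝ, 0 < (p θ).re := fun θ => by rw [hpre θ]; exact ha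
  have hpne : ∀ θ : ℝ, p θ ≠ 0 := by
    intro θ h
    have := hpre θ
    rw [h] at this
    simp at this
    linarith
  have hpd : ∀ θ : ℝ, HasDerivAt p ((b:ℂ) * Complex.I) θ := by
    intro θ
    have := (((Complex.ofRealCLM.hasDerivAt (x := θ)).mul_const ((b:ℂ)*Complex.I)).const_add (a:ℂ))
    simp only [Complex.ofRealCLM_apply, Complex.ofReal_one, one_mul] at this
    exact this
  -- derivative of J ∘ p
  have hJd : ∀ θ : ℝ, HasDerivAt (fun θ : ℝ => J (p θ))
      (-((b:ℂ) * Complex.I) * M (p θ)) θ := by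
    intro θ₀
    have main := hasDerivAt_integral_of_dominated_loc_of_deriv_le (μ := volume.restrict (Ioi 0))
      (F := fun (θ : ℝ) (t : ℝ) => Complex.exp (-(p θ * t)) * ((t ^ (s - 1) : ℝ) : ℂ))
      (F' := fun (θ : ℝ) (t : ℝ) =>
        Complex.exp (-(p θ * t)) * -((b:ℂ) * Complex.I * t) * ((t ^ (s - 1) : ℝ) : ℂ))
      (x₀ := θ₀) (s := Metric.ball θ₀ 1) (Metric.ball_mem_nhds θ₀ one_pos)
      (bound := fun t : ℝ => |b| * (t ^ s * Real.exp (-a * t ^ (1:ℝ))))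
      ?_ ?_ ?_ ?_ ?_ ?_
    · have heq : ∫ t : ℝ in Ioi 0,
          Complex.exp (-(p θ₀ * t)) * -((b:ℂ) * Complex.I * t) * ((t ^ (s - 1) : ℝ) : ℂ) =
          -((b:ℂ) * Complex.I) * M (p θ₀) := by
        rw [hM, ← MeasureTheory.integral_const_mul]
        apply setIntegral_congr_fun measurableSet_Ioi
        intro t ht
        have hts : (t:ℝ) ^ s = t * t ^ (s - 1) := by
          nth_rewrite 1 [show s = 1 + (s-1) by ring]
          rw [Real.rpow_add ht, Real.rpow_one]
        push_cast [hts]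
        ring
      rw [← heq]
      exact main.2
    · filter_upwards with θ
      exact (contOn_F (p θ) (s-1)).aestronglyMeasurable measurableSet_Ioi
    · have h := int_exp_rpow (p := s - 1) (by linarith) (hppos θ₀)
      exact h
    · apply ContinuousOn.aestronglyMeasurable _ measurableSet_Ioi
      apply ContinuousOn.mul _ (contOn_rpowC (s-1))
      apply Continuous.continuousOn
      continuity
    · filter_upwards [ae_restrict_mem measurableSet_Ioi] with t ht θ hθ
      rw [norm_mul, norm_mul, Complex.norm_exp]
      have h1 : (-(p θ * t)).re = -(a * t) := by
        have : (p θ * t).re = a * t := by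
          rw [Complex.mul_re]
          simp [hpre θ]
        simp [this]
      rw [h1]
      have h2 : ‖-((b:ℂ) * Complex.I * t)‖ = |b| * |t| := by
        rw [norm_neg, norm_mul, norm_mul]
        simp
      rw [h2, Complex.norm_real, Real.norm_of_nonneg (Real.rpow_nonneg ht.le _),
        Real.rpow_one, abs_of_pos (show (0:ℝ) < t from ht)]
      have hts : (t:ℝ) ^ s = t * t ^ (s - 1) := by
        nth_rewrite 1 [show s = 1 + (s-1) by ring]
        rw [Real.rpow_add ht, Real.rpow_one]
      rw [hts, neg_mul]
      apply le_of_eq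
      ring
    · exact ((integrableOn_rpow_mul_exp_neg_mul_rpow (by linarith : (-1:ℝ) < s)
        zero_lt_one ha).const_mul |b|)
    · filter_upwards [ae_restrict_mem measurableSet_Ioi] with t ht θ hθ
      exact ((((hpd θ).mul_const (t:ℂ)).neg.cexp).mul_const ((t ^ (s - 1) : ℝ) : ℂ))
  -- the function θ ↦ (p θ)^s * J (p θ) is constant
  set K : ℝ → ℂ := fun θ => (p θ) ^ (s:ℂ) * J (p θ) with hK
  have hKd : ∀ θ : ℝ, HasDerivAt K 0 θ := by
    intro θ
    have hcpow : HasDerivAt (fun θ : ℝ => (p θ) ^ (s:ℂ))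
        (((b:ℂ) * Complex.I) • ((s:ℂ) * (p θ) ^ ((s:ℂ) - 1))) θ := by
      have houter := (Complex.hasStrictDerivAt_cpow_const
        (c := (s:ℂ)) (x := p θ) (Or.inl (hppos θ))).hasDerivAt
      exact houter.scomp θ (hpd θ)
    have hmul := hcpow.mul (hJd θ)
    have hsJ := sJ_eq_wM hs0 (hppos θ)
    have hsplit : (p θ) ^ (s:ℂ) = (p θ) ^ ((s:ℂ) - 1) * (p θ) := by
      nth_rewrite 1 [show (s:ℂ) = ((s:ℂ) - 1) + 1 by ring]
      rw [Complex.cpow_add _ _ (hpne θ), Complex.cpow_one]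
    have hval : (((b:ℂ) * Complex.I) • ((s:ℂ) * (p θ) ^ ((s:ℂ) - 1))) * J (p θ) +
        (p θ) ^ (s:ℂ) * (-((b:ℂ) * Complex.I) * M (p θ)) = 0 := by
      rw [smul_eq_mul]
      have hsJ' : (s:ℂ) * J (p θ) = (p θ) * M (p θ) := hsJ
      linear_combination ((b:ℂ) * Complex.I * (p θ) ^ ((s:ℂ) - 1)) * hsJ' +
        (-((b:ℂ) * Complex.I) * M (p θ)) * hsplit
    rw [← hval]
    exact hmul
  have hconst : K 1 = K 0 :=
    is_const_of_deriv_eq_zero (fun θ => (hKd θ).differentiableAt)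
      (fun θ => (hKd θ).deriv) 1 0
  have hp1 : p 1 = w := by
    rw [hp]
    simp only [Complex.ofReal_one, one_mul]
    rw [hw_def]
    have : (Complex.mk a b) = (a:ℂ) + (b:ℂ) * Complex.I := by
      rw [Complex.mk_eq_add_mul_I]
    rw [this]
  have hp0 : p 0 = (a:ℂ) := by simp [hp]
  -- evaluate K 0
  have hJa : J ((a:ℝ):ℂ) = (1 / (a:ℂ)) ^ (s:ℂ) * Complex.Gamma (s:ℂ) := by
    rw [hJ]
    rw [← Complex.integral_cpow_mul_exp_neg_mul_Ioi
      (by simpa using hs0 : 0 < (s:ℂ).re) ha]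
    apply setIntegral_congr_fun measurableSet_Ioi
    intro t ht
    have hcp := Complex.ofReal_cpow ht.le (s-1)
    simp only [hcp]
    push_cast
    ring
  have hK0 : K 0 = ((Real.Gamma s : ℝ) : ℂ) := by
    rw [hK]
    simp only
    rw [hp0, hJa, ← mul_assoc]
    have : ((a:ℝ):ℂ) ^ (s:ℂ) * (1 / (a:ℂ)) ^ (s:ℂ) = 1 := by
      rw [one_div, ← Complex.ofReal_inv,
        ← Complex.mul_cpow_ofReal_nonneg ha.le (inv_nonneg.2 ha.le),
        ← Complex.ofReal_mul, mul_inv_cancel₀ (ne_of_gt ha),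
        Complex.ofReal_one, Complex.one_cpow]
    rw [this, one_mul, Complex.Gamma_ofReal]
  have hKval : w ^ (s:ℂ) * J w = ((Real.Gamma s : ℝ) : ℂ) := by
    rw [← hp1]; rw [← hK0]; exact hconst
  have hwne : w ≠ 0 := by
    intro h
    rw [h] at hw
    simp at hw
  have hws : w ^ (s:ℂ) ≠ 0 := by
    rw [Ne, Complex.cpow_eq_zero_iff]
    tauto
  rw [show (∫ t : ℝ in Ioi 0, Complex.exp (-(w * t)) * ((t ^ (s - 1) : ℝ) : ℂ)) = J w from rfl]
  rw [Complex.cpow_neg]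
  field_simp
  linear_combination hKval

lemma tendsto_const_rpow_zero (C : ℝ) {β : ℝ} (hβ : 0 < β) :
    Tendsto (fun r : ℝ => C * r ^ β) (𝓝[>] (0:ℝ)) (𝓝 0) := by
  have h : Tendsto (fun r : ℝ => r ^ β) (𝓝 (0:ℝ)) (𝓝 (0:ℝ)) := by
    have h := (Real.continuousAt_rpow_const 0 β (Or.inr hβ.le)).tendsto
    rwa [Real.zero_rpow (ne_of_gt hβ)] at h
  simpa using ((h.mono_left nhdsWithin_le_nhds).const_mul C)

lemma tendsto_const_rpow_atTop (C : ℝ) {β : ℝ} (hβ : β < 0) :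
    Tendsto (fun r : ℝ => C * r ^ β) atTop (𝓝 0) := by
  have h := tendsto_rpow_neg_atTop (show 0 < -β by linarith)
  simp only [neg_neg] at h
  simpa using h.const_mul C

lemma norm_ofReal_rpow {r : ℝ} (hr : 0 < r) (β : ℝ) : ‖((r ^ β : ℝ) : ℂ)‖ = r ^ β := by
  rw [Complex.norm_real, Real.norm_of_nonneg (Real.rpow_nonneg hr.le _)]

lemma value_at {α : ℝ} (hα1 : 1 < α) (hα2 : α < 2) (c : ℂ) (hc : c.re < 0) :
    ∫ r : ℝ in Ioi 0, (Complex.exp ((r:ℂ) * c) - 1 - (r:ℂ) * c) * ((r ^ (-1 - α) : ℝ) : ℂ) =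
      ((Real.Gamma (2 - α) / (α * (α - 1)) : ℝ) : ℂ) * (-c) ^ ((α : ℂ)) := by
  have hα0 : (0:ℝ) < α := by linarith
  have hαne : (α:ℂ) ≠ 0 := Complex.ofReal_ne_zero.2 (ne_of_gt hα0)
  have h1αne : (1:ℂ) - (α:ℂ) ≠ 0 := by
    intro h
    have : ((1 - α : ℝ) : ℂ) = 0 := by push_cast; linear_combination h
    rw [Complex.ofReal_eq_zero] at this
    linarith
  have hnegc_re : 0 < (-c).re := by simp [hc]
  have hnegc_ne : -c ≠ 0 := fun h => by rw [h] at hnegc_re; simp at hnegc_re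
  have hcirc : ∀ r : ℝ, 0 < r → ((r:ℂ) * c).re ≤ 0 := by
    intro r hr
    have : ((r:ℂ) * c).re = r * c.re := by simp
    rw [this]
    exact le_of_lt (mul_neg_of_pos_of_neg hr hc)
  have hexp_le_one : ∀ r : ℝ, 0 < r → ‖Complex.exp ((r:ℂ) * c)‖ ≤ 1 := by
    intro r hr
    rw [Complex.norm_exp]
    exact Real.exp_le_one_iff.2 (hcirc r hr)
  have hexp1 : ∀ r : ℝ, 0 < r → ‖Complex.exp ((r:ℂ) * c) - 1‖ ≤ r * ‖c‖ := by
    intro r hr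
    have h := exp_bound1 ((r:ℂ) * c) (hcirc r hr)
    rwa [norm_mul, Complex.norm_real, Real.norm_of_nonneg hr.le] at h
  have hexp2 : ∀ r : ℝ, 0 < r → ‖Complex.exp ((r:ℂ) * c) - 1 - (r:ℂ) * c‖ ≤ (r * ‖c‖)^2 := by
    intro r hr
    have h := exp_bound2 ((r:ℂ) * c) (hcirc r hr)
    rwa [norm_mul, Complex.norm_real, Real.norm_of_nonneg hr.le] at h
  -- ===== second integration by parts (inner) =====
  have ibp2 : ∫ r : ℝ in Ioi 0, (Complex.exp ((r:ℂ) * c) - 1) * ((r ^ (-α) : ℝ) : ℂ) =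
      (0:ℂ) - 0 - ∫ r : ℝ in Ioi 0,
        (Complex.exp ((r:ℂ) * c) * c) * (((r ^ (1 - α) : ℝ) : ℂ) / ((1:ℂ) - (α:ℂ))) := by
    apply MeasureTheory.integral_Ioi_mul_deriv_eq_deriv_mul
      (u := fun r : ℝ => Complex.exp ((r:ℂ) * c) - 1)
      (u' := fun r : ℝ => Complex.exp ((r:ℂ) * c) * c)
      (v := fun r : ℝ => ((r ^ (1 - α) : ℝ) : ℂ) / ((1:ℂ) - (α:ℂ)))
      (v' := fun r : ℝ => ((r ^ (-α) : ℝ) : ℂ))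
    · intro x hx
      simpa using (hd_exp c x).sub_const 1
    · intro x hx
      have h := ((Real.hasDerivAt_rpow_const (p := 1 - α)
        (Or.inl (ne_of_gt hx))).ofReal_comp).div_const ((1:ℂ) - (α:ℂ))
      have heq : (((1 - α) * x ^ (1 - α - 1) : ℝ) : ℂ) / ((1:ℂ) - (α:ℂ)) =
          ((x ^ (-α) : ℝ) : ℂ) := by
        rw [show (1:ℝ) - α - 1 = -α by ring]
        push_cast
        field_simp
      rwa [heq] at h
    · -- integrability of (exp - 1) * r^(-α)
      apply Integrable.mono' (integrable_piecewise (p := 1-α) (q := -α) ‖c‖ 2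
        (by linarith) (by linarith))
      · apply ContinuousOn.aestronglyMeasurable _ measurableSet_Ioi
        exact ContinuousOn.mul (by fun_prop) (contOn_rpowC (-α))
      · filter_upwards [ae_restrict_mem measurableSet_Ioi] with r hr
        rw [Pi.mul_apply, norm_mul, norm_ofReal_rpow hr _]
        by_cases h1 : r ≤ 1
        · rw [if_pos h1]
          calc ‖Complex.exp ((r:ℂ) * c) - 1‖ * r ^ (-α) ≤ (r * ‖c‖) * r ^ (-α) :=
              mul_le_mul_of_nonneg_right (hexp1 r hr) (Real.rpow_nonneg hr.le _)
          _ = ‖c‖ * (r ^ (1:ℝ) * r ^ (-α)) := by rw [Real.rpow_one]; ring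
          _ = ‖c‖ * r ^ (1 - α) := by rw [← Real.rpow_add hr]; ring_nf
        · rw [if_neg h1]
          have hb : ‖Complex.exp ((r:ℂ) * c) - 1‖ ≤ 2 := by
            calc ‖Complex.exp ((r:ℂ) * c) - 1‖ ≤ ‖Complex.exp ((r:ℂ) * c)‖ + ‖(1:ℂ)‖ :=
                norm_sub_le _ _
            _ ≤ 2 := by
                have := hexp_le_one r hr
                rw [norm_one]
                linarith
          exact mul_le_mul_of_nonneg_right hb (Real.rpow_nonneg hr.le _)
    · -- integrability of exp * c * r^(1-α)/(1-α)
      apply Integrable.mono' (((integrableOn_rpow_mul_exp_neg_mul_rpow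
        (show (-1:ℝ) < 1 - α by linarith) zero_lt_one hnegc_re).const_mul
          (‖c‖ / ‖(1:ℂ) - (α:ℂ)‖)))
      · apply ContinuousOn.aestronglyMeasurable _ measurableSet_Ioi
        apply ContinuousOn.mul (by fun_prop)
        exact (contOn_rpowC (1-α)).div_const _
      · filter_upwards [ae_restrict_mem measurableSet_Ioi] with r hr
        rw [Pi.mul_apply, norm_mul, norm_mul, norm_div, norm_ofReal_rpow hr _]
        rw [Complex.norm_exp]
        have h1 : ((r:ℂ) * c).re = r * c.re := by simp
        rw [h1, Real.rpow_one]
        have : rexp (r * c.re) = rexp (-(-c).re * r) := by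
          congr 1
          simp
          ring
        rw [this]
        apply le_of_eq
        field_simp
    · -- boundary at 0
      apply squeeze_zero_norm' (a := fun r : ℝ => (‖c‖ / ‖(1:ℂ) - (α:ℂ)‖) * r ^ (2 - α))
      · filter_upwards [self_mem_nhdsWithin] with r (hr : 0 < r)
        rw [Pi.mul_apply, norm_mul, norm_div, norm_ofReal_rpow hr _]
        calc ‖Complex.exp ((r:ℂ) * c) - 1‖ * (r ^ (1-α) / ‖(1:ℂ) - (α:ℂ)‖)
            ≤ (r * ‖c‖) * (r ^ (1-α) / ‖(1:ℂ) - (α:ℂ)‖) := by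
              apply mul_le_mul_of_nonneg_right (hexp1 r hr)
              positivity
        _ = (‖c‖ / ‖(1:ℂ) - (α:ℂ)‖) * (r ^ (1:ℝ) * r ^ (1-α)) := by
              rw [Real.rpow_one]; ring
        _ = (‖c‖ / ‖(1:ℂ) - (α:ℂ)‖) * r ^ (2 - α) := by
              rw [← Real.rpow_add hr]; ring_nf
      · exact tendsto_const_rpow_zero _ (by linarith)
    · -- boundary at ∞
      apply squeeze_zero_norm' (a := fun r : ℝ => (2 / ‖(1:ℂ) - (α:ℂ)‖) * r ^ (1 - α))
      · filter_upwards [eventually_gt_atTop (0:ℝ)] with r hr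
        rw [Pi.mul_apply, norm_mul, norm_div, norm_ofReal_rpow hr _]
        have hb : ‖Complex.exp ((r:ℂ) * c) - 1‖ ≤ 2 := by
          have := hexp_le_one r hr
          calc ‖Complex.exp ((r:ℂ) * c) - 1‖ ≤ ‖Complex.exp ((r:ℂ) * c)‖ + ‖(1:ℂ)‖ :=
              norm_sub_le _ _
          _ ≤ 2 := by rw [norm_one]; linarith
        calc ‖Complex.exp ((r:ℂ) * c) - 1‖ * (r ^ (1-α) / ‖(1:ℂ) - (α:ℂ)‖)
            ≤ 2 * (r ^ (1-α) / ‖(1:ℂ) - (α:ℂ)‖) := by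
              apply mul_le_mul_of_nonneg_right hb
              positivity
        _ = (2 / ‖(1:ℂ) - (α:ℂ)‖) * r ^ (1 - α) := by ring
      · exact tendsto_const_rpow_atTop _ (by linarith)
  -- ===== first integration by parts =====
  have ibp1 : ∫ r : ℝ in Ioi 0, (Complex.exp ((r:ℂ) * c) - 1 - (r:ℂ) * c) * ((r ^ (-1 - α) : ℝ) : ℂ) =
      (0:ℂ) - 0 - ∫ r : ℝ in Ioi 0,
        ((Complex.exp ((r:ℂ) * c) - 1) * c) * (((r ^ (-α) : ℝ) : ℂ) / (-(α:ℂ))) := by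
    apply MeasureTheory.integral_Ioi_mul_deriv_eq_deriv_mul
      (u := fun r : ℝ => Complex.exp ((r:ℂ) * c) - 1 - (r:ℂ) * c)
      (u' := fun r : ℝ => (Complex.exp ((r:ℂ) * c) - 1) * c)
      (v := fun r : ℝ => ((r ^ (-α) : ℝ) : ℂ) / (-(α:ℂ)))
      (v' := fun r : ℝ => ((r ^ (-1 - α) : ℝ) : ℂ))
    · intro x hx
      have hlin : HasDerivAt (fun r : ℝ => (r:ℂ) * c) c x := by
        simpa using (Complex.ofRealCLM.hasDerivAt (x := x)).mul_const c
      exact (((hd_exp c x).sub_const 1).sub hlin).congr_deriv (by ring)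
    · intro x hx
      have h := ((Real.hasDerivAt_rpow_const (p := -α)
        (Or.inl (ne_of_gt hx))).ofReal_comp).div_const (-(α:ℂ))
      have heq : (((-α) * x ^ (-α - 1) : ℝ) : ℂ) / (-(α:ℂ)) =
          ((x ^ (-1 - α) : ℝ) : ℂ) := by
        rw [show -α - 1 = -1 - α by ring]
        push_cast
        field_simp
      rwa [heq] at h
    · exact integrable_main hα1 hα2 c hc.le
    · -- integrability of u' * v
      apply Integrable.mono' (integrable_piecewise (p := 1-α) (q := -α)
        (‖c‖^2 / α) (2 * ‖c‖ / α) (by linarith) (by linarith))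
      · apply ContinuousOn.aestronglyMeasurable _ measurableSet_Ioi
        exact ContinuousOn.mul (by fun_prop) ((contOn_rpowC (-α)).div_const _)
      · filter_upwards [ae_restrict_mem measurableSet_Ioi] with r hr
        have hnα : ‖-(α:ℂ)‖ = α := by
          rw [norm_neg, Complex.norm_real, Real.norm_of_nonneg hα0.le]
        rw [Pi.mul_apply, norm_mul, norm_mul, norm_div, norm_ofReal_rpow hr _, hnα]
        by_cases h1 : r ≤ 1
        · rw [if_pos h1]
          calc ‖Complex.exp ((r:ℂ) * c) - 1‖ * ‖c‖ * (r ^ (-α) / α)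
              ≤ (r * ‖c‖) * ‖c‖ * (r ^ (-α) / α) := by
                exact mul_le_mul_of_nonneg_right
                  (mul_le_mul_of_nonneg_right (hexp1 r hr) (norm_nonneg c))
                  (div_nonneg (Real.rpow_nonneg (le_of_lt hr) _) hα0.le)
          _ = (‖c‖^2 / α) * (r ^ (1:ℝ) * r ^ (-α)) := by rw [Real.rpow_one]; ring
          _ = (‖c‖^2 / α) * r ^ (1 - α) := by rw [← Real.rpow_add hr]; ring_nf
        · rw [if_neg h1]
          have hb : ‖Complex.exp ((r:ℂ) * c) - 1‖ ≤ 2 := by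
            have := hexp_le_one r hr
            calc ‖Complex.exp ((r:ℂ) * c) - 1‖ ≤ ‖Complex.exp ((r:ℂ) * c)‖ + ‖(1:ℂ)‖ :=
                norm_sub_le _ _
            _ ≤ 2 := by rw [norm_one]; linarith
          calc ‖Complex.exp ((r:ℂ) * c) - 1‖ * ‖c‖ * (r ^ (-α) / α)
              ≤ 2 * ‖c‖ * (r ^ (-α) / α) := by
                exact mul_le_mul_of_nonneg_right
                  (mul_le_mul_of_nonneg_right hb (norm_nonneg c))
                  (div_nonneg (Real.rpow_nonneg (le_of_lt hr) _) hα0.le)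
          _ = 2 * ‖c‖ / α * r ^ (-α) := by ring
    · -- boundary at 0
      apply squeeze_zero_norm' (a := fun r : ℝ => (‖c‖^2 / α) * r ^ (2 - α))
      · filter_upwards [self_mem_nhdsWithin] with r (hr : 0 < r)
        have hnα : ‖-(α:ℂ)‖ = α := by
          rw [norm_neg, Complex.norm_real, Real.norm_of_nonneg hα0.le]
        rw [Pi.mul_apply, norm_mul, norm_div, norm_ofReal_rpow hr _, hnα]
        calc ‖Complex.exp ((r:ℂ) * c) - 1 - (r:ℂ) * c‖ * (r ^ (-α) / α)
            ≤ (r * ‖c‖)^2 * (r ^ (-α) / α) := by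
              apply mul_le_mul_of_nonneg_right (hexp2 r hr)
              positivity
        _ = (‖c‖^2 / α) * (r ^ (2:ℝ) * r ^ (-α)) := by
              rw [mul_pow, ← Real.rpow_natCast r 2]
              push_cast
              ring
        _ = (‖c‖^2 / α) * r ^ (2 - α) := by rw [← Real.rpow_add hr]; ring_nf
      · exact tendsto_const_rpow_zero _ (by linarith)
    · -- boundary at ∞
      apply squeeze_zero_norm' (a := fun r : ℝ => ((2 + ‖c‖) / α) * r ^ (1 - α))
      · filter_upwards [eventually_ge_atTop (1:ℝ)] with r hr1
        have hr : 0 < r := lt_of_lt_of_le zero_lt_one hr1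
        have hnα : ‖-(α:ℂ)‖ = α := by
          rw [norm_neg, Complex.norm_real, Real.norm_of_nonneg hα0.le]
        rw [Pi.mul_apply, norm_mul, norm_div, norm_ofReal_rpow hr _, hnα]
        have hb : ‖Complex.exp ((r:ℂ) * c) - 1 - (r:ℂ) * c‖ ≤ (2 + ‖c‖) * r := by
          have h2 := hexp_le_one r hr
          calc ‖Complex.exp ((r:ℂ) * c) - 1 - (r:ℂ) * c‖
              ≤ ‖Complex.exp ((r:ℂ) * c) - 1‖ + ‖(r:ℂ) * c‖ := norm_sub_le _ _
          _ ≤ (‖Complex.exp ((r:ℂ) * c)‖ + ‖(1:ℂ)‖) + r * ‖c‖ := by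
              rw [norm_mul, Complex.norm_real, Real.norm_of_nonneg hr.le]
              gcongr
              exact norm_sub_le _ _
          _ ≤ (2 + ‖c‖) * r := by
              rw [norm_one]
              nlinarith [norm_nonneg c]
        calc ‖Complex.exp ((r:ℂ) * c) - 1 - (r:ℂ) * c‖ * (r ^ (-α) / α)
            ≤ ((2 + ‖c‖) * r) * (r ^ (-α) / α) := by
              apply mul_le_mul_of_nonneg_right hb
              positivity
        _ = ((2 + ‖c‖) / α) * (r ^ (1:ℝ) * r ^ (-α)) := by rw [Real.rpow_one]; ring
        _ = ((2 + ‖c‖) / α) * r ^ (1 - α) := by rw [← Real.rpow_add hr]; ring_nf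
      · exact tendsto_const_rpow_atTop _ (by linarith)
  -- ===== pull out constants and evaluate =====
  have hS1 : ∫ r : ℝ in Ioi 0, ((Complex.exp ((r:ℂ) * c) - 1) * c) *
      (((r ^ (-α) : ℝ) : ℂ) / (-(α:ℂ))) =
      (c / (-(α:ℂ))) * ∫ r : ℝ in Ioi 0, (Complex.exp ((r:ℂ) * c) - 1) * ((r ^ (-α) : ℝ) : ℂ) := by
    rw [← MeasureTheory.integral_const_mul]
    apply setIntegral_congr_fun measurableSet_Ioi
    intro r _
    ring
  have hS3 : ∫ r : ℝ in Ioi 0, (Complex.exp ((r:ℂ) * c) * c) *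
      (((r ^ (1 - α) : ℝ) : ℂ) / ((1:ℂ) - (α:ℂ))) =
      (c / ((1:ℂ) - (α:ℂ))) * ∫ r : ℝ in Ioi 0,
        Complex.exp ((r:ℂ) * c) * ((r ^ (1 - α) : ℝ) : ℂ) := by
    rw [← MeasureTheory.integral_const_mul]
    apply setIntegral_congr_fun measurableSet_Ioi
    intro r _
    ring
  have hMel : ∫ r : ℝ in Ioi 0, Complex.exp ((r:ℂ) * c) * ((r ^ (1 - α) : ℝ) : ℂ) =
      ((Real.Gamma (2 - α) : ℝ) : ℂ) * (-c) ^ (-(((2 - α) : ℝ) : ℂ)) := by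
    have h := mellin_exp (s := 2 - α) (by linarith) (-c) hnegc_re
    rw [← h]
    apply setIntegral_congr_fun measurableSet_Ioi
    intro t ht
    simp only [show ((t:ℂ) * c) = -(-c * (t:ℂ)) by ring, show (1:ℝ) - α = 2 - α - 1 by ring]
  have hsplit : (-c) ^ ((α : ℂ)) = c ^ 2 * (-c) ^ (-(((2 - α) : ℝ) : ℂ)) := by
    have he : ((α : ℂ)) = ((2:ℕ) : ℂ) + (-(((2 - α) : ℝ) : ℂ)) := by push_cast; ring
    rw [he, Complex.cpow_add _ _ hnegc_ne, Complex.cpow_natCast]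
    ring_nf
  have hα1ne : (α:ℂ) - 1 ≠ 0 := by
    intro h
    have : ((α - 1 : ℝ) : ℂ) = 0 := by push_cast; linear_combination h
    rw [Complex.ofReal_eq_zero] at this
    linarith
  rw [ibp1, hS1, ibp2, hS3, hMel, hsplit]
  push_cast
  field_simp
  ring

lemma neg_I_cpow (α : ℝ) : (-Complex.I) ^ ((α : ℂ)) =
    ((Real.cos (π * α / 2) : ℝ) : ℂ) - ((Real.sin (π * α / 2) : ℝ) : ℂ) * Complex.I := by
  rw [Complex.cpow_def_of_ne_zero (by simp : (-Complex.I) ≠ (0:ℂ)), Complex.log_neg_I,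
    show -(↑π / 2) * Complex.I * (α:ℂ) = ((-(π * α / 2) : ℝ) : ℂ) * Complex.I by
      push_cast; ring,
    Complex.exp_mul_I, ← Complex.ofReal_cos, ← Complex.ofReal_sin,
    Real.cos_neg, Real.sin_neg]
  push_cast
  ring


/-- For `α ∈ (1,2)`, `r ↦ (e^{ir} - 1 - ir) r^{-1-α}` is Lebesgue
integrable on `(0,∞)` and
`∫_0^∞ (e^{ir} - 1 - ir) r^{-1-α} dr = (Γ(2-α)/(α(α-1))) (cos(πα/2) - i sin(πα/2))`. -/
theorem stmt_10 (α : ℝ) (hα1 : 1 < α) (hα2 : α < 2) :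
    IntegrableOn
      (fun r : ℝ => (Complex.exp ((r:ℂ) * Complex.I) - 1 - (r:ℂ) * Complex.I) *
        ((r ^ (-1 - α) : ℝ) : ℂ)) (Set.Ioi (0:ℝ)) ∧
    ∫ r in Set.Ioi (0:ℝ),
        (Complex.exp ((r:ℂ) * Complex.I) - 1 - (r:ℂ) * Complex.I) * ((r ^ (-1 - α) : ℝ) : ℂ) =
      ((Real.Gamma (2 - α) / (α * (α - 1)) : ℝ) : ℂ) *
        ((Real.cos (π * α / 2) : ℂ) - (Real.sin (π * α / 2) : ℂ) * Complex.I) := by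
  refine ⟨integrable_main hα1 hα2 Complex.I (by simp), ?_⟩
  set c : ℕ → ℂ := fun n => -(((1:ℝ)/(n+1) : ℝ) : ℂ) + Complex.I with hc
  have hcre : ∀ n, (c n).re < 0 := by
    intro n
    rw [hc]
    simp only [Complex.add_re, Complex.neg_re, Complex.ofReal_re, Complex.I_re, add_zero,
      neg_lt, neg_zero]
    positivity
  have hcnorm : ∀ n, ‖c n‖ ≤ 2 := by
    intro n
    rw [hc]
    calc ‖-(((1:ℝ)/(n+1) : ℝ) : ℂ) + Complex.I‖
        ≤ ‖-(((1:ℝ)/(n+1) : ℝ) : ℂ)‖ + ‖Complex.I‖ := norm_add_le _ _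
    _ ≤ 1 + 1 := by
        rw [norm_neg, Complex.norm_real, Complex.norm_I]
        gcongr
        rw [Real.norm_of_nonneg (by positivity)]
        rw [div_le_one (by positivity)]
        linarith [Nat.cast_nonneg (α := ℝ) n]
    _ = 2 := by norm_num
  have hctend : Tendsto c atTop (𝓝 Complex.I) := by
    rw [hc]
    have h0 : Tendsto (fun n : ℕ => ((1:ℝ)/(n+1) : ℝ)) atTop (𝓝 0) :=
      tendsto_one_div_add_atTop_nhds_zero_nat
    have h1 : Tendsto (fun n : ℕ => (((1:ℝ)/(n+1) : ℝ) : ℂ)) atTop (𝓝 0) := by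
      have := (Complex.continuous_ofReal.tendsto 0).comp h0
      simpa [Function.comp_def] using this
    have := (h1.neg).add_const Complex.I
    simpa using this
  -- dominated convergence
  have lim1 : Tendsto (fun n => ∫ r : ℝ in Ioi 0,
        (Complex.exp ((r:ℂ) * c n) - 1 - (r:ℂ) * c n) * ((r ^ (-1 - α) : ℝ) : ℂ)) atTop
      (𝓝 (∫ r : ℝ in Ioi 0,
        (Complex.exp ((r:ℂ) * Complex.I) - 1 - (r:ℂ) * Complex.I) * ((r ^ (-1 - α) : ℝ) : ℂ))) := by
    apply MeasureTheory.tendsto_integral_of_dominated_convergence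
      (bound := fun r : ℝ => if r ≤ 1 then 4 * r ^ (1 - α) else 4 * r ^ (-α))
    · intro n
      exact (cont_on_integrand (c n) (-1-α)).aestronglyMeasurable measurableSet_Ioi
    · exact integrable_piecewise 4 4 (by linarith) (by linarith)
    · intro n
      filter_upwards [ae_restrict_mem measurableSet_Ioi] with r hr
      have h := main_bound hα1 (c n) (hcre n).le hr
      apply h.trans
      by_cases h1 : r ≤ 1
      · rw [if_pos h1, if_pos h1]
        have : ‖c n‖ ^ 2 ≤ 4 := by nlinarith [hcnorm n, norm_nonneg (c n)]
        apply mul_le_mul_of_nonneg_right this (Real.rpow_nonneg (le_of_lt hr) _)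
      · rw [if_neg h1, if_neg h1]
        have : 2 + ‖c n‖ ≤ 4 := by linarith [hcnorm n]
        apply mul_le_mul_of_nonneg_right this (Real.rpow_nonneg (le_of_lt hr) _)
    · filter_upwards [ae_restrict_mem measurableSet_Ioi] with r hr
      have hg : Continuous (fun z : ℂ =>
          (Complex.exp ((r:ℂ) * z) - 1 - (r:ℂ) * z) * ((r ^ (-1 - α) : ℝ) : ℂ)) := by
        continuity
      exact (hg.tendsto Complex.I).comp hctend
  -- limit of the explicit values
  have lim2 : Tendsto (fun n => ((Real.Gamma (2 - α) / (α * (α - 1)) : ℝ) : ℂ) *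
        (-(c n)) ^ ((α : ℂ))) atTop
      (𝓝 (((Real.Gamma (2 - α) / (α * (α - 1)) : ℝ) : ℂ) * (-Complex.I) ^ ((α : ℂ)))) := by
    apply Tendsto.const_mul
    have hslit : -Complex.I ∈ Complex.slitPlane := by
      rw [Complex.mem_slitPlane_iff]
      right
      simp
    exact (continuousAt_cpow_const hslit).tendsto.comp (hctend.neg)
  have lim2' : Tendsto (fun n => ∫ r : ℝ in Ioi 0,
        (Complex.exp ((r:ℂ) * c n) - 1 - (r:ℂ) * c n) * ((r ^ (-1 - α) : ℝ) : ℂ)) atTop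
      (𝓝 (((Real.Gamma (2 - α) / (α * (α - 1)) : ℝ) : ℂ) * (-Complex.I) ^ ((α : ℂ)))) := by
    apply lim2.congr
    intro n
    exact (value_at hα1 hα2 (c n) (hcre n)).symm
  have := tendsto_nhds_unique lim1 lim2'
  rw [this, neg_I_cpow α]
end

section
/- Let 𝕎 be the space of (a.e.-equivalence classes of) Lebesgue-integrable functions w : ℝ → ℝ vanishing a.e. on (−∞,0), a Borel subset of L¹(ℝ); for λ > 0 and H ∈ ℝ let φ_{λ,H} : 𝕎 → 𝕎 be the map (φ_{λ,H} w)(t) := λ^{H−1} w(t/λ). Let γ > 0, H > 0, and let ν be a σ-finite Borel measure on 𝕎 which is (γ,H)-scaling, i.e. λ^{1+γ} ν(φ_{λ,H}(A)) = ν(A) for every λ > 0 and Borel A ⊆ 𝕎. Write 𝒲(w) := ∫_0^∞ w(t) dt, Ψ(z) := e^{iz} − 1 − iz, and α := (1+γ)/H. If ∫_𝕎 ( |𝒲(w)| ∧ |𝒲(w)|² ) ν(dw) < ∞, then for every θ > 0, ∫_𝕎 Ψ( θ 𝒲(w) ) ν(dw) = θ^α ∫_𝕎 Ψ( 𝒲(w)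 ) ν(dw), and for every θ < 0, ∫_𝕎 Ψ( θ 𝒲(w) ) ν(dw) = |θ|^α ∫_𝕎 Ψ( −𝒲(w) ) ν(dw). -/
open MeasureTheory Filter Set
open scoped ENNReal Topology

noncomputable section

/-- Borel σ-algebra on `L¹(ℝ)`. -/
instance : MeasurableSpace (Lp ℝ 1 (volume : Measure ℝ)) := borel _

/-- `𝕎`: the space of (a.e.-equivalence classes of) Lebesgue-integrable functions
`ℝ → ℝ` vanishing a.e. on `(-∞, 0)`, with the Borel σ-algebra inherited from `L¹(ℝ)`. -/
abbrev WW : Type :=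
  {w : Lp ℝ 1 (volume : Measure ℝ) // ∀ᵐ t ∂(volume : Measure ℝ), t < 0 → w t = 0}

/-- The scaling map `φ_{λ,H} w (t) = λ^{H-1} w(t/λ)` on `𝕎`. -/
noncomputable def phi (lam H : ℝ) (w : WW) : WW := by
  classical
  exact if h : MemLp (fun t => lam ^ (H - 1) * (w.1 : ℝ → ℝ) (t / lam)) 1 (volume : Measure ℝ) ∧
      ∀ᵐ t ∂(volume : Measure ℝ), t < 0 → lam ^ (H - 1) * (w.1 : ℝ → ℝ) (t / lam) = 0
  then ⟨h.1.toLp _, by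
    filter_upwards [h.1.coeFn_toLp, h.2] with t h1 h2 ht
    rw [h1]; exact h2 ht⟩
  else ⟨0, by
    filter_upwards [Lp.coeFn_zero ℝ 1 (volume : Measure ℝ)] with t h1 _
    simp [h1]⟩

/-- `ν` is a `(γ,H)`-scaling measure on `𝕎`:
`λ^{1+γ} ν(φ_{λ,H}(A)) = ν(A)` for every `λ > 0` and Borel `A`. -/
def ScalingMeasure (ν : Measure WW) (γ H : ℝ) : Prop :=
  ∀ lam : ℝ, 0 < lam → ∀ A : Set WW, MeasurableSet A →
    ENNReal.ofReal (lam ^ (1 + γ)) * ν (phi lam H '' A) = ν A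

/-- `𝒲(w) = ∫_0^∞ w(t) dt`. -/
noncomputable def Wcal (w : WW) : ℝ := ∫ t in Set.Ioi (0:ℝ), (w.1 : ℝ → ℝ) t

/-- `Ψ(z) = e^{iz} - 1 - iz`. -/
noncomputable def Psi (z : ℝ) : ℂ := Complex.exp ((z:ℂ) * Complex.I) - 1 - (z:ℂ) * Complex.I

end

section Aux

noncomputable section

instance : BorelSpace (Lp ℝ 1 (volume : Measure ℝ)) := ⟨rfl⟩

instance : OpensMeasurableSpace WW := Subtype.opensMeasurableSpace _

lemma map_div_vol {lam : ℝ} (hlam : 0 < lam) :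
    Measure.map (fun t : ℝ => t / lam) volume = ENNReal.ofReal lam • volume := by
  have : (fun t : ℝ => t / lam) = (fun t : ℝ => lam⁻¹ * t) := by
    funext t; rw [div_eq_inv_mul]
  rw [this, Real.map_volume_mul_left (inv_ne_zero hlam.ne')]
  simp [abs_of_pos hlam]

lemma qmp_div {lam : ℝ} (hlam : 0 < lam) :
    Measure.QuasiMeasurePreserving (fun t : ℝ => t / lam) volume volume := by
  refine ⟨measurable_id.div_const lam, ?_⟩
  rw [map_div_vol hlam]
  exact Measure.AbsolutelyContinuous.smul_left .rfl _

lemma memℒp_scaled {lam : ℝ} (hlam : 0 < lam) (H : ℝ) (w : WW) :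
    MemLp (fun t => lam ^ (H - 1) * (w.1 : ℝ → ℝ) (t / lam)) 1 (volume : Measure ℝ) := by
  have h1 : MemLp (w.1 : ℝ → ℝ) 1 (ENNReal.ofReal lam • volume) :=
    (Lp.memLp w.1).smul_measure ENNReal.ofReal_ne_top
  have h2 : MemLp (fun t => (w.1 : ℝ → ℝ) (t / lam)) 1 (volume : Measure ℝ) := by
    refine (memLp_map_measure_iff ?_ (qmp_div hlam).aemeasurable).1 ?_
    · rw [map_div_vol hlam]; exact h1.aestronglyMeasurable
    · rw [map_div_vol hlam]; exact h1
  exact h2.const_mul _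

lemma vanish_scaled {lam : ℝ} (hlam : 0 < lam) (H : ℝ) (w : WW) :
    ∀ᵐ t ∂(volume : Measure ℝ), t < 0 → lam ^ (H - 1) * (w.1 : ℝ → ℝ) (t / lam) = 0 := by
  filter_upwards [(qmp_div hlam).ae w.2] with t ht hneg
  rw [ht (div_neg_of_neg_of_pos hneg hlam), mul_zero]

lemma phi_coe {lam : ℝ} (hlam : 0 < lam) (H : ℝ) (w : WW) :
    ((phi lam H w).1 : ℝ → ℝ) =ᵐ[volume]
      fun t => lam ^ (H - 1) * (w.1 : ℝ → ℝ) (t / lam) := by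
  have h : MemLp (fun t => lam ^ (H - 1) * (w.1 : ℝ → ℝ) (t / lam)) 1 (volume : Measure ℝ) ∧
      ∀ᵐ t ∂(volume : Measure ℝ), t < 0 → lam ^ (H - 1) * (w.1 : ℝ → ℝ) (t / lam) = 0 :=
    ⟨memℒp_scaled hlam H w, vanish_scaled hlam H w⟩
  rw [phi, dif_pos h]
  exact h.1.coeFn_toLp

lemma Wcal_eq (w : WW) : Wcal w = ∫ t, (w.1 : ℝ → ℝ) t := by
  have hint : Integrable (w.1 : ℝ → ℝ) volume := L1.integrable_coeFn w.1
  have h0 : ∫ t in Set.Iic (0:ℝ), (w.1 : ℝ → ℝ) t = 0 := by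
    rw [← Measure.restrict_congr_set Iio_ae_eq_Iic]
    refine integral_eq_zero_of_ae ?_
    filter_upwards [ae_restrict_of_ae w.2, ae_restrict_mem measurableSet_Iio] with t h1 h2
    exact h1 h2
  have := integral_add_compl (measurableSet_Ioi (a := (0:ℝ))) hint
  rw [compl_Ioi, h0, add_zero] at this
  exact this

lemma Wcal_measurable : Measurable Wcal := by
  have h1 : Continuous fun w : WW => ∫ t, (w.1 : ℝ → ℝ) t := by
    exact MeasureTheory.continuous_integral.comp continuous_subtype_val
  have h2 : Wcal = fun w : WW => ∫ t, (w.1 : ℝ → ℝ) t := funext Wcal_eq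
  rw [h2]
  exact h1.measurable

lemma Wcal_phi {lam : ℝ} (hlam : 0 < lam) (H : ℝ) (w : WW) :
    Wcal (phi lam H w) = lam ^ H * Wcal w := by
  rw [Wcal_eq, Wcal_eq]
  rw [integral_congr_ae (phi_coe hlam H w)]
  rw [integral_const_mul]
  rw [MeasureTheory.Measure.integral_comp_div (fun s => (w.1 : ℝ → ℝ) s) lam]
  rw [abs_of_pos hlam, smul_eq_mul, ← mul_assoc]
  congr 1
  rw [Real.rpow_sub hlam, Real.rpow_one, div_mul_cancel₀ _ hlam.ne']

lemma eLpNorm_scaled {lam : ℝ} (hlam : 0 < lam) (H : ℝ) (f : ℝ → ℝ)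
    (hf : AEMeasurable f volume) :
    eLpNorm (fun t => lam ^ (H - 1) * f (t / lam)) 1 volume =
      ENNReal.ofReal (lam ^ (H - 1)) * ENNReal.ofReal lam * eLpNorm f 1 volume := by
  rw [eLpNorm_one_eq_lintegral_enorm, eLpNorm_one_eq_lintegral_enorm]
  have hconst : ∀ t : ℝ, ‖lam ^ (H - 1) * f (t / lam)‖ₑ =
      ENNReal.ofReal (lam ^ (H - 1)) * ‖f (t / lam)‖ₑ := by
    intro t
    rw [enorm_mul,
      Real.enorm_eq_ofReal (Real.rpow_pos_of_pos hlam _).le]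
  simp only [hconst]
  rw [lintegral_const_mul' _ _ ENNReal.ofReal_ne_top, mul_assoc]
  congr 1
  have hg' : AEMeasurable (fun s => ‖f s‖ₑ)
      (Measure.map (fun t : ℝ => t / lam) volume) := by
    rw [map_div_vol hlam]
    exact hf.enorm.smul_measure _
  have hmap : ∫⁻ t, ‖f (t / lam)‖ₑ ∂(volume : Measure ℝ) =
      ∫⁻ s, ‖f s‖ₑ ∂(Measure.map (fun t : ℝ => t / lam) volume) :=
    (lintegral_map' hg' (qmp_div hlam).aemeasurable).symm
  rw [hmap, map_div_vol hlam, lintegral_smul_measure, smul_eq_mul]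

lemma memℒp_scaledLp {lam : ℝ} (hlam : 0 < lam) (H : ℝ) (f : Lp ℝ 1 (volume : Measure ℝ)) :
    MemLp (fun t => lam ^ (H - 1) * (f : ℝ → ℝ) (t / lam)) 1 (volume : Measure ℝ) := by
  have h1 : MemLp (f : ℝ → ℝ) 1 (ENNReal.ofReal lam • volume) :=
    (Lp.memLp f).smul_measure ENNReal.ofReal_ne_top
  have h2 : MemLp (fun t => (f : ℝ → ℝ) (t / lam)) 1 (volume : Measure ℝ) := by
    refine (memLp_map_measure_iff ?_ (qmp_div hlam).aemeasurable).1 ?_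
    · rw [map_div_vol hlam]; exact h1.aestronglyMeasurable
    · rw [map_div_vol hlam]; exact h1
  exact h2.const_mul _

noncomputable def scaledLp {lam : ℝ} (hlam : 0 < lam) (H : ℝ)
    (f : Lp ℝ 1 (volume : Measure ℝ)) : Lp ℝ 1 (volume : Measure ℝ) :=
  (memℒp_scaledLp hlam H f).toLp _

lemma scaledLp_coe {lam : ℝ} (hlam : 0 < lam) (H : ℝ) (f : Lp ℝ 1 (volume : Measure ℝ)) :
    ⇑(scaledLp hlam H f) =ᵐ[volume] fun t => lam ^ (H - 1) * (f : ℝ → ℝ) (t / lam) :=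
  (memℒp_scaledLp hlam H f).coeFn_toLp

lemma scaledLp_lipschitz {lam : ℝ} (hlam : 0 < lam) (H : ℝ) :
    LipschitzWith (Real.toNNReal (lam ^ (H - 1) * lam))
      (scaledLp hlam H) := by
  intro f g
  rw [Lp.edist_def, Lp.edist_def]
  have hcoe : (⇑(scaledLp hlam H f) - ⇑(scaledLp hlam H g))
      =ᵐ[volume]
      fun t => lam ^ (H - 1) * ((fun s => (f : ℝ → ℝ) s - (g : ℝ → ℝ) s) (t / lam)) := by
    filter_upwards [scaledLp_coe hlam H f, scaledLp_coe hlam H g] with t h1 h2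
    simp only [Pi.sub_apply, h1, h2]
    ring
  have hdiff : AEMeasurable (fun s => (f : ℝ → ℝ) s - (g : ℝ → ℝ) s) volume :=
    ((Lp.memLp f).aestronglyMeasurable.aemeasurable).sub
      ((Lp.memLp g).aestronglyMeasurable.aemeasurable)
  refine le_of_eq ?_
  have e1 : eLpNorm (⇑(scaledLp hlam H f) - ⇑(scaledLp hlam H g)) 1 volume
      = eLpNorm (fun t => lam ^ (H - 1) *
          ((fun s => (f : ℝ → ℝ) s - (g : ℝ → ℝ) s) (t / lam))) 1 volume :=
    eLpNorm_congr_ae hcoe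
  have e2 := eLpNorm_scaled hlam H (fun s => (f : ℝ → ℝ) s - (g : ℝ → ℝ) s) hdiff
  have e3 : eLpNorm (fun s => (f : ℝ → ℝ) s - (g : ℝ → ℝ) s) 1 volume
      = eLpNorm (⇑f - ⇑g) 1 volume := by
    apply eLpNorm_congr_ae
    filter_upwards with t
    simp
  have e4 : ENNReal.ofReal (lam ^ (H - 1)) * ENNReal.ofReal lam
      = (Real.toNNReal (lam ^ (H - 1) * lam) : ℝ≥0∞) := by
    rw [← ENNReal.ofReal_mul (Real.rpow_pos_of_pos hlam _).le]
    rfl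
  rw [e1, e2, e3, e4]

lemma phi_val_eq {lam : ℝ} (hlam : 0 < lam) (H : ℝ) :
    (fun w : WW => ((phi lam H w).1 : Lp ℝ 1 (volume : Measure ℝ))) =
      (scaledLp hlam H) ∘ Subtype.val := by
  funext w
  apply MeasureTheory.Lp.ext (p := (1 : ℝ≥0∞)) (μ := (volume : Measure ℝ))
  filter_upwards [phi_coe hlam H w, scaledLp_coe hlam H w.1] with t h1 h2
  rw [h1]; exact h2.symm

lemma phi_measurable {lam : ℝ} (hlam : 0 < lam) (H : ℝ) :
    Measurable (phi lam H) := by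
  have h : Measurable ((scaledLp hlam H) ∘ (Subtype.val : WW → Lp ℝ 1 (volume : Measure ℝ))) :=
    ((scaledLp_lipschitz hlam H).continuous.comp continuous_subtype_val).measurable
  rw [← phi_val_eq hlam H] at h
  exact Measurable.subtype_mk (f := fun w : WW => ((phi lam H w).1 : Lp ℝ 1 (volume : Measure ℝ))) h

lemma phi_inv_phi {lam : ℝ} (hlam : 0 < lam) (H : ℝ) (w : WW) :
    phi lam⁻¹ H (phi lam H w) = w := by
  apply Subtype.ext
  apply MeasureTheory.Lp.ext (p := (1:ℝ≥0∞)) (μ := (volume : Measure ℝ))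
  have h1 := phi_coe (inv_pos.mpr hlam) H (phi lam H w)
  have h2 := (qmp_div (inv_pos.mpr hlam)).ae_eq (phi_coe hlam H w)
  filter_upwards [h1, h2] with t ht1 ht2
  rw [ht1]
  simp only [Function.comp] at ht2
  rw [ht2]
  have ht : t / lam⁻¹ / lam = t := by
    field_simp
  rw [ht]
  rw [Real.inv_rpow hlam.le, ← mul_assoc,
    inv_mul_cancel₀ (Real.rpow_pos_of_pos hlam _).ne', one_mul]

lemma phi_phi_inv {lam : ℝ} (hlam : 0 < lam) (H : ℝ) (w : WW) :
    phi lam H (phi lam⁻¹ H w) = w := by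
  have := phi_inv_phi (inv_pos.mpr hlam) H w
  rwa [inv_inv] at this

lemma phi_image_eq_preimage {lam : ℝ} (hlam : 0 < lam) (H : ℝ) (A : Set WW) :
    phi lam H '' A = phi lam⁻¹ H ⁻¹' A := by
  ext x
  constructor
  · rintro ⟨a, ha, rfl⟩
    simpa [phi_inv_phi hlam H a] using ha
  · intro hx
    exact ⟨phi lam⁻¹ H x, hx, phi_phi_inv hlam H x⟩

lemma map_phi {γ H : ℝ} {ν : Measure WW} (hscal : ScalingMeasure ν γ H)
    {lam : ℝ} (hlam : 0 < lam) :
    Measure.map (phi lam H) ν = ENNReal.ofReal (lam ^ (1 + γ)) • ν := by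
  ext A hA
  rw [Measure.map_apply (phi_measurable hlam H) hA, Measure.smul_apply, smul_eq_mul]
  have himg : phi lam H ⁻¹' A = phi lam⁻¹ H '' A := by
    rw [phi_image_eq_preimage (inv_pos.mpr hlam) H A, inv_inv]
  rw [himg]
  have hs := hscal lam⁻¹ (inv_pos.mpr hlam) A hA
  have hc : ENNReal.ofReal (lam ^ (1 + γ)) * ENNReal.ofReal (lam⁻¹ ^ (1 + γ)) = 1 := by
    rw [← ENNReal.ofReal_mul (Real.rpow_pos_of_pos hlam _).le, Real.inv_rpow hlam.le,
      mul_inv_cancel₀ (Real.rpow_pos_of_pos hlam _).ne', ENNReal.ofReal_one]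
  calc ν (phi lam⁻¹ H '' A)
      = 1 * ν (phi lam⁻¹ H '' A) := (one_mul _).symm
    _ = ENNReal.ofReal (lam ^ (1 + γ)) *
          (ENNReal.ofReal (lam⁻¹ ^ (1 + γ)) * ν (phi lam⁻¹ H '' A)) := by
        rw [← mul_assoc, hc]
    _ = ENNReal.ofReal (lam ^ (1 + γ)) * ν A := by rw [hs]

lemma psi_continuous : Continuous Psi := by
  unfold Psi
  continuity

lemma key_integral {γ H : ℝ} {ν : Measure WW} (hscal : ScalingMeasure ν γ H)
    {lam : ℝ} (hlam : 0 < lam) (g : WW → ℂ) (hg : Measurable g) :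
    ∫ w, g (phi lam H w) ∂ν = ((lam ^ (1 + γ) : ℝ) : ℂ) * ∫ w, g w ∂ν := by
  have h1 : ∫ w, g (phi lam H w) ∂ν = ∫ v, g v ∂(Measure.map (phi lam H) ν) := by
    rw [integral_map (phi_measurable hlam H).aemeasurable hg.aestronglyMeasurable]
  rw [h1, map_phi hscal hlam, integral_smul_measure,
    ENNReal.toReal_ofReal (Real.rpow_pos_of_pos hlam _).le, Complex.real_smul]

end

end Aux

/-- stability scaling of the characteristic exponent. If `ν` is a
`(γ,H)`-scaling σ-finite measure on `𝕎` with `γ, H > 0`,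
`∫ (|𝒲| ∧ |𝒲|²) dν < ∞` and `α = (1+γ)/H`, then for `θ > 0`
`∫ Ψ(θ𝒲(w)) ν(dw) = θ^α ∫ Ψ(𝒲(w)) ν(dw)` and for `θ < 0`
`∫ Ψ(θ𝒲(w)) ν(dw) = |θ|^α ∫ Ψ(-𝒲(w)) ν(dw)`. -/
theorem stmt_12 (γ H : ℝ) (hγ : 0 < γ) (hH : 0 < H)
    (ν : Measure WW) [SigmaFinite ν] (hscal : ScalingMeasure ν γ H)
    (hint : ∫⁻ w, ENNReal.ofReal (min |Wcal w| (|Wcal w| ^ 2)) ∂ν ≠ ⊤) :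
    (∀ θ : ℝ, 0 < θ →
      ∫ w, Psi (θ * Wcal w) ∂ν =
        ((θ ^ ((1 + γ) / H) : ℝ) : ℂ) * ∫ w, Psi (Wcal w) ∂ν) ∧
    (∀ θ : ℝ, θ < 0 →
      ∫ w, Psi (θ * Wcal w) ∂ν =
        ((|θ| ^ ((1 + γ) / H) : ℝ) : ℂ) * ∫ w, Psi (-Wcal w) ∂ν) := by
  have hMeasPsiW : Measurable fun w : WW => Psi (Wcal w) :=
    psi_continuous.measurable.comp Wcal_measurable
  have hMeasPsiNegW : Measurable fun w : WW => Psi (-Wcal w) :=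
    psi_continuous.measurable.comp Wcal_measurable.neg
  constructor
  · intro θ hθ
    set lam := θ ^ (1 / H) with hlamdef
    have hlam : 0 < lam := Real.rpow_pos_of_pos hθ _
    have hθeq : lam ^ H = θ := by
      rw [hlamdef, ← Real.rpow_mul hθ.le, one_div_mul_cancel hH.ne', Real.rpow_one]
    have hpow : lam ^ (1 + γ) = θ ^ ((1 + γ) / H) := by
      rw [hlamdef, ← Real.rpow_mul hθ.le]
      congr 1
      field_simp
    have h1 : (fun w => Psi (θ * Wcal w)) =
        fun w => (fun v => Psi (Wcal v)) (phi lam H w) := by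
      funext w
      simp only
      rw [Wcal_phi hlam H w, hθeq]
    rw [h1, key_integral hscal hlam _ hMeasPsiW, hpow]
  · intro θ hθ
    have habs : 0 < |θ| := abs_pos.mpr hθ.ne
    set lam := |θ| ^ (1 / H) with hlamdef
    have hlam : 0 < lam := Real.rpow_pos_of_pos habs _
    have hθeq : lam ^ H = |θ| := by
      rw [hlamdef, ← Real.rpow_mul habs.le, one_div_mul_cancel hH.ne', Real.rpow_one]
    have hpow : lam ^ (1 + γ) = |θ| ^ ((1 + γ) / H) := by
      rw [hlamdef, ← Real.rpow_mul habs.le]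
      congr 1
      field_simp
    have h1 : (fun w => Psi (θ * Wcal w)) =
        fun w => (fun v => Psi (-Wcal v)) (phi lam H w) := by
      funext w
      simp only
      rw [Wcal_phi hlam H w, hθeq]
      congr 1
      rw [abs_of_neg hθ]
      ring
    rw [h1, key_integral hscal hlam _ hMeasPsiNegW, hpow]
end
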